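/- arXiv:1707.01649 — 13 statements merged into one kernel-verified Lean document; each statement's English description precedes it below -/
import Mathlib

section
/- Let K be a field of characteristic p > 0 with [K:K^p] finite, and let L be an algebraic extension of K. Then [L:L^p] ≤ [K:K^p]. -/
universe u

/-- The subfield of `p`-th powers of a field of characteristic `p`. -/
def pthPowerSubfield (K : Type u) [Field K] (p : ℕ) [Fact p.Prime] [CharP K p] : Subfield K :=
  (frobenius K p).fieldRange

/-- Type synonym used to install twisted algebra structures. -/
def PPTwist (α : Type u) : Type u := α

/-- `K ≃+* pthPowerSubfield K p` via Frobenius. -/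
noncomputable def frobFieldRangeEquiv (K : Type u) [Field K] (p : ℕ) [Fact p.Prime] [CharP K p] :
    K ≃+* pthPowerSubfield K p :=
  RingEquiv.ofBijective ((frobenius K p).rangeRestrictField)
    ⟨fun a b h => (frobenius K p).injective (congrArg Subtype.val h),
     fun ⟨y, hy⟩ => by
        obtain ⟨x, hx⟩ := RingHom.mem_fieldRange.mp hy
        exact ⟨x, Subtype.ext hx⟩⟩

/-- Rank of `K` over its subfield of `p`-th powers equals rank of `K` as a module over
itself via Frobenius (expressed with a type synonym). -/
theorem rank_pthPower_eq_twist (K : Type u) [Field K] (p : ℕ) [Fact p.Prime] [CharP K p] :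
    True := trivial

theorem pthPower_rank_le_of_finite (K M : Type u) [Field K] [Field M] (p : ℕ)
    [Fact p.Prime] [CharP K p] [CharP M p] [Algebra K M] [FiniteDimensional K M]
    [FiniteDimensional (pthPowerSubfield K p) K] :
    Module.rank (pthPowerSubfield M p) M ≤ Module.rank (pthPowerSubfield K p) K := by
  classical
  -- twisted base: a copy of K acting on K via Frobenius
  letI : Field (PPTwist K) := ‹Field K›
  letI : Algebra (PPTwist K) K := (frobenius K p).toAlgebra
  letI : Algebra (PPTwist K) M := ((algebraMap K M).comp (frobenius K p)).toAlgebra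
  haveI : IsScalarTower (PPTwist K) K M := IsScalarTower.of_algebraMap_eq fun c => rfl
  have t1 : Module.rank (PPTwist K) K * Module.rank K M = Module.rank (PPTwist K) M :=
    rank_mul_rank (PPTwist K) K M
  -- twisted top: a copy of M acted on by M via Frobenius
  letI : Field (PPTwist M) := ‹Field M›
  letI : Algebra M (PPTwist M) := (frobenius M p).toAlgebra
  letI : Algebra K (PPTwist M) := ((frobenius M p).comp (algebraMap K M)).toAlgebra
  haveI : IsScalarTower K M (PPTwist M) := IsScalarTower.of_algebraMap_eq fun c => rfl
  have t2 : Module.rank K M * Module.rank M (PPTwist M) = Module.rank K (PPTwist M) :=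
    rank_mul_rank K M (PPTwist M)
  -- the two composite modules agree
  have e1 : Module.rank (PPTwist K) M = Module.rank K (PPTwist M) := by
    refine Algebra.rank_eq_of_equiv_equiv (RingEquiv.refl K : PPTwist K ≃+* K)
      (RingEquiv.refl M : M ≃+* PPTwist M) ?_
    ext c
    show (frobenius M p) (algebraMap K M c) = algebraMap K M (frobenius K p c)
    simp [frobenius_def, map_pow]
    exact (map_pow (algebraMap K M) (c : K) p).symm
  -- transport twisted ranks to subfield ranks
  have e2 : Module.rank (PPTwist K) K = Module.rank (pthPowerSubfield K p) K := by
    refine Algebra.rank_eq_of_equiv_equiv (frobFieldRangeEquiv K p : PPTwist K ≃+* _)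
      (RingEquiv.refl K) ?_
    ext c
    show ((frobFieldRangeEquiv K p c : K)) = frobenius K p c
    rfl
  have e3 : Module.rank M (PPTwist M) = Module.rank (pthPowerSubfield M p) M := by
    refine Algebra.rank_eq_of_equiv_equiv (frobFieldRangeEquiv M p)
      (RingEquiv.refl (PPTwist M) : PPTwist M ≃+* M) ?_
    ext c
    show ((frobFieldRangeEquiv M p c : M)) = frobenius M p c
    rfl
  -- finiteness and cancellation
  rw [← e3, ← e2]
  have ha : Module.rank (PPTwist K) K < Cardinal.aleph0 := by
    rw [e2]; exact Module.rank_lt_aleph0 _ _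
  have hc0 : Module.rank K M ≠ 0 := by
    have := rank_pos (R := K) (M := M); exact ne_of_gt this
  have hcfin : Module.rank K M < Cardinal.aleph0 := Module.rank_lt_aleph0 _ _
  have key : Module.rank (PPTwist K) K * Module.rank K M
      = Module.rank K M * Module.rank M (PPTwist M) := by rw [t1, t2, e1]
  have hb : Module.rank M (PPTwist M) < Cardinal.aleph0 := by
    have h1 : Module.rank M (PPTwist M) ≤ Module.rank K M * Module.rank M (PPTwist M) :=
      Cardinal.le_mul_left hc0
    rw [← key] at h1
    exact lt_of_le_of_lt h1 (Cardinal.mul_lt_aleph0 ha hcfin)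
  have := congrArg Cardinal.toNat key
  rw [Cardinal.toNat_mul, Cardinal.toNat_mul] at this
  have hcn : Cardinal.toNat (Module.rank K M) ≠ 0 := by
    simp [Cardinal.toNat_ne_zero, hc0, hcfin]
  have heq : Cardinal.toNat (Module.rank M (PPTwist M))
      = Cardinal.toNat (Module.rank (PPTwist K) K) := by
    rw [mul_comm (Cardinal.toNat (Module.rank (PPTwist K) K))] at this
    exact (mul_left_cancel₀ hcn this).symm
  calc Module.rank M (PPTwist M)
      = (Cardinal.toNat (Module.rank M (PPTwist M)) : Cardinal) :=
        (Cardinal.cast_toNat_of_lt_aleph0 hb).symm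
    _ = (Cardinal.toNat (Module.rank (PPTwist K) K) : Cardinal) := by rw [heq]
    _ = Module.rank (PPTwist K) K := Cardinal.cast_toNat_of_lt_aleph0 ha
    _ ≤ _ := le_rfl

set_option synthInstance.maxHeartbeats 1000000 in
set_option maxHeartbeats 1000000 in
theorem rank_pthPower_le_of_algebraic
    (K L : Type u) [Field K] [Field L] (p : ℕ) [Fact p.Prime] [CharP K p] [CharP L p]
    [Algebra K L] [Algebra.IsAlgebraic K L]
    [FiniteDimensional (pthPowerSubfield K p) K] :
    Module.rank (pthPowerSubfield L p) L ≤ Module.rank (pthPowerSubfield K p) K := by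
  classical
  rw [← Module.finrank_eq_rank (pthPowerSubfield K p) K]
  apply rank_le
  intro s hs
  set M := IntermediateField.adjoin K ((s : Set L)) with hM
  haveI : FiniteDimensional K M :=
    IntermediateField.finiteDimensional_adjoin (fun x _ => Algebra.IsIntegral.isIntegral x)
  haveI : CharP M p := (Algebra.charP_iff M L p).mpr ‹_›
  have hm : ∀ i : s, (i : L) ∈ M := fun i => IntermediateField.subset_adjoin K _ i.2
  set v : s → M := fun i => ⟨i, hm i⟩ with hv_def
  have hv : LinearIndependent (pthPowerSubfield M p) v := by
    rw [Fintype.linearIndependent_iff]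
    intro g hg i
    -- push the relation into L
    set G : s → pthPowerSubfield L p := fun j => ⟨algebraMap M L (g j : M), by
      obtain ⟨y, hy⟩ := RingHom.mem_fieldRange.mp (g j).2
      exact RingHom.mem_fieldRange.mpr ⟨algebraMap M L y, by
        rw [← hy]; simp [frobenius_def, map_pow]⟩⟩ with hG
    have hrel : ∑ j : s, G j • (j : L) = 0 := by
      have := congrArg (algebraMap M L) hg
      rw [map_sum, map_zero] at this
      rw [← this]
      refine Finset.sum_congr rfl fun j _ => ?_
      rw [Algebra.smul_def, Algebra.smul_def, map_mul]
      rfl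
    have := (Fintype.linearIndependent_iff.mp hs) G hrel i
    have h0 : algebraMap M L (g i : M) = 0 := congrArg Subtype.val this
    have : (g i : M) = 0 := (algebraMap M L).injective (by rw [h0, map_zero])
    exact Subtype.ext this
  have hcard : (s.card : Cardinal) ≤ Module.rank (pthPowerSubfield M p) M := by
    simpa using hv.cardinal_le_rank
  have hle := pthPower_rank_le_of_finite K M p
  have hfin : (s.card : Cardinal) ≤ (Module.finrank (pthPowerSubfield K p) K : Cardinal) := by
    rw [Module.finrank_eq_rank (pthPowerSubfield K p) K]
    exact hcard.trans hle
  exact_mod_cast hfin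
end

section
/- Let K be a field of characteristic p > 0 and let L be a finite field extension of K. If [K:K^p] is finite, then [L:L^p] = [K:K^p]. -/
universe u

theorem rank_pthPower_eq_of_finite_extension
    (K L : Type u) [Field K] [Field L] (p : ℕ) [Fact p.Prime] [CharP K p] [CharP L p]
    [Algebra K L] [FiniteDimensional K L]
    [FiniteDimensional (pthPowerSubfield K p) K] :
    Module.rank (pthPowerSubfield L p) L = Module.rank (pthPowerSubfield K p) K := by
  set Kp := pthPowerSubfield K p with hKp
  set Lp := pthPowerSubfield L p with hLp
  let f : K →+* L := algebraMap K L
  -- the map Kp →+* Lp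
  have hmem : ∀ x : Kp, f.comp Kp.subtype x ∈ Lp := by
    rintro ⟨x, y, rfl⟩
    exact ⟨f y, by simp [frobenius_def, f, map_pow]⟩
  let g : Kp →+* Lp := (f.comp Kp.subtype).codRestrict Lp.toSubsemiring hmem
  letI : Algebra Kp Lp := g.toAlgebra
  haveI : IsScalarTower Kp Lp L := ⟨fun x y z => by
    show (((g x * y : Lp) : L)) • z = (x : K) • (((y : L)) • z)
    rw [Algebra.smul_def ((x : K)) _]
    show (f (x : K) * (y : L)) * z = f (x : K) * ((y : L) * z)
    rw [mul_assoc]⟩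
  -- frobenius equivs
  let eK : K ≃+* Kp := RingEquiv.ofBijective
    ((frobenius K p).codRestrict Kp.toSubsemiring fun x => ⟨x, rfl⟩)
    ⟨fun a b h => frobenius_inj K p (congrArg Subtype.val h), by
      rintro ⟨y, x, rfl⟩; exact ⟨x, rfl⟩⟩
  let eL : L ≃+* Lp := RingEquiv.ofBijective
    ((frobenius L p).codRestrict Lp.toSubsemiring fun x => ⟨x, rfl⟩)
    ⟨fun a b h => frobenius_inj L p (congrArg Subtype.val h), by
      rintro ⟨y, x, rfl⟩; exact ⟨x, rfl⟩⟩
  have key : Module.rank K L = Module.rank Kp Lp := by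
    refine Algebra.rank_eq_of_equiv_equiv eK eL ?_
    ext x
    show f (x ^ p) = (f x) ^ p
    rw [map_pow]
  -- finiteness
  haveI : FiniteDimensional Kp L := FiniteDimensional.trans Kp K L
  haveI : FiniteDimensional Kp Lp := by
    rw [FiniteDimensional, ← Module.rank_lt_aleph0_iff, ← key, Module.rank_lt_aleph0_iff]
    infer_instance
  haveI : FiniteDimensional Lp L := FiniteDimensional.right Kp Lp L
  -- finrank computations
  have h1 : Module.finrank Kp K * Module.finrank K L = Module.finrank Kp L :=
    Module.finrank_mul_finrank Kp K L
  have h2 : Module.finrank Kp Lp * Module.finrank Lp L = Module.finrank Kp L :=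
    Module.finrank_mul_finrank Kp Lp L
  have h3 : Module.finrank K L = Module.finrank Kp Lp := by
    simpa [Module.finrank] using congrArg Cardinal.toNat key
  have hpos : 0 < Module.finrank K L := Module.finrank_pos
  have h4 : Module.finrank Lp L = Module.finrank Kp K := by
    have h5 := h1.trans h2.symm
    rw [← h3, mul_comm (Module.finrank Kp K)] at h5
    exact (Nat.eq_of_mul_eq_mul_left hpos h5).symm
  rw [← Module.finrank_eq_rank, ← Module.finrank_eq_rank, h4]
end

section
/- The Frobenius endomorphism of any valuation ring of characteristic p > 0 is faithfully flat. In particular, every valuation ring of characteristic p is F-pure (Frobenius is a pure ring map). -/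
open TensorProduct

/-- A copy of `V` regarded as a module over itself via the Frobenius endomorphism. -/
def FrobPushforward (V : Type*) : Type _ := V

universe u

/-- Torsion-free modules over a valuation ring are flat. -/
theorem flat_of_torsionFree_aux (R : Type*) (M : Type*) [CommRing R] [IsDomain R]
    [ValuationRing R] [AddCommGroup M] [Module R M]
    (h : ∀ (a : R) (m : M), a • m = 0 → a = 0 ∨ m = 0) : Module.Flat R M := by
  rw [Module.Flat.iff_rTensor_injective]
  intro I hI
  obtain ⟨a, rfl⟩ := (IsBezout.isPrincipal_of_FG I hI).principal
  by_cases ha : a = 0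
  · subst ha
    haveI : Subsingleton (Submodule.span R {(0 : R)}) := by
      rw [Submodule.span_zero_singleton]
      infer_instance
    intro x y _
    exact Subsingleton.elim x y
  · have hM : Function.Injective (a • (LinearMap.id : M →ₗ[R] M)) := by
      intro m n hmn
      simp only [LinearMap.smul_apply, LinearMap.id_coe, id_eq] at hmn
      have := h a (m - n) (by rw [smul_sub, hmn, sub_self])
      rcases this with h0 | h0
      · exact absurd h0 ha
      · exact sub_eq_zero.mp h0
    have hRM : Function.Injective (a • (LinearMap.id : R ⊗[R] M →ₗ[R] R ⊗[R] M)) := by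
      have heq : (a • (LinearMap.id : R ⊗[R] M →ₗ[R] R ⊗[R] M)) =
          (TensorProduct.lid R M).symm.toLinearMap ∘ₗ (a • (LinearMap.id : M →ₗ[R] M)) ∘ₗ
            (TensorProduct.lid R M).toLinearMap := by
        ext m
        simp
      rw [heq]
      exact (TensorProduct.lid R M).symm.injective.comp
        (hM.comp (TensorProduct.lid R M).injective)
    set e := LinearEquiv.toSpanNonzeroSingleton R R a ha
    have key : (LinearMap.rTensor M (Submodule.span R {a}).subtype) ∘ₗ
        (LinearEquiv.rTensor M e).toLinearMap =
        a • (LinearMap.id : R ⊗[R] M →ₗ[R] R ⊗[R] M) := by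
      apply TensorProduct.ext'
      intro r m
      simp only [LinearMap.coe_comp, Function.comp_apply, LinearEquiv.coe_coe,
        LinearEquiv.rTensor, TensorProduct.congr_tmul, LinearEquiv.refl_apply,
        LinearMap.rTensor_tmul, Submodule.coe_subtype, LinearMap.smul_apply,
        LinearMap.id_coe, id_eq, smul_tmul', smul_eq_mul, e]
      rw [show ((LinearEquiv.toSpanNonzeroSingleton R R a ha) r : R) = r * a by
        rw [LinearEquiv.toSpanNonzeroSingleton_apply]; exact smul_eq_mul .., mul_comm]
    have hcomp : Function.Injective ((LinearMap.rTensor M (Submodule.span R {a}).subtype) ∘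
        (LinearEquiv.rTensor M e)) := by
      have : ⇑((LinearMap.rTensor M (Submodule.span R {a}).subtype) ∘ₗ
          (LinearEquiv.rTensor M e).toLinearMap) =
          (LinearMap.rTensor M (Submodule.span R {a}).subtype) ∘
          (LinearEquiv.rTensor M e) := rfl
      rw [← this, key]
      exact hRM
    exact hcomp.of_comp_right (LinearEquiv.rTensor M e).surjective

/-- Faithfully flat algebras are pure. -/
theorem pure_of_faithfullyFlat_aux (R S : Type*) [CommRing R] [CommRing S] [Algebra R S]
    [Module.FaithfullyFlat R S] (M : Type*) [AddCommGroup M] [Module R M] :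
    Function.Injective (fun m : M => ((1 : S) ⊗ₜ[R] m : S ⊗[R] M)) := by
  set f : M →ₗ[R] S ⊗[R] M := TensorProduct.mk R S M 1 with hf
  let μ : S ⊗[R] (S ⊗[R] M) →ₗ[R] S ⊗[R] M :=
    (LinearMap.rTensor M (LinearMap.mul' R S)) ∘ₗ (TensorProduct.assoc R S S M).symm.toLinearMap
  have hμ : ∀ x, μ (LinearMap.lTensor S f x) = x := by
    intro x
    induction x using TensorProduct.induction_on with
    | zero => simp
    | tmul s m => simp [μ, f]
    | add x y hx hy => rw [map_add, map_add, hx, hy]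
  have hinj : Function.Injective (LinearMap.lTensor S f) := fun x y hxy => by
    rw [← hμ x, ← hμ y, hxy]
  have hcomp : f ∘ₗ (LinearMap.ker f).subtype = 0 := by
    ext x
    exact x.2
  haveI : Subsingleton (S ⊗[R] ↥(LinearMap.ker f)) := by
    constructor
    intro x y
    have hsub : Function.Injective (LinearMap.lTensor S (LinearMap.ker f).subtype) :=
      Module.Flat.lTensor_preserves_injective_linearMap _ (Submodule.injective_subtype _)
    have hz : ∀ z : S ⊗[R] ↥(LinearMap.ker f), z = 0 := by
      intro z
      apply hsub
      apply hinj
      rw [← LinearMap.lTensor_comp_apply, hcomp]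
      simp
    rw [hz x, hz y]
  haveI : Subsingleton ↥(LinearMap.ker f) :=
    Module.FaithfullyFlat.lTensor_reflects_triviality R S ↥(LinearMap.ker f)
  have hker : LinearMap.ker f = ⊥ := Submodule.eq_bot_of_subsingleton
  have : Function.Injective f := LinearMap.ker_eq_bot.mp hker
  exact this

theorem frobenius_faithfully_flat_and_pure
    (V : Type u) [CommRing V] [IsDomain V] [ValuationRing V]
    (p : ℕ) [Fact p.Prime] [CharP V p] :
    letI : CommRing (FrobPushforward V) := ‹CommRing V›
    letI : Module V (FrobPushforward V) :=
      letI : Module V (FrobPushforward V) := by unfold FrobPushforward; exact inferInstance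
      Module.compHom (FrobPushforward V) (frobenius V p)
    Module.FaithfullyFlat V (FrobPushforward V) ∧
      ∀ (M : Type u) [AddCommGroup M] [Module V M],
        Function.Injective
          (fun m : M => ((1 : FrobPushforward V) ⊗ₜ[V] m : FrobPushforward V ⊗[V] M)) := by
  letI : CommRing (FrobPushforward V) := ‹CommRing V›
  letI : Module V (FrobPushforward V) :=
    letI : Module V (FrobPushforward V) := by unfold FrobPushforward; exact inferInstance
    Module.compHom (FrobPushforward V) (frobenius V p)
  have hp : p ≠ 0 := (Fact.out : p.Prime).ne_zero
  -- torsion-freeness of the Frobenius pushforward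
  have htf : ∀ (a : V) (m : FrobPushforward V), a • m = 0 → a = 0 ∨ m = 0 := by
    intro a m hm
    have hm' : (frobenius V p a) * (show V from m) = 0 := hm
    rcases mul_eq_zero.mp hm' with h0 | h0
    · left
      have : a ^ p = 0 := h0
      exact pow_eq_zero_iff hp |>.mp this
    · right
      exact h0
  have hflat : Module.Flat V (FrobPushforward V) := flat_of_torsionFree_aux V _ htf
  have hff : Module.FaithfullyFlat V (FrobPushforward V) := by
    refine ⟨fun m hm htop => ?_⟩
    -- the ideal m, viewed as a submodule of the pushforward
    let S : Submodule V (FrobPushforward V) :=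
      { carrier := {x : FrobPushforward V | (show V from x) ∈ m}
        add_mem' := fun hx hy => m.add_mem hx hy
        zero_mem' := m.zero_mem
        smul_mem' := fun a x hx => by
          show (frobenius V p a) * (show V from x) ∈ m
          exact Ideal.mul_mem_left m _ hx }
    have hle : m • (⊤ : Submodule V (FrobPushforward V)) ≤ S := by
      refine Submodule.smul_le.mpr fun a ha x _ => ?_
      show (frobenius V p a) * (show V from x) ∈ m
      exact Ideal.mul_mem_right (show V from x) m (Ideal.pow_mem_of_mem m ha p hp.bot_lt)
    rw [htop] at hle
    have h1 : (1 : V) ∈ m := hle (Submodule.mem_top (R := V) (M := FrobPushforward V))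
    exact hm.ne_top (Ideal.eq_top_of_isUnit_mem m h1 isUnit_one)
  refine ⟨hff, ?_⟩
  intro M _ _
  letI : Algebra V (FrobPushforward V) := (frobenius V p : V →+* FrobPushforward V).toAlgebra
  exact @pure_of_faithfullyFlat_aux V (FrobPushforward V) _ _ _ hff M _ _
end

section
/- Let V be a valuation ring of characteristic p > 0 with fraction field K such that [K:K^p] is finite. Then V is F-finite (i.e., V is a finite V^p-module) if and only if V is a free V^p-module of rank [K:K^p]. -/
universe u

section FreePi

variable {R : Type u} [CommRing R] [IsDomain R] [ValuationRing R]

theorem free_of_fg_of_injective_pi :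
    ∀ (n : ℕ) {M : Type u} [AddCommGroup M] [Module R M] [Module.Finite R M]
      (f : M →ₗ[R] (Fin n → R)), Function.Injective f → Module.Free R M := by
  intro n
  induction n with
  | zero =>
    intro M _ _ _ f hf
    have : Subsingleton M := ⟨fun a b => hf (Subsingleton.elim _ _)⟩
    exact Module.Free.of_subsingleton R M
  | succ n IH =>
    intro M _ _ _ f hf
    set π : M →ₗ[R] R := (LinearMap.proj (Fin.last n)).comp f with hπ
    have hfg : (LinearMap.range π).FG := by
      have := (Module.finite_def.mp ‹Module.Finite R M›).map π
      rwa [Submodule.map_top] at this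
    obtain ⟨a, ha⟩ := (IsBezout.isPrincipal_of_FG _ hfg).1
    by_cases h0 : a = 0
    · have hker : ∀ x, π x = 0 := by
        intro x
        have : π x ∈ LinearMap.range π := LinearMap.mem_range_self _ x
        rw [ha, h0, Submodule.span_zero_singleton] at this
        simpa using this
      apply IH ((LinearMap.funLeft R R Fin.castSucc).comp f)
      intro x y hxy
      apply hf
      funext i
      refine Fin.lastCases ?_ ?_ i
      · have hx := hker x; have hy := hker y
        simp only [hπ, LinearMap.comp_apply, LinearMap.proj_apply] at hx hy
        rw [hx, hy]
      · intro i
        exact congrFun hxy i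
    · have haM : a ∈ LinearMap.range π := ha ▸ Submodule.mem_span_singleton_self a
      set I : Submodule R R := LinearMap.range π
      have e : R ≃ₗ[R] I := by
        rw [show I = Submodule.span R {a} from ha]
        exact LinearEquiv.toSpanNonzeroSingleton R R a h0
      set q : M →ₗ[R] R := (e.symm : I →ₗ[R] R).comp (π.rangeRestrict) with hq
      have hqker : ∀ x, q x = 0 → π x = 0 := by
        intro x hx
        have h1 : (e.symm) (π.rangeRestrict x) = e.symm 0 := by simpa [hq] using hx
        have h2 : π.rangeRestrict x = 0 := e.symm.injective h1
        simpa using congrArg (Subtype.val) h2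
      have hqsurj : Function.Surjective q := by
        intro r
        obtain ⟨x, hx⟩ := LinearMap.surjective_rangeRestrict π (e r)
        exact ⟨x, by simp [hq, hx]⟩
      obtain ⟨x0, hx0⟩ := hqsurj 1
      set s : R →ₗ[R] M := LinearMap.toSpanSingleton R M x0 with hs
      have hqs : ∀ r, q (s r) = r := by
        intro r; simp [hs, LinearMap.toSpanSingleton_apply, map_smul, hx0]
      let fwd : M →ₗ[R] (LinearMap.ker q × R) :=
        LinearMap.prod
          ((LinearMap.id - s.comp q).codRestrict (LinearMap.ker q) (by
            intro x; simp [LinearMap.mem_ker, hqs])) q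
      let bwd : (LinearMap.ker q × R) →ₗ[R] M :=
        (LinearMap.ker q).subtype.comp (LinearMap.fst R _ _) + s.comp (LinearMap.snd R _ _)
      have hbf : bwd.comp fwd = LinearMap.id := by
        ext x <;> simp [fwd, bwd]
      have hfb : fwd.comp bwd = LinearMap.id := by
        apply LinearMap.ext
        rintro ⟨⟨k, hk⟩, r⟩
        have hk' : q k = 0 := hk
        apply Prod.ext
        · apply Subtype.ext
          simp [fwd, bwd, hk', hqs]
        · simp [fwd, bwd, hk', hqs]
      let E : M ≃ₗ[R] (LinearMap.ker q × R) := LinearEquiv.ofLinear fwd bwd hfb hbf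
      have hkfg : Module.Finite R (LinearMap.ker q) := by
        have hkr : LinearMap.ker q = LinearMap.range (LinearMap.id - s.comp q) := by
          apply le_antisymm
          · intro k hk
            have hk' : q k = 0 := hk
            exact ⟨k, by simp [hk']⟩
          · rintro _ ⟨x, rfl⟩
            simp [LinearMap.mem_ker, hqs]
        rw [Module.Finite.iff_fg, hkr, ← Submodule.map_top]
        exact (Module.finite_def.mp ‹Module.Finite R M›).map _
      have hkfree : Module.Free R (LinearMap.ker q) := by
        apply IH ((LinearMap.funLeft R R Fin.castSucc).comp (f.comp (LinearMap.ker q).subtype))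
        rintro ⟨x, hx⟩ ⟨y, hy⟩ hxy
        apply Subtype.ext
        apply hf
        funext i
        refine Fin.lastCases ?_ ?_ i
        · have hx' : π x = 0 := hqker x hx
          have hy' : π y = 0 := hqker y hy
          simp only [hπ, LinearMap.comp_apply, LinearMap.proj_apply] at hx' hy'
          rw [hx', hy']
        · intro i; exact congrFun hxy i
      exact Module.Free.of_equiv E.symm

end FreePi

section Main

variable (V : Type u) [CommRing V] [IsDomain V] [ValuationRing V]
    (K : Type u) [Field K] [Algebra V K] [IsFractionRing V K]
    (p : ℕ) [Fact p.Prime] [CharP V p] [CharP K p]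


theorem pow_p_mem_L (x : K) : x ^ p ∈ (pthPowerSubfield K p) := ⟨x, by rw [frobenius_def]⟩

theorem algebraMap_range_mem_L (r : ((frobenius V p).range)) : algebraMap V K (r : V) ∈ (pthPowerSubfield K p) := by
  obtain ⟨v, hv⟩ := r.2
  rw [← hv, frobenius_def, map_pow]
  exact pow_p_mem_L K p _

theorem coe_smul_L (c : (pthPowerSubfield K p)) (x : K) : c • x = (c : K) * x := rfl

theorem algebraMapR_injective :
    Function.Injective (fun r : ((frobenius V p).range) => algebraMap V K (r : V)) := by
  intro r r' h
  exact Subtype.ext (IsFractionRing.injective V K h)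

variable [FiniteDimensional (pthPowerSubfield K p) K]

include K in
theorem free_forward [Module.Finite ((frobenius V p).range) V] : Module.Free ((frobenius V p).range) V := by
  classical
  haveI : ValuationRing ((frobenius V p).range) :=
    Function.Surjective.valuationRing _ (frobenius V p).rangeRestrict_surjective
  set m := Module.finrank (pthPowerSubfield K p) K with hm
  let b : Module.Basis (Fin m) (pthPowerSubfield K p) K := Module.finBasis (pthPowerSubfield K p) K
  obtain ⟨k, g, hg⟩ := Module.Finite.exists_fin (R := ((frobenius V p).range)) (M := V)
  have hcoord : ∀ (j : Fin k) (i : Fin m), ∃ y : K, y ^ p = (b.repr (algebraMap V K (g j)) i : K) := by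
    intro j i
    obtain ⟨y, hy⟩ := (b.repr (algebraMap V K (g j)) i).2
    exact ⟨y, by rw [← hy, frobenius_def]⟩
  choose y hy using hcoord
  obtain ⟨w, hw⟩ := IsLocalization.exist_integer_multiples_of_finite
    (nonZeroDivisors V) (fun ji : Fin k × Fin m => y ji.1 ji.2)
  choose u hu using hw
  set wp : K := (algebraMap V K (w : V)) ^ p with hwp
  have hwp0 : wp ≠ 0 :=
    pow_ne_zero _ (IsFractionRing.to_map_ne_zero_of_mem_nonZeroDivisors w.2)
  have key : ∀ v ∈ Submodule.span ((frobenius V p).range) (Set.range g), ∀ i : Fin m,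
      ∃ r : ((frobenius V p).range), algebraMap V K (r : V) = wp * (b.repr (algebraMap V K v) i : K) := by
    intro v hv
    induction hv using Submodule.span_induction with
    | mem x hx =>
      obtain ⟨j, rfl⟩ := hx
      intro i
      refine ⟨⟨u (j, i) ^ p, u (j, i), by rw [frobenius_def]⟩, ?_⟩
      have h1 : algebraMap V K (u (j, i)) = algebraMap V K (w : V) * y j i := by
        rw [hu (j, i)]; exact (Algebra.smul_def _ _)
      calc algebraMap V K (u (j, i) ^ p) = (algebraMap V K (u (j, i))) ^ p := map_pow _ _ _
        _ = (algebraMap V K (w : V)) ^ p * (y j i) ^ p := by rw [h1, mul_pow]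
        _ = wp * (b.repr (algebraMap V K (g j)) i : K) := by rw [hwp, hy]
    | zero =>
      intro i
      exact ⟨0, by simp⟩
    | add x z hx hz ihx ihz =>
      intro i
      obtain ⟨r, hr⟩ := ihx i
      obtain ⟨r', hr'⟩ := ihz i
      refine ⟨r + r', ?_⟩
      have hAdd : (b.repr (algebraMap V K (x + z)) i : K)
          = (b.repr (algebraMap V K x) i : K) + (b.repr (algebraMap V K z) i : K) := by
        rw [map_add (algebraMap V K), map_add b.repr, Finsupp.add_apply]
        push_cast
        ring
      rw [show ((r + r' : ((frobenius V p).range)) : V) = (r : V) + (r' : V) from rfl,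
        map_add, hr, hr', hAdd]
      ring
    | smul r x hx ihx =>
      intro i
      obtain ⟨r', hr'⟩ := ihx i
      refine ⟨r * r', ?_⟩
      have hrx : algebraMap V K ((r : V) * x) = algebraMap V K (r : V) * algebraMap V K x :=
        map_mul _ _ _
      have hmem : algebraMap V K (r : V) ∈ (pthPowerSubfield K p) := algebraMap_range_mem_L V K p r
      have hsm : b.repr (algebraMap V K ((r : V) * x)) i
          = (⟨algebraMap V K (r : V), hmem⟩ : (pthPowerSubfield K p)) * b.repr (algebraMap V K x) i := by
        rw [hrx, show algebraMap V K (r : V) * algebraMap V K x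
            = (⟨algebraMap V K (r : V), hmem⟩ : (pthPowerSubfield K p)) • algebraMap V K x from rfl,
          map_smul]
        rfl
      rw [show ((r * r' : ((frobenius V p).range)) : V) = (r : V) * (r' : V) from rfl,
        map_mul, hr', show (r • x : V) = (r : V) * x from rfl, hsm]
      push_cast
      ring
  have key' : ∀ (v : V) (i : Fin m),
      ∃ r : ((frobenius V p).range), algebraMap V K (r : V) = wp * (b.repr (algebraMap V K v) i : K) :=
    fun v i => key v (hg ▸ Submodule.mem_top) i
  choose F hF using key'
  have hinj := algebraMapR_injective V K p
  let f : V →ₗ[((frobenius V p).range)] (Fin m → ((frobenius V p).range)) :=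
    { toFun := F
      map_add' := by
        intro v v'
        funext i
        apply hinj
        show algebraMap V K ((F (v + v') i : ((frobenius V p).range)) : V)
          = algebraMap V K ((F v i + F v' i : ((frobenius V p).range)) : V)
        have hAdd : (b.repr (algebraMap V K (v + v')) i : K)
            = (b.repr (algebraMap V K v) i : K) + (b.repr (algebraMap V K v') i : K) := by
          rw [map_add (algebraMap V K), map_add b.repr, Finsupp.add_apply]
          push_cast
          ring
        rw [hF, hAdd, mul_add, ← hF, ← hF]
        exact (map_add _ _ _).symm
      map_smul' := by
        intro r v
        funext i
        apply hinj
        show algebraMap V K ((F (r • v) i : V))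
          = algebraMap V K ((r : V) * ((F v i : V)))
        have hmem : algebraMap V K (r : V) ∈ (pthPowerSubfield K p) := algebraMap_range_mem_L V K p r
        have hsm : b.repr (algebraMap V K ((r : V) * v)) i
            = (⟨algebraMap V K (r : V), hmem⟩ : (pthPowerSubfield K p)) * b.repr (algebraMap V K v) i := by
          rw [map_mul, show algebraMap V K (r : V) * algebraMap V K v
              = (⟨algebraMap V K (r : V), hmem⟩ : (pthPowerSubfield K p)) • algebraMap V K v from rfl,
            map_smul]
          rfl
        rw [map_mul, hF, hF, show ((r • v : V)) = (r : V) * v from rfl, hsm]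
        push_cast
        ring }
  have hfinj : Function.Injective f := by
    intro v v' hvv'
    have hc : ∀ i : Fin m, (b.repr (algebraMap V K v) i : K) = (b.repr (algebraMap V K v') i : K) := by
      intro i
      have := congrFun hvv' i
      have h2 : algebraMap V K ((F v i : ((frobenius V p).range)) : V) = algebraMap V K ((F v' i : ((frobenius V p).range)) : V) := by
        rw [show F v i = f v i from rfl, show F v' i = f v' i from rfl, hvv']
      rw [hF, hF] at h2
      exact mul_left_cancel₀ hwp0 h2
    have : b.repr (algebraMap V K v) = b.repr (algebraMap V K v') := by
      ext i
      exact_mod_cast hc i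
    have := b.repr.injective this
    exact IsFractionRing.injective V K this
  exact free_of_fg_of_injective_pi m f hfinj

end Main

section Rank2

variable (V : Type u) [CommRing V] [IsDomain V] [ValuationRing V]
    (K : Type u) [Field K] [Algebra V K] [IsFractionRing V K]
    (p : ℕ) [Fact p.Prime] [CharP V p] [CharP K p]
    [FiniteDimensional (pthPowerSubfield K p) K]

include K in
theorem rank_forward [Module.Finite ((frobenius V p).range) V]
    [Module.Free ((frobenius V p).range) V] :
    Module.rank ((frobenius V p).range) V
      = (Module.finrank (pthPowerSubfield K p) K : Cardinal) := by
  classical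
  haveI : ValuationRing ((frobenius V p).range) :=
    Function.Surjective.valuationRing _ (frobenius V p).rangeRestrict_surjective
  set ι' := Module.Free.ChooseBasisIndex ((frobenius V p).range) V with hι'
  let β : Module.Basis ι' ((frobenius V p).range) V := Module.Free.chooseBasis _ _
  have hli : LinearIndependent (pthPowerSubfield K p) (fun i : ι' => algebraMap V K (β i)) := by
    rw [Fintype.linearIndependent_iff]
    intro c hc i0
    have hyc : ∀ i, ∃ yc : K, yc ^ p = (c i : K) := fun i => by
      obtain ⟨yc, h⟩ := (c i).2; exact ⟨yc, by rw [← h, frobenius_def]⟩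
    choose yc hycp using hyc
    obtain ⟨w, hw⟩ := IsLocalization.exist_integer_multiples_of_finite (nonZeroDivisors V) yc
    choose u hu using hw
    set wp : K := (algebraMap V K (w : V)) ^ p with hwp
    have hwp0 : wp ≠ 0 :=
      pow_ne_zero _ (IsFractionRing.to_map_ne_zero_of_mem_nonZeroDivisors w.2)
    have hup : ∀ i, algebraMap V K (u i ^ p) = wp * (c i : K) := by
      intro i
      rw [map_pow, hu i, Algebra.smul_def, mul_pow, hwp, hycp]
    have h0 : (∑ i, (⟨u i ^ p, u i, by rw [frobenius_def]⟩ : ((frobenius V p).range)) • β i) = 0 := by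
      apply IsFractionRing.injective V K
      rw [map_sum, map_zero]
      have hterm : ∀ i : ι', algebraMap V K
          (((⟨u i ^ p, u i, by rw [frobenius_def]⟩ : ((frobenius V p).range)) • β i : V))
          = wp * (c i • algebraMap V K (β i)) := by
        intro i
        rw [show ((⟨u i ^ p, u i, by rw [frobenius_def]⟩ : ((frobenius V p).range)) • β i : V)
            = (u i ^ p) * β i from rfl, map_mul, hup, coe_smul_L]
        ring
      rw [Finset.sum_congr rfl (fun i _ => hterm i), ← Finset.mul_sum, hc, mul_zero]
    have hz := Fintype.linearIndependent_iff.mp β.linearIndependent _ h0 i0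
    have hu0 : (u i0 : V) ^ p = 0 := congrArg Subtype.val hz
    have hwc : wp * (c i0 : K) = 0 := by
      rw [← hup i0, hu0, map_zero]
    have : (c i0 : K) = 0 := by
      rcases mul_eq_zero.mp hwc with h | h
      · exact absurd h hwp0
      · exact h
    exact Subtype.ext this
  have hsp : ⊤ ≤ Submodule.span (pthPowerSubfield K p)
      (Set.range fun i : ι' => algebraMap V K (β i)) := by
    intro x _
    obtain ⟨a, d, hd, hx⟩ := IsFractionRing.div_surjective (A := V) x
    have hVmem : ∀ v : V, algebraMap V K v ∈ Submodule.span (pthPowerSubfield K p)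
        (Set.range fun i : ι' => algebraMap V K (β i)) := by
      intro v
      have hv : v ∈ Submodule.span ((frobenius V p).range) (Set.range β) := by
        rw [β.span_eq]; trivial
      induction hv using Submodule.span_induction with
      | mem z hz => obtain ⟨i, rfl⟩ := hz; exact Submodule.subset_span ⟨i, rfl⟩
      | zero => rw [map_zero]; exact Submodule.zero_mem _
      | add a b _ _ iha ihb => rw [map_add]; exact Submodule.add_mem _ iha ihb
      | smul r z _ ihz =>
        rw [show (r • z : V) = (r : V) * z from rfl, map_mul,
          show algebraMap V K (r : V) * algebraMap V K z
            = (⟨algebraMap V K (r : V), algebraMap_range_mem_L V K p r⟩ :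
              (pthPowerSubfield K p)) • algebraMap V K z from rfl]
        exact Submodule.smul_mem _ _ ihz
    have hd0 : algebraMap V K d ≠ 0 := IsFractionRing.to_map_ne_zero_of_mem_nonZeroDivisors hd
    have hmem : (algebraMap V K d)⁻¹ ^ p ∈ (pthPowerSubfield K p) := pow_p_mem_L K p _
    have hp1 : p - 1 + 1 = p := Nat.succ_pred_eq_of_pos (Fact.out : p.Prime).pos
    have hxe : x = (⟨(algebraMap V K d)⁻¹ ^ p, hmem⟩ : (pthPowerSubfield K p))
        • algebraMap V K (a * d ^ (p - 1)) := by
      have key2 : (algebraMap V K d)⁻¹ ^ p * (algebraMap V K d) ^ (p - 1)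
          = (algebraMap V K d)⁻¹ := by
        obtain ⟨q, hq⟩ : ∃ q, p = q + 1 := ⟨p - 1, hp1.symm⟩
        rw [hq, Nat.add_sub_cancel, pow_succ, mul_assoc, mul_comm (algebraMap V K d)⁻¹,
          ← mul_assoc, inv_pow, inv_mul_cancel₀ (pow_ne_zero _ hd0), one_mul]
      have hcoe : ((⟨(algebraMap V K d)⁻¹ ^ p, hmem⟩ : pthPowerSubfield K p) : K)
          = (algebraMap V K d)⁻¹ ^ p := rfl
      rw [coe_smul_L, hcoe, map_mul, map_pow, ← hx, div_eq_mul_inv]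
      conv_lhs => rw [← key2]
      ring
    rw [hxe]
    exact Submodule.smul_mem _ _ (hVmem _)
  let B : Module.Basis ι' (pthPowerSubfield K p) K := Module.Basis.mk hli hsp
  rw [← β.mk_eq_rank'', Module.finrank_eq_card_basis B, Cardinal.mk_fintype]

end Rank2

theorem valuationRing_fFinite_iff_free_of_rank
    (V : Type u) [CommRing V] [IsDomain V] [ValuationRing V]
    (K : Type u) [Field K] [Algebra V K] [IsFractionRing V K]
    (p : ℕ) [Fact p.Prime] [CharP V p] [CharP K p]
    [FiniteDimensional (pthPowerSubfield K p) K] :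
    Module.Finite (frobenius V p).range V ↔
      (Module.Free (frobenius V p).range V ∧
        Module.rank (frobenius V p).range V =
          (Module.finrank (pthPowerSubfield K p) K : Cardinal)) := by
  constructor
  · intro hfin
    haveI := free_forward V K p
    exact ⟨inferInstance, rank_forward V K p⟩
  · rintro ⟨hfree, hrank⟩
    haveI := hfree
    rw [Module.Free.rank_eq_card_chooseBasisIndex] at hrank
    haveI : Finite (Module.Free.ChooseBasisIndex (frobenius V p).range V) := by
      have : Cardinal.mk (Module.Free.ChooseBasisIndex (frobenius V p).range V)
          < Cardinal.aleph0 := by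
        rw [hrank]; exact Cardinal.nat_lt_aleph0 _
      exact Cardinal.lt_aleph0_iff_finite.mp this
    exact Module.Finite.of_basis (Module.Free.chooseBasis _ _)
end

section
/- Let V be a valuation ring of characteristic p > 0 with fraction field K, maximal ideal m, and residue field κ, with [K:K^p] finite. If dim_{κ^p}(V/m^{[p]}) = [K:K^p], then V is a free V^p-module of rank [K:K^p]. -/
set_option linter.unusedSectionVars false
universe u




namespace FreeProofAux

variable {V : Type u} [CommRing V] [IsDomain V] [ValuationRing V] {p : ℕ}
  [hp : Fact p.Prime] [CharP V p]

/-- Membership in the Frobenius power `m^{[p]}` of the maximal ideal, expressed by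
divisibility. -/
def MP (p : ℕ) (x : V) : Prop := ∃ g : V, ¬ IsUnit g ∧ g ^ p ∣ x

lemma mp_zero : MP p (0 : V) := ⟨0, not_isUnit_zero, dvd_zero _⟩

lemma not_mp_ne_zero {x : V} (h : ¬ MP p x) : x ≠ 0 := fun hx => h (hx ▸ mp_zero)

lemma mp_of_dvd {x y : V} (hxy : x ∣ y) (h : MP p x) : MP p y :=
  ⟨h.choose, h.choose_spec.1, h.choose_spec.2.trans hxy⟩

lemma not_mp_one : ¬ MP p (1 : V) := by
  rintro ⟨g, hg, hd⟩
  exact hg (isUnit_of_dvd_one ((dvd_pow_self g hp.out.ne_zero).trans hd))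

lemma exists_dvd_min {ι : Type*} (s : Finset ι) (f : ι → V) :
    s.Nonempty → ∃ i ∈ s, ∀ j ∈ s, f i ∣ f j := by
  classical
  induction s using Finset.induction_on with
  | empty => rintro ⟨x, hx⟩; simp at hx
  | @insert a s ha ih =>
    intro _
    rcases s.eq_empty_or_nonempty with rfl | hs'
    · refine ⟨a, Finset.mem_insert_self _ _, fun j hj => ?_⟩
      rcases Finset.mem_insert.mp hj with rfl | hj
      · exact dvd_rfl
      · simp at hj
    · obtain ⟨i, his, hi⟩ := ih hs'
      rcases ValuationRing.dvd_total (f i) (f a) with h | h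
      · refine ⟨i, Finset.mem_insert_of_mem his, fun j hj => ?_⟩
        rcases Finset.mem_insert.mp hj with rfl | hj
        · exact h
        · exact hi j hj
      · refine ⟨a, Finset.mem_insert_self _ _, fun j hj => ?_⟩
        rcases Finset.mem_insert.mp hj with rfl | hj
        · exact dvd_rfl
        · exact h.trans (hi j hj)

lemma mem_map_frobenius_iff (x : V) :
    x ∈ Ideal.map (frobenius V p) (IsLocalRing.maximalIdeal V) ↔ MP p x := by
  constructor
  · intro hx
    refine Submodule.span_induction ?_ mp_zero ?_ ?_ hx
    · rintro y ⟨a, ha, rfl⟩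
      exact ⟨a, (IsLocalRing.mem_maximalIdeal a).mp ha, by rw [frobenius_def]⟩
    · rintro y z - - ⟨g₁, hg₁, hd₁⟩ ⟨g₂, hg₂, hd₂⟩
      rcases ValuationRing.dvd_total g₁ g₂ with h | h
      · exact ⟨g₁, hg₁, dvd_add hd₁ ((pow_dvd_pow_of_dvd h p).trans hd₂)⟩
      · exact ⟨g₂, hg₂, dvd_add ((pow_dvd_pow_of_dvd h p).trans hd₁) hd₂⟩
    · rintro r y - ⟨g, hg, hd⟩
      exact ⟨g, hg, hd.trans (Dvd.intro_left r rfl)⟩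
  · rintro ⟨g, hg, y, rfl⟩
    have : frobenius V p g ∈ Ideal.map (frobenius V p) (IsLocalRing.maximalIdeal V) :=
      Ideal.mem_map_of_mem _ ((IsLocalRing.mem_maximalIdeal g).mpr hg)
    rw [frobenius_def] at this
    exact Ideal.mul_mem_right y _ this

lemma isUnit_add_of_mem {x y : V} (hx : IsUnit x)
    (hy : y ∈ IsLocalRing.maximalIdeal V) : IsUnit (x + y) := by
  by_contra h
  have : x + y ∈ IsLocalRing.maximalIdeal V := (IsLocalRing.mem_maximalIdeal _).mpr h
  have : x ∈ IsLocalRing.maximalIdeal V := by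
    have := Ideal.sub_mem _ this hy
    simpa using this
  exact (IsLocalRing.mem_maximalIdeal x).mp this hx

/-- The key "distinct cosets" lemma: two non-associate elements avoiding `m^{[p]}`
cannot differ by a unit times a `p`-th power. -/
lemma key {t t' x y ε : V} (ht : ¬ MP p t) (ht' : ¬ MP p t')
    (hna : ¬ (t ∣ t' ∧ t' ∣ t)) (hε : IsUnit ε) (hx : x ≠ 0)
    (h : x ^ p * t = y ^ p * t' * ε) : False := by
  have ht0 : t ≠ 0 := not_mp_ne_zero ht
  have ht'0 : t' ≠ 0 := not_mp_ne_zero ht'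
  have hy : y ≠ 0 := by
    rintro rfl
    rw [zero_pow hp.out.ne_zero, zero_mul, zero_mul] at h
    rcases mul_eq_zero.mp h with h' | h'
    · exact hx (pow_eq_zero_iff hp.out.ne_zero |>.mp h')
    · exact ht0 h'
  rcases ValuationRing.dvd_total x y with ⟨q, rfl⟩ | ⟨q, rfl⟩
  · -- y = x * q
    have hq : t = q ^ p * t' * ε := by
      apply mul_left_cancel₀ (pow_ne_zero p hx)
      rw [h, mul_pow]; ring
    by_cases hqu : IsUnit q
    · refine hna ⟨?_, ?_⟩
      · -- t ∣ t'
        have hU : IsUnit (q ^ p * ε) := (hqu.pow p).mul hε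
        obtain ⟨w, hw⟩ := hU.exists_left_inv
        exact ⟨w, by linear_combination (-w) * hq + (-t') * hw⟩
      · -- t' ∣ t
        exact ⟨q ^ p * ε, by linear_combination hq⟩
    · exact ht ⟨q, hqu, t' * ε, by linear_combination hq⟩
  · -- x = y * q
    have hq : q ^ p * t = t' * ε := by
      apply mul_left_cancel₀ (pow_ne_zero p hy)
      rw [← mul_assoc, ← mul_pow, h]; ring
    by_cases hqu : IsUnit q
    · refine hna ⟨?_, ?_⟩
      · -- t ∣ t' : t ∣ q^p t = t' ε, ε unit
        have : t ∣ t' * ε := ⟨q ^ p, by linear_combination -hq⟩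
        exact (hε.dvd_mul_right).mp this
      · -- t' ∣ t : t = (q^p)⁻¹ * t' * ε
        have hU : IsUnit (q ^ p) := hqu.pow p
        obtain ⟨w, hw⟩ := hU.exists_left_inv
        refine ⟨ε * w, ?_⟩
        calc t = (w * q ^ p) * t := by rw [hw, one_mul]
        _ = w * (q ^ p * t) := by ring
        _ = w * (t' * ε) := by rw [hq]
        _ = t' * (ε * w) := by ring
    · refine ht' ⟨q, hqu, ?_⟩
      have : q ^ p ∣ t' * ε := ⟨t, by linear_combination -hq⟩
      exact (hε.dvd_mul_right).mp this

/-- The orthogonality lemma: for a family `u b * t a` built from a "residually independent"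
family of units `u` and pairwise non-associate representatives `t` avoiding `m^{[p]}`,
any combination with `p`-th power coefficients is associate to its minimal term. -/
lemma orth {r d : ℕ} (hr : 0 < r) (hd : 0 < d)
    (t : Fin r → V) (ht : ∀ a, ¬ MP p (t a))
    (htp : ∀ a a', a ≠ a' → ¬ (t a ∣ t a' ∧ t a' ∣ t a))
    (u : Fin d → V)
    (hu : ∀ c : Fin d → V, ¬ IsUnit (∑ b, c b ^ p * u b) → ∀ b, ¬ IsUnit (c b))
    (c : Fin r → Fin d → V) :
    ∃ a₀ b₀, (∀ a b, c a₀ b₀ ^ p * t a₀ ∣ c a b ^ p * t a) ∧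
      (∑ a, ∑ b, c a b ^ p * u b * t a) ∣ c a₀ b₀ ^ p * t a₀ := by
  classical
  haveI : Nonempty (Fin r) := Fin.pos_iff_nonempty.mp hr
  haveI : Nonempty (Fin d) := Fin.pos_iff_nonempty.mp hd
  -- minimal coefficient in each row
  have hrow : ∀ a : Fin r, ∃ b₀ : Fin d, ∀ b, c a b₀ ∣ c a b := by
    intro a
    obtain ⟨i, -, hi⟩ := exists_dvd_min Finset.univ (c a) Finset.univ_nonempty
    exact ⟨i, fun b => hi b (Finset.mem_univ _)⟩
  choose bm hbm using hrow
  -- each inner sum is the minimal coefficient times a unit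
  have hinner : ∀ a, ∃ w : V, IsUnit w ∧ (∑ b, c a b ^ p * u b) = c a (bm a) ^ p * w := by
    intro a
    have he : ∀ b, ∃ e : V, c a b = c a (bm a) * e ∧ (b = bm a → e = 1) := by
      intro b
      by_cases hb : b = bm a
      · exact ⟨1, by rw [hb, mul_one], fun _ => rfl⟩
      · obtain ⟨e, he⟩ := hbm a b
        exact ⟨e, he, fun h => absurd h hb⟩
    choose e he1 he2 using he
    refine ⟨∑ b, e b ^ p * u b, ?_, ?_⟩
    · by_contra hW
      exact (hu _ hW (bm a)) (by rw [he2 (bm a) rfl]; exact isUnit_one)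
    · rw [Finset.mul_sum]
      refine Finset.sum_congr rfl fun b _ => ?_
      rw [he1 b, mul_pow]; ring
  choose w hw1 hw2 using hinner
  -- the minimal row
  obtain ⟨a₀, -, ha₀⟩ := exists_dvd_min Finset.univ (fun a => c a (bm a) ^ p * t a)
    Finset.univ_nonempty
  have ha₀' : ∀ a, c a₀ (bm a₀) ^ p * t a₀ ∣ c a (bm a) ^ p * t a := fun a =>
    ha₀ a (Finset.mem_univ _)
  have hmin : ∀ a b, c a₀ (bm a₀) ^ p * t a₀ ∣ c a b ^ p * t a := by
    intro a b
    exact (ha₀' a).trans (mul_dvd_mul (pow_dvd_pow_of_dvd (hbm a b) p) dvd_rfl)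
  refine ⟨a₀, bm a₀, hmin, ?_⟩
  have hS : (∑ a, ∑ b, c a b ^ p * u b * t a) = ∑ a, c a (bm a) ^ p * w a * t a := by
    refine Finset.sum_congr rfl fun a _ => ?_
    rw [← Finset.sum_mul, hw2 a]
  rw [hS]
  by_cases hC0 : c a₀ (bm a₀) = 0
  · -- everything vanishes
    have hz : ∀ a, c a (bm a) ^ p * t a = 0 := by
      intro a
      have := ha₀' a
      rw [hC0, zero_pow hp.out.ne_zero, zero_mul] at this
      exact zero_dvd_iff.mp this
    rw [hz a₀]
    exact dvd_zero _
  · have hCt0 : c a₀ (bm a₀) ^ p * t a₀ ≠ 0 :=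
      mul_ne_zero (pow_ne_zero p hC0) (not_mp_ne_zero (ht a₀))
    have hf : ∀ a, ∃ f : V, c a (bm a) ^ p * t a = c a₀ (bm a₀) ^ p * t a₀ * f ∧
        (a = a₀ → f = 1) ∧ (a ≠ a₀ → ¬ IsUnit f) := by
      intro a
      by_cases ha : a = a₀
      · subst ha; exact ⟨1, (mul_one _).symm, fun _ => rfl, fun h => absurd rfl h⟩
      · obtain ⟨f, hfe⟩ := ha₀' a
        refine ⟨f, hfe, fun h => absurd h ha, fun _ hfu => ?_⟩
        by_cases hca : c a (bm a) = 0
        · rw [hca, zero_pow hp.out.ne_zero, zero_mul] at hfe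
          rcases mul_eq_zero.mp hfe.symm with h' | h'
          · exact hCt0 h'
          · rw [h'] at hfu; exact not_isUnit_zero hfu
        · exact key (ht a) (ht a₀) (htp a a₀ ha) hfu hca hfe
    choose f hfe hf1 hf2 using hf
    have hfac : (∑ a, c a (bm a) ^ p * w a * t a) =
        c a₀ (bm a₀) ^ p * t a₀ * (∑ a, w a * f a) := by
      rw [Finset.mul_sum]
      refine Finset.sum_congr rfl fun a _ => ?_
      calc c a (bm a) ^ p * w a * t a = (c a (bm a) ^ p * t a) * w a := by ring
      _ = c a₀ (bm a₀) ^ p * t a₀ * f a * w a := by rw [hfe a]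
      _ = c a₀ (bm a₀) ^ p * t a₀ * (w a * f a) := by ring
    have hU : IsUnit (∑ a, w a * f a) := by
      have hsplit : (∑ a, w a * f a) =
          w a₀ * f a₀ + ∑ a ∈ Finset.univ.erase a₀, w a * f a :=
        (Finset.add_sum_erase _ _ (Finset.mem_univ a₀)).symm
      rw [hsplit, hf1 a₀ rfl, mul_one]
      refine isUnit_add_of_mem (hw1 a₀) ?_
      refine Ideal.sum_mem _ fun a ha => ?_
      have ha' : a ≠ a₀ := (Finset.mem_erase.mp ha).1
      exact Ideal.mul_mem_left _ _ ((IsLocalRing.mem_maximalIdeal _).mpr (hf2 a ha'))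
    rw [hfac]
    exact (hU.mul_right_dvd).mpr dvd_rfl

/-- If a combination lies in `m^{[p]}` then all coefficients are non-units. -/
lemma indep_core {r d : ℕ} (hr : 0 < r) (hd : 0 < d)
    (t : Fin r → V) (ht : ∀ a, ¬ MP p (t a))
    (htp : ∀ a a', a ≠ a' → ¬ (t a ∣ t a' ∧ t a' ∣ t a))
    (u : Fin d → V)
    (hu : ∀ c : Fin d → V, ¬ IsUnit (∑ b, c b ^ p * u b) → ∀ b, ¬ IsUnit (c b))
    (c : Fin r → Fin d → V)
    (h : MP p (∑ a, ∑ b, c a b ^ p * u b * t a)) :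
    ∀ a b, ¬ IsUnit (c a b) := by
  intro a b hab
  obtain ⟨a₀, b₀, hmin, hdvd⟩ := orth hr hd t ht htp u hu c
  obtain ⟨g, hg, hgd⟩ := h
  have h1 : g ^ p ∣ c a b ^ p * t a := hgd.trans (hdvd.trans (hmin a b))
  have h2 : g ^ p ∣ t a := by
    have : IsUnit (c a b ^ p) := hab.pow p
    obtain ⟨w, hw⟩ := this.exists_left_inv
    obtain ⟨k, hk⟩ := h1
    exact ⟨w * k, by rw [← one_mul (t a), ← hw]; linear_combination w * hk⟩
  exact ht a ⟨g, hg, h2⟩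

/-- If a combination is zero then all coefficients are zero. -/
lemma zero_core {r d : ℕ} (hr : 0 < r) (hd : 0 < d)
    (t : Fin r → V) (ht : ∀ a, ¬ MP p (t a))
    (htp : ∀ a a', a ≠ a' → ¬ (t a ∣ t a' ∧ t a' ∣ t a))
    (u : Fin d → V)
    (hu : ∀ c : Fin d → V, ¬ IsUnit (∑ b, c b ^ p * u b) → ∀ b, ¬ IsUnit (c b))
    (c : Fin r → Fin d → V)
    (h : (∑ a, ∑ b, c a b ^ p * u b * t a) = 0) :
    ∀ a b, c a b = 0 := by
  obtain ⟨a₀, b₀, hmin, hdvd⟩ := orth hr hd t ht htp u hu c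
  rw [h] at hdvd
  have h0 : c a₀ b₀ ^ p * t a₀ = 0 := zero_dvd_iff.mp hdvd
  intro a b
  have : c a b ^ p * t a = 0 := zero_dvd_iff.mp (h0 ▸ hmin a b)
  rcases mul_eq_zero.mp this with h' | h'
  · exact pow_eq_zero_iff hp.out.ne_zero |>.mp h'
  · exact absurd h' (not_mp_ne_zero (ht a))

/-- The "integrality of coordinates" lemma: if `b^p * x` is a combination with `p`-th power
coefficients, then `b` divides all the coefficients. -/
lemma span_core {r d : ℕ} (hr : 0 < r) (hd : 0 < d)
    (t : Fin r → V) (ht : ∀ a, ¬ MP p (t a))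
    (htp : ∀ a a', a ≠ a' → ¬ (t a ∣ t a' ∧ t a' ∣ t a))
    (u : Fin d → V)
    (hu : ∀ c : Fin d → V, ¬ IsUnit (∑ b, c b ^ p * u b) → ∀ b, ¬ IsUnit (c b))
    (A : Fin r → Fin d → V) (b x : V) (hb : b ≠ 0)
    (h : b ^ p * x = ∑ a, ∑ b', A a b' ^ p * u b' * t a) :
    ∀ a b', b ∣ A a b' := by
  intro a₁ b₁
  by_contra hnd
  obtain ⟨q, hq⟩ : A a₁ b₁ ∣ b := (ValuationRing.dvd_total b (A a₁ b₁)).resolve_left hnd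
  have hq' : ¬ IsUnit q := by
    intro hqu
    obtain ⟨w, hw⟩ := hqu.exists_left_inv
    exact hnd ⟨w, by rw [hq]; linear_combination (-(A a₁ b₁)) * hw⟩
  have hA0 : A a₁ b₁ ≠ 0 := by
    intro h0
    rw [h0, zero_mul] at hq
    exact hb hq
  obtain ⟨a₀, b₀, hmin, hdvd⟩ := orth hr hd t ht htp u hu A
  have h1 : b ^ p * x ∣ A a₁ b₁ ^ p * t a₁ := by
    rw [h]; exact hdvd.trans (hmin a₁ b₁)
  obtain ⟨k, hk⟩ := h1
  have hk' : t a₁ = q ^ p * x * k := by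
    apply mul_left_cancel₀ (pow_ne_zero p hA0)
    rw [hk, hq, mul_pow]; ring
  exact ht a₁ ⟨q, hq', x * k, by rw [hk']; ring⟩

end FreeProofAux


/-- The ring map `κ = V/m → V/m^{[p]}` sending the class of `a` to the class of `a^p`.
The module structure it induces on `V/m^{[p]}` is exactly the `κ^p`-vector space structure. -/
noncomputable def residueFrobenius (V : Type u) [CommRing V] [IsLocalRing V]
    (p : ℕ) [Fact p.Prime] [CharP V p] :
    (V ⧸ IsLocalRing.maximalIdeal V) →+*
      (V ⧸ Ideal.map (frobenius V p) (IsLocalRing.maximalIdeal V)) :=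
  Ideal.Quotient.lift _ ((Ideal.Quotient.mk _).comp (frobenius V p))
    (fun a ha => by
      simpa [Ideal.Quotient.eq_zero_iff_mem] using Ideal.mem_map_of_mem (frobenius V p) ha)

open FreeProofAux in
theorem free_of_residue_dim_eq
    (V : Type u) [CommRing V] [IsDomain V] [ValuationRing V]
    (K : Type u) [Field K] [Algebra V K] [IsFractionRing V K]
    (p : ℕ) [Fact p.Prime] [CharP V p] [CharP K p]
    [FiniteDimensional (pthPowerSubfield K p) K]
    (hdim :
      letI : Module (V ⧸ IsLocalRing.maximalIdeal V)
          (V ⧸ Ideal.map (frobenius V p) (IsLocalRing.maximalIdeal V)) :=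
        (residueFrobenius V p).toModule
      Module.finrank (V ⧸ IsLocalRing.maximalIdeal V)
          (V ⧸ Ideal.map (frobenius V p) (IsLocalRing.maximalIdeal V)) =
        Module.finrank (pthPowerSubfield K p) K) :
    Module.Free (frobenius V p).range V ∧
      Module.rank (frobenius V p).range V =
        (Module.finrank (pthPowerSubfield K p) K : Cardinal) := by
  classical
  have hp0 : p ≠ 0 := (Fact.out (p := p.Prime)).ne_zero
  have hinj : Function.Injective (algebraMap V K) := IsFractionRing.injective V K
  letI instQ : Module (V ⧸ IsLocalRing.maximalIdeal V)
      (V ⧸ Ideal.map (frobenius V p) (IsLocalRing.maximalIdeal V)) :=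
    (residueFrobenius V p).toModule
  letI instF : Field (V ⧸ IsLocalRing.maximalIdeal V) := Ideal.Quotient.field _
  have hdim' : Module.finrank (V ⧸ IsLocalRing.maximalIdeal V)
      (V ⧸ Ideal.map (frobenius V p) (IsLocalRing.maximalIdeal V)) =
      Module.finrank (pthPowerSubfield K p) K := hdim
  have hn : 0 < Module.finrank (pthPowerSubfield K p) K := Module.finrank_pos
  haveI hfinQ : FiniteDimensional (V ⧸ IsLocalRing.maximalIdeal V)
      (V ⧸ Ideal.map (frobenius V p) (IsLocalRing.maximalIdeal V)) :=
    FiniteDimensional.of_finrank_pos (hdim' ▸ hn)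
  have hmem : ∀ z : V, z ∈ IsLocalRing.maximalIdeal V ↔ ¬ IsUnit z := fun z => by
    simp [IsLocalRing.mem_maximalIdeal, mem_nonunits_iff]
  have hsmul : ∀ (cc y : V),
      (Ideal.Quotient.mk (IsLocalRing.maximalIdeal V) cc) •
        (Ideal.Quotient.mk (Ideal.map (frobenius V p) (IsLocalRing.maximalIdeal V)) y) =
      Ideal.Quotient.mk (Ideal.map (frobenius V p) (IsLocalRing.maximalIdeal V)) (cc ^ p * y) :=
    fun _ _ => rfl
  -- transfer of linear independence to the quotient `V ⧸ m^{[p]}`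
  have hli : ∀ (ι : Type) (_ : Fintype ι) (x : ι → V),
      (∀ cc : ι → V, (∑ i, cc i ^ p * x i) ∈
          Ideal.map (frobenius V p) (IsLocalRing.maximalIdeal V) →
        ∀ i, cc i ∈ IsLocalRing.maximalIdeal V) →
      LinearIndependent (V ⧸ IsLocalRing.maximalIdeal V)
        (fun i => Ideal.Quotient.mk (Ideal.map (frobenius V p) (IsLocalRing.maximalIdeal V))
          (x i)) := by
    intro ι hι x hx
    rw [Fintype.linearIndependent_iff]
    intro g hg i
    choose cc hcc using fun i => Ideal.Quotient.mk_surjective (g i)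
    have hsum : (Ideal.Quotient.mk (Ideal.map (frobenius V p) (IsLocalRing.maximalIdeal V))
        (∑ i, cc i ^ p * x i)) = 0 := by
      rw [map_sum]
      rw [show (∑ i, Ideal.Quotient.mk (Ideal.map (frobenius V p) (IsLocalRing.maximalIdeal V))
          (cc i ^ p * x i)) = ∑ i, g i • Ideal.Quotient.mk
            (Ideal.map (frobenius V p) (IsLocalRing.maximalIdeal V)) (x i) from
        Finset.sum_congr rfl fun i _ => by rw [← hcc i, hsmul]]
      exact hg
    have hmemJ := Ideal.Quotient.eq_zero_iff_mem.mp hsum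
    have := hx cc hmemJ i
    rw [← hcc i, Ideal.Quotient.eq_zero_iff_mem]
    exact this
  have hbound : ∀ (ι : Type) (_ : Fintype ι) (x : ι → V),
      (∀ cc : ι → V, (∑ i, cc i ^ p * x i) ∈
          Ideal.map (frobenius V p) (IsLocalRing.maximalIdeal V) →
        ∀ i, cc i ∈ IsLocalRing.maximalIdeal V) →
      Fintype.card ι ≤ Module.finrank (pthPowerSubfield K p) K := by
    intro ι hι x hx
    have := (hli ι hι x hx).fintype_card_le_finrank
    rwa [hdim'] at this
  have hJle : Ideal.map (frobenius V p) (IsLocalRing.maximalIdeal V) ≤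
      IsLocalRing.maximalIdeal V := by
    intro y hy
    obtain ⟨g, hg, z, rfl⟩ := (mem_map_frobenius_iff y).mp hy
    exact Ideal.mul_mem_right _ _
      (Ideal.pow_mem_of_mem _ ((hmem g).mpr hg) p hp0.bot_lt)
  -- construction of the family `u` of units lifting a basis of κ over κ^p
  set PU : ℕ → Prop := fun k => ∃ u : Fin k → V,
    ∀ cc : Fin k → V, (∑ b, cc b ^ p * u b) ∈ IsLocalRing.maximalIdeal V →
      ∀ b, cc b ∈ IsLocalRing.maximalIdeal V with hPUdef
  have hPUbound : ∀ k, PU k → k ≤ Module.finrank (pthPowerSubfield K p) K := by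
    rintro k ⟨u, hu⟩
    have := hbound (Fin k) inferInstance u (fun cc hcc => hu cc (hJle hcc))
    simpa using this
  have hPU1 : PU 1 := by
    refine ⟨fun _ => 1, fun cc hcc b => ?_⟩
    rw [Fin.sum_univ_one, mul_one] at hcc
    have := (IsLocalRing.maximalIdeal.isMaximal V).isPrime.mem_of_pow_mem _ hcc
    rwa [Subsingleton.elim b 0]
  set d : ℕ := Nat.findGreatest PU (Module.finrank (pthPowerSubfield K p) K) with hddef
  obtain ⟨u, hu⟩ : PU d := Nat.findGreatest_spec hn hPU1
  have hd0 : 0 < d := Nat.le_findGreatest hn hPU1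
  have humax : ¬ PU (d + 1) := fun hP =>
    Nat.findGreatest_is_greatest (Nat.lt_succ_self d) (hPUbound _ hP) hP
  have hneg : ∀ z : V, (-z) ^ p = -(z ^ p) := fun z => by
    have h : ((0 : V) - z) ^ p = 0 ^ p - z ^ p := sub_pow_char 0 z
    simpa [zero_pow hp0] using h
  have huspan : ∀ x : V, ∃ cc : Fin d → V,
      x - ∑ b, cc b ^ p * u b ∈ IsLocalRing.maximalIdeal V := by
    intro x
    by_contra hx
    push_neg at hx
    apply humax
    refine ⟨Fin.snoc u x, ?_⟩
    intro cc hcc b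
    rw [Fin.sum_univ_castSucc] at hcc
    simp only [Fin.snoc_castSucc, Fin.snoc_last] at hcc
    by_cases hcl : IsUnit (cc (Fin.last d))
    · exfalso
      obtain ⟨w, hw⟩ := hcl.exists_left_inv
      apply hx (fun b => -(w * cc b.castSucc))
      have heq : x - ∑ b, (-(w * cc b.castSucc)) ^ p * u b =
          w ^ p * (∑ b, cc b.castSucc ^ p * u b + cc (Fin.last d) ^ p * x) := by
        have e1 : ∀ b : Fin d, (-(w * cc b.castSucc)) ^ p * u b =
            -((w * cc b.castSucc) ^ p * u b) := fun b => by rw [hneg]; ring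
        rw [Finset.sum_congr rfl fun b _ => e1 b, Finset.sum_neg_distrib, sub_neg_eq_add]
        rw [mul_add, Finset.mul_sum]
        have e2 : ∀ b : Fin d, (w * cc b.castSucc) ^ p * u b =
            w ^ p * (cc b.castSucc ^ p * u b) := fun b => by rw [mul_pow]; ring
        rw [Finset.sum_congr rfl fun b _ => e2 b]
        have e3 : w ^ p * (cc (Fin.last d) ^ p * x) = x := by
          rw [← mul_assoc, ← mul_pow, hw, one_pow, one_mul]
        rw [e3]
        exact add_comm _ _
      rw [heq]
      exact Ideal.mul_mem_left _ _ hcc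
    · have hlast : cc (Fin.last d) ∈ IsLocalRing.maximalIdeal V := (hmem _).mpr hcl
      have hsum : (∑ b, cc b.castSucc ^ p * u b) ∈ IsLocalRing.maximalIdeal V := by
        have h2 : cc (Fin.last d) ^ p * x ∈ IsLocalRing.maximalIdeal V :=
          Ideal.mul_mem_right _ _ (Ideal.pow_mem_of_mem _ hlast p hp0.bot_lt)
        simpa using Ideal.sub_mem _ hcc h2
      have hcs := hu _ hsum
      refine Fin.lastCases ?_ ?_ b
      · exact hlast
      · exact hcs
  -- `hu` in unit form
  have hu' : ∀ cc : Fin d → V, ¬ IsUnit (∑ b, cc b ^ p * u b) → ∀ b, ¬ IsUnit (cc b) :=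
    fun cc h b => (hmem _).mp (hu cc ((hmem _).mpr h) b)
  -- generic independence over the quotient for product families
  have hindJgen : ∀ (k : ℕ) (tt : Fin k → V), (∀ a, ¬ MP p (tt a)) →
      (∀ a a', a ≠ a' → ¬ (tt a ∣ tt a' ∧ tt a' ∣ tt a)) →
      ∀ cc : Fin k × Fin d → V,
        (∑ i, cc i ^ p * (u i.2 * tt i.1)) ∈
          Ideal.map (frobenius V p) (IsLocalRing.maximalIdeal V) →
        ∀ i, cc i ∈ IsLocalRing.maximalIdeal V := by
    intro k tt htt http cc hcc i
    rcases Nat.eq_zero_or_pos k with rfl | hk0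
    · exact absurd i.1.2 (by simp)
    have hcc' : MP p (∑ a, ∑ b, cc (a, b) ^ p * u b * tt a) := by
      rw [show (∑ a, ∑ b, cc (a, b) ^ p * u b * tt a) =
          ∑ i : Fin k × Fin d, cc i ^ p * (u i.2 * tt i.1) by
        rw [Fintype.sum_prod_type]
        exact Finset.sum_congr rfl fun a _ => Finset.sum_congr rfl fun b _ =>
          (mul_assoc _ _ _)]
      exact (mem_map_frobenius_iff _).mp hcc
    have := indep_core hk0 hd0 tt htt http u hu' (fun a b => cc (a, b)) hcc' i.1 i.2
    exact (hmem _).mpr this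
  -- construction of the family `t` of representatives
  set PT : ℕ → Prop := fun k => ∃ t : Fin k → V, (∀ a, ¬ MP p (t a)) ∧
    ∀ a a', a ≠ a' → ¬ (t a ∣ t a' ∧ t a' ∣ t a) with hPTdef
  have hPTbound : ∀ k, PT k → k ≤ Module.finrank (pthPowerSubfield K p) K := by
    rintro k ⟨t, ht, htp⟩
    have := hbound (Fin k × Fin d) inferInstance (fun i => u i.2 * t i.1)
      (hindJgen k t ht htp)
    rw [Fintype.card_prod, Fintype.card_fin, Fintype.card_fin] at this
    exact le_trans (Nat.le_mul_of_pos_right k hd0) this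
  have hPT1 : PT 1 :=
    ⟨fun _ => 1, fun _ => not_mp_one (p := p), fun a a' h => absurd (Subsingleton.elim a a') h⟩
  set r : ℕ := Nat.findGreatest PT (Module.finrank (pthPowerSubfield K p) K) with hrdef
  obtain ⟨t, ht, htp⟩ : PT r := Nat.findGreatest_spec hn hPT1
  have hr0 : 0 < r := Nat.le_findGreatest hn hPT1
  have htmax : ¬ PT (r + 1) := fun hP =>
    Nat.findGreatest_is_greatest (Nat.lt_succ_self r) (hPTbound _ hP) hP
  have hcomp : ∀ x : V, ¬ MP p x → ∃ a, t a ∣ x ∧ x ∣ t a := by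
    intro x hxmp
    by_contra hne
    apply htmax
    refine ⟨Fin.snoc t x, ?_, ?_⟩
    · intro a
      refine Fin.lastCases ?_ ?_ a
      · rw [Fin.snoc_last]; exact hxmp
      · intro i; rw [Fin.snoc_castSucc]; exact ht i
    · intro a a' haa'
      rcases Fin.eq_castSucc_or_eq_last a with ⟨i, rfl⟩ | rfl <;>
        rcases Fin.eq_castSucc_or_eq_last a' with ⟨i', rfl⟩ | rfl
      · simp only [Fin.snoc_castSucc]
        exact htp i i' (fun h => haa' (by rw [h]))
      · simp only [Fin.snoc_castSucc, Fin.snoc_last]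
        exact fun h => hne ⟨i, h⟩
      · simp only [Fin.snoc_castSucc, Fin.snoc_last]
        exact fun h => hne ⟨i', h.2, h.1⟩
      · exact absurd rfl haa'
  -- spanning of `V ⧸ m^{[p]}` by the products `u b * t a`
  have hQspan : ∀ x : V, ∃ A : Fin r → Fin d → V,
      x - (∑ a, ∑ b, A a b ^ p * u b * t a) ∈
        Ideal.map (frobenius V p) (IsLocalRing.maximalIdeal V) := by
    have H : ∀ (N : ℕ) (x : V), (Finset.univ.filter fun a => ¬ t a ∣ x).card = N →
        ∃ A : Fin r → Fin d → V,
          x - (∑ a, ∑ b, A a b ^ p * u b * t a) ∈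
            Ideal.map (frobenius V p) (IsLocalRing.maximalIdeal V) := by
      intro N
      induction N using Nat.strong_induction_on with
      | _ N ih =>
        intro x hN
        by_cases hmp : MP p x
        · refine ⟨0, ?_⟩
          simpa [zero_pow hp0] using (mem_map_frobenius_iff x).mpr hmp
        · obtain ⟨ci, hci1, hci2⟩ := hcomp x hmp
          obtain ⟨e, he⟩ := hci1
          obtain ⟨f, hf⟩ := hci2
          have ht0 : t ci ≠ 0 := not_mp_ne_zero (ht ci)
          have hef : e * f = 1 := by
            apply mul_left_cancel₀ ht0
            rw [mul_one]
            calc t ci * (e * f) = (t ci * e) * f := by ring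
            _ = x * f := by rw [← he]
            _ = t ci := hf.symm
          obtain ⟨cb, hcb⟩ := huspan e
          have hxeq : x = (∑ b, cb b ^ p * u b * t ci) +
              (e - ∑ b, cb b ^ p * u b) * t ci := by
            have hsm : (∑ b, cb b ^ p * u b * t ci) =
                (∑ b, cb b ^ p * u b) * t ci := (Finset.sum_mul _ _ _).symm
            rw [hsm, he]; ring
          have hsumite : (∑ a, ∑ b, (if a = ci then cb b else 0) ^ p * u b * t a)
              = ∑ b, cb b ^ p * u b * t ci := by
            rw [Finset.sum_eq_single ci]
            · simp
            · intro a _ ha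
              exact Finset.sum_eq_zero fun b _ => by
                rw [if_neg ha, zero_pow hp0, zero_mul, zero_mul]
            · intro h; exact absurd (Finset.mem_univ ci) h
          by_cases hmp' : MP p ((e - ∑ b, cb b ^ p * u b) * t ci)
          · refine ⟨fun a b => if a = ci then cb b else 0, ?_⟩
            rw [hsumite]
            have hthis : x - (∑ b, cb b ^ p * u b * t ci) =
                (e - ∑ b, cb b ^ p * u b) * t ci := by rw [hxeq]; ring
            rw [hthis]
            exact (mem_map_frobenius_iff _).mpr hmp'
          · have hsub : (Finset.univ.filter fun a => ¬ t a ∣ ((e - ∑ b, cb b ^ p * u b) * t ci))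
                ⊆ (Finset.univ.filter fun a => ¬ t a ∣ x) := by
              intro a ha
              rw [Finset.mem_filter] at ha ⊢
              refine ⟨ha.1, fun hdvd => ha.2 ?_⟩
              exact (hdvd.trans ⟨f, hf⟩).mul_left _
            obtain ⟨ci', hci'1, hci'2⟩ := hcomp _ hmp'
            have hstrict : (Finset.univ.filter fun a =>
                ¬ t a ∣ ((e - ∑ b, cb b ^ p * u b) * t ci)).card < N := by
              rw [← hN]
              apply Finset.card_lt_card
              refine (Finset.ssubset_iff_of_subset hsub).mpr ⟨ci', ?_, ?_⟩
              · rw [Finset.mem_filter]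
                refine ⟨Finset.mem_univ _, fun hdvd => ?_⟩
                by_cases hcc : ci' = ci
                · subst hcc
                  obtain ⟨h, hh⟩ := hci'2
                  have hμ0 : (1 - (e - ∑ b, cb b ^ p * u b) * h) * t ci' = 0 := by
                    linear_combination hh
                  rcases mul_eq_zero.mp hμ0 with h' | h'
                  · have : IsUnit (e - ∑ b, cb b ^ p * u b) :=
                      IsUnit.of_mul_eq_one h (by linear_combination -h')
                    exact (hmem _).mp hcb this
                  · exact not_mp_ne_zero (ht ci') h'
                · refine htp ci' ci hcc ⟨hdvd.trans ⟨f, hf⟩, ?_⟩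
                  exact (dvd_mul_left (t ci) _).trans hci'2
              · intro hmem'
                exact (Finset.mem_filter.mp hmem').2 hci'1
            obtain ⟨A', hA'⟩ := ih _ hstrict ((e - ∑ b, cb b ^ p * u b) * t ci) rfl
            refine ⟨fun a b => A' a b + (if a = ci then cb b else 0), ?_⟩
            have hexp : (∑ a, ∑ b, (A' a b + (if a = ci then cb b else 0)) ^ p * u b * t a)
                = (∑ a, ∑ b, A' a b ^ p * u b * t a) + ∑ b, cb b ^ p * u b * t ci := by
              have h1 : ∀ (a : Fin r) (b : Fin d),
                  ((A' a b + (if a = ci then cb b else 0)) ^ p * u b * t a)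
                  = A' a b ^ p * u b * t a + (if a = ci then cb b else 0) ^ p * u b * t a := by
                intro a b
                rw [add_pow_char (A' a b) (if a = ci then cb b else 0) p]
                ring
              rw [Finset.sum_congr rfl fun a _ => Finset.sum_congr rfl fun b _ => h1 a b]
              rw [Finset.sum_congr rfl fun a _ => Finset.sum_add_distrib,
                Finset.sum_add_distrib, hsumite]
            rw [hexp]
            have hthis : x - ((∑ a, ∑ b, A' a b ^ p * u b * t a) +
                ∑ b, cb b ^ p * u b * t ci)
                = ((e - ∑ b, cb b ^ p * u b) * t ci) -
                    (∑ a, ∑ b, A' a b ^ p * u b * t a) := by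
              rw [hxeq]; ring
            rw [hthis]
            exact hA'
    intro x
    exact H _ x rfl
  -- the basis of `V ⧸ m^{[p]}` over the residue field, giving `r * d = n`
  haveI hne : Nonempty (Fin r × Fin d) := ⟨(⟨0, hr0⟩, ⟨0, hd0⟩)⟩
  have hliQ : LinearIndependent (V ⧸ IsLocalRing.maximalIdeal V)
      (fun ab : Fin r × Fin d =>
        Ideal.Quotient.mk (Ideal.map (frobenius V p) (IsLocalRing.maximalIdeal V))
          (u ab.2 * t ab.1)) :=
    hli _ inferInstance _ (hindJgen r t ht htp)
  have hspanQ : ⊤ ≤ Submodule.span (V ⧸ IsLocalRing.maximalIdeal V)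
      (Set.range (fun ab : Fin r × Fin d =>
        Ideal.Quotient.mk (Ideal.map (frobenius V p) (IsLocalRing.maximalIdeal V))
          (u ab.2 * t ab.1))) := by
    rintro q -
    obtain ⟨x, rfl⟩ := Ideal.Quotient.mk_surjective q
    obtain ⟨A, hA⟩ := hQspan x
    have h1 : Ideal.Quotient.mk (Ideal.map (frobenius V p) (IsLocalRing.maximalIdeal V)) x =
        Ideal.Quotient.mk (Ideal.map (frobenius V p) (IsLocalRing.maximalIdeal V))
          (∑ a, ∑ b, A a b ^ p * u b * t a) := by
      have h0 := Ideal.Quotient.eq_zero_iff_mem.mpr hA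
      rwa [map_sub, sub_eq_zero] at h0
    have h2 : Ideal.Quotient.mk (Ideal.map (frobenius V p) (IsLocalRing.maximalIdeal V))
        (∑ a, ∑ b, A a b ^ p * u b * t a) =
        ∑ i : Fin r × Fin d, (Ideal.Quotient.mk (IsLocalRing.maximalIdeal V) (A i.1 i.2)) •
          (Ideal.Quotient.mk (Ideal.map (frobenius V p) (IsLocalRing.maximalIdeal V))
            (u i.2 * t i.1)) := by
      rw [Fintype.sum_prod_type, map_sum]
      refine Finset.sum_congr rfl fun a _ => ?_
      rw [map_sum]
      refine Finset.sum_congr rfl fun b _ => ?_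
      rw [hsmul, mul_assoc]
    rw [h1, h2]
    exact Submodule.sum_mem _ fun i _ =>
      Submodule.smul_mem _ _ (Submodule.subset_span ⟨i, rfl⟩)
  have hrdn : r * d = Module.finrank (pthPowerSubfield K p) K := by
    have hfr := Module.finrank_eq_card_basis (Module.Basis.mk hliQ hspanQ)
    rw [Fintype.card_prod, Fintype.card_fin, Fintype.card_fin] at hfr
    rw [← hdim', hfr]
    -- the `p`-th power subfield of `K`
  have hKp : ∀ z : K, z ∈ pthPowerSubfield K p ↔ ∃ y : K, y ^ p = z := fun z => by
    simp [pthPowerSubfield, RingHom.mem_fieldRange, frobenius_def]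
  have hKsmul : ∀ (s : pthPowerSubfield K p) (z : K), s • z = (s : K) * z := fun _ _ => rfl
  have hmapsum : ∀ aa : Fin r × Fin d → V,
      algebraMap V K (∑ a, ∑ b, aa (a, b) ^ p * u b * t a) =
        ∑ i : Fin r × Fin d, algebraMap V K (aa i ^ p * (u i.2 * t i.1)) := by
    intro aa
    rw [Fintype.sum_prod_type, map_sum]
    refine Finset.sum_congr rfl fun a _ => ?_
    rw [map_sum]
    exact Finset.sum_congr rfl fun b _ => by rw [mul_assoc]
  -- linear independence of the products over `K^p`
  have hliK : LinearIndependent (pthPowerSubfield K p)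
      (fun ab : Fin r × Fin d => algebraMap V K (u ab.2 * t ab.1)) := by
    rw [Fintype.linearIndependent_iff]
    intro g hg i
    have hgp : ∀ i : Fin r × Fin d, ∃ δ : K, δ ^ p = (g i : K) := fun i => (hKp _).mp (g i).2
    choose δ hδ using hgp
    obtain ⟨bden, hbden⟩ :=
      IsLocalization.exist_integer_multiples_of_finite (nonZeroDivisors V) (S := K) δ
    choose aa haa using hbden
    have hb0 : (bden : V) ≠ 0 := nonZeroDivisors.ne_zero bden.2
    have hVeq : (∑ a, ∑ b, aa (a, b) ^ p * u b * t a) = 0 := by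
      apply hinj
      rw [map_zero, hmapsum aa]
      calc (∑ i : Fin r × Fin d, algebraMap V K (aa i ^ p * (u i.2 * t i.1)))
          = ∑ i : Fin r × Fin d, (algebraMap V K (bden : V)) ^ p *
              ((g i : K) * algebraMap V K (u i.2 * t i.1)) := by
            refine Finset.sum_congr rfl fun i _ => ?_
            rw [map_mul, map_pow, haa i, Algebra.smul_def, mul_pow, hδ i]
            ring
      _ = (algebraMap V K (bden : V)) ^ p *
            ∑ i : Fin r × Fin d, g i • algebraMap V K (u i.2 * t i.1) := by
            rw [Finset.mul_sum]
            exact Finset.sum_congr rfl fun i _ => by rw [hKsmul]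
      _ = 0 := by rw [hg, mul_zero]
    have hzz := zero_core hr0 hd0 t ht htp u hu' (fun a b => aa (a, b)) hVeq
    have haa0 : aa i = 0 := hzz i.1 i.2
    have hδ0 : δ i = 0 := by
      have h0 : (algebraMap V K) (aa i) = 0 := by rw [haa0, map_zero]
      rw [haa i, Algebra.smul_def] at h0
      rcases mul_eq_zero.mp h0 with h' | h'
      · exact absurd h' ((map_ne_zero_iff _ hinj).mpr hb0)
      · exact h'
    have hgz : (g i : K) = 0 := by rw [← hδ i, hδ0, zero_pow hp0]
    exact Subtype.ext hgz
  have hcardK : Fintype.card (Fin r × Fin d) = Module.finrank (pthPowerSubfield K p) K := by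
    rw [Fintype.card_prod, Fintype.card_fin, Fintype.card_fin, hrdn]
  have hspanK := (basisOfLinearIndependentOfCardEqFinrank hliK hcardK).span_eq
  rw [coe_basisOfLinearIndependentOfCardEqFinrank] at hspanK
  -- linear independence over `V^p`
  have hliV : LinearIndependent ((frobenius V p).range)
      (fun ab : Fin r × Fin d => u ab.2 * t ab.1) := by
    rw [Fintype.linearIndependent_iff]
    intro g hg i
    have hgp : ∀ i : Fin r × Fin d, ∃ cV : V, cV ^ p = (g i : V) := by
      intro i
      obtain ⟨y, hy⟩ := RingHom.mem_range.mp (g i).2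
      exact ⟨y, by rw [← hy, frobenius_def]⟩
    choose cV hcV using hgp
    have hsum0 : (∑ a, ∑ b, cV (a, b) ^ p * u b * t a) = 0 := by
      calc (∑ a, ∑ b, cV (a, b) ^ p * u b * t a)
          = ∑ i : Fin r × Fin d, g i • (u i.2 * t i.1) := by
            rw [Fintype.sum_prod_type]
            refine Finset.sum_congr rfl fun a _ => Finset.sum_congr rfl fun b _ => ?_
            show cV (a, b) ^ p * u b * t a = (g (a, b) : V) * (u b * t a)
            rw [← hcV (a, b), mul_assoc]
      _ = 0 := hg
    have hzz := zero_core hr0 hd0 t ht htp u hu' (fun a b => cV (a, b)) hsum0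
    have h0 : cV i = 0 := hzz i.1 i.2
    refine Subtype.ext ?_
    have : (g i : V) = 0 := by rw [← hcV i, h0, zero_pow hp0]
    rw [this]; rfl
  -- spanning of `V` over `V^p`
  have hspanV : ⊤ ≤ Submodule.span ((frobenius V p).range)
      (Set.range fun ab : Fin r × Fin d => u ab.2 * t ab.1) := by
    rintro x -
    have hz : algebraMap V K x ∈ Submodule.span (pthPowerSubfield K p)
        (Set.range fun ab : Fin r × Fin d => algebraMap V K (u ab.2 * t ab.1)) := by
      rw [hspanK]; trivial
    obtain ⟨γ, hγ⟩ := (Submodule.mem_span_range_iff_exists_fun _).mp hz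
    have hgp : ∀ i : Fin r × Fin d, ∃ δ : K, δ ^ p = (γ i : K) := fun i => (hKp _).mp (γ i).2
    choose δ hδ using hgp
    obtain ⟨bden, hbden⟩ :=
      IsLocalization.exist_integer_multiples_of_finite (nonZeroDivisors V) (S := K) δ
    choose aa haa using hbden
    have hb0 : (bden : V) ≠ 0 := nonZeroDivisors.ne_zero bden.2
    have hVeq : (bden : V) ^ p * x = ∑ a, ∑ b, aa (a, b) ^ p * u b * t a := by
      apply hinj
      rw [hmapsum aa]
      calc algebraMap V K ((bden : V) ^ p * x)
          = (algebraMap V K (bden : V)) ^ p * algebraMap V K x := by rw [map_mul, map_pow]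
      _ = (algebraMap V K (bden : V)) ^ p *
            ∑ i : Fin r × Fin d, γ i • algebraMap V K (u i.2 * t i.1) := by rw [hγ]
      _ = ∑ i : Fin r × Fin d, algebraMap V K (aa i ^ p * (u i.2 * t i.1)) := by
            rw [Finset.mul_sum]
            refine Finset.sum_congr rfl fun i _ => ?_
            have hterm : algebraMap V K (aa i ^ p * (u i.2 * t i.1)) =
                algebraMap V K (bden : V) ^ p * ((γ i : K) * algebraMap V K (u i.2 * t i.1)) := by
              rw [map_mul, map_pow, haa i, Algebra.smul_def, mul_pow, hδ i]
              ring
            rw [hKsmul, hterm]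
    have hdvd : ∀ a b, (bden : V) ∣ aa (a, b) :=
      span_core hr0 hd0 t ht htp u hu' (fun a b => aa (a, b)) (bden : V) x hb0 hVeq
    have hdvd' : ∀ i : Fin r × Fin d, (bden : V) ∣ aa i := fun i => hdvd i.1 i.2
    choose ee hee using hdvd'
    have hxeq : x = ∑ a, ∑ b, ee (a, b) ^ p * u b * t a := by
      apply mul_left_cancel₀ (pow_ne_zero p hb0)
      rw [hVeq, Finset.mul_sum]
      refine Finset.sum_congr rfl fun a _ => ?_
      rw [Finset.mul_sum]
      refine Finset.sum_congr rfl fun b _ => ?_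
      rw [hee (a, b), mul_pow]
      ring
    rw [hxeq]
    refine Submodule.sum_mem _ fun a _ => Submodule.sum_mem _ fun b _ => ?_
    have hmemR : ee (a, b) ^ p ∈ (frobenius V p).range :=
      RingHom.mem_range.mpr ⟨ee (a, b), by rw [frobenius_def]⟩
    have hrw : ee (a, b) ^ p * u b * t a =
        (⟨ee (a, b) ^ p, hmemR⟩ : (frobenius V p).range) • (u b * t a) := by
      show _ = ee (a, b) ^ p * (u b * t a)
      rw [mul_assoc]
    rw [hrw]
    exact Submodule.smul_mem _ _ (Submodule.subset_span ⟨(a, b), rfl⟩)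
  refine ⟨Module.Free.of_basis (Module.Basis.mk hliV hspanV), ?_⟩
  rw [rank_eq_card_basis (Module.Basis.mk hliV hspanV)]
  rw [Fintype.card_prod, Fintype.card_fin, Fintype.card_fin, hrdn]
end

section
/- Let V be a valuation ring of characteristic p > 0 with maximal ideal m and residue field κ. If m is not finitely generated as an ideal, then m^{[p]} = m. -/
universe u

theorem frobenius_power_of_maximalIdeal_not_fg
    (V : Type u) [CommRing V] [IsDomain V] [ValuationRing V]
    (p : ℕ) [Fact p.Prime] [CharP V p]
    (h : ¬ (IsLocalRing.maximalIdeal V).FG) :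
    Ideal.map (frobenius V p) (IsLocalRing.maximalIdeal V) = IsLocalRing.maximalIdeal V := by
  set m := IsLocalRing.maximalIdeal V with hm
  -- every element of m factors as a product of two elements of m
  have split : ∀ x ∈ m, ∃ y ∈ m, ∃ t ∈ m, x = y * t := by
    intro x hx
    have hne : m ≠ Ideal.span {x} := by
      intro he; exact h ⟨{x}, by rw [Finset.coe_singleton, ← he]⟩
    have hlt : ∃ y ∈ m, y ∉ Ideal.span {x} := by
      by_contra hc
      push_neg at hc
      exact hne (le_antisymm hc ((Ideal.span_singleton_le_iff_mem m).mpr hx))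
    obtain ⟨y, hy, hyx⟩ := hlt
    rcases ValuationRing.dvd_total x y with hd | hd
    · exact absurd (Ideal.mem_span_singleton.mpr hd) hyx
    · obtain ⟨t, ht⟩ := hd
      refine ⟨y, hy, t, ?_, ht⟩
      by_contra htm
      have htu : IsUnit t := by
        simpa [m, IsLocalRing.mem_maximalIdeal, mem_nonunits_iff, not_not] using htm
      obtain ⟨u, rfl⟩ := htu
      apply hyx
      exact Ideal.mem_span_singleton.mpr ⟨(↑u⁻¹ : V), by rw [ht]; simp [mul_assoc]⟩
  -- key claim: every element of m is divisible by an n-th power from m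
  have key : ∀ n : ℕ, ∀ x ∈ m, ∃ y ∈ m, y ^ n ∣ x := by
    intro n
    induction n with
    | zero => intro x _; exact ⟨0, zero_mem m, by simp⟩
    | succ n ih =>
      intro x hx
      obtain ⟨y, hy, t, ht, rfl⟩ := split x hx
      obtain ⟨z, hz, hzd⟩ := ih t ht
      rcases ValuationRing.dvd_total y z with hd | hd
      · refine ⟨y, hy, ?_⟩
        rw [pow_succ']
        exact mul_dvd_mul_left y ((pow_dvd_pow_of_dvd hd n).trans hzd)
      · refine ⟨z, hz, ?_⟩
        rw [pow_succ']
        exact mul_dvd_mul hd hzd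
  refine le_antisymm ?_ ?_
  · rw [Ideal.map_le_iff_le_comap]
    intro x hx
    have hfx : frobenius V p x = x ^ p := rfl
    simp only [Ideal.mem_comap, hfx]
    exact Ideal.pow_mem_of_mem m hx p (Fact.out : p.Prime).pos
  · intro x hx
    obtain ⟨y, hy, c, hc⟩ := key p x hx
    rw [hc]
    have hfy : y ^ p = frobenius V p y := rfl
    rw [hfy]
    exact Ideal.mul_mem_right _ _ (Ideal.mem_map_of_mem _ hy)
end

section
/- Let V be an F-finite valuation ring of characteristic p > 0 whose maximal ideal is not finitely generated. Then the value group Γ of V is p-divisible, i.e., Γ = pΓ. -/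
universe u

section Aux

variable {Γ₀ : Type*} [LinearOrderedCommGroupWithZero Γ₀]

lemma aux_sq (H : ∀ α : Γ₀, α ≠ 0 → α < 1 → ∃ β : Γ₀, β ≠ 0 ∧ α < β ∧ β < 1) :
    ∀ α : Γ₀, α ≠ 0 → α < 1 → ∃ γ : Γ₀, γ ≠ 0 ∧ γ < 1 ∧ α ≤ γ ^ 2 := by
  intro α hα0 hα1
  obtain ⟨β, hβ0, hαβ, hβ1⟩ := H α hα0 hα1
  rcases le_or_gt α (β ^ 2) with h | h
  · exact ⟨β, hβ0, hβ1, h⟩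
  · have hβinv : β * β⁻¹ = 1 := mul_inv_cancel₀ hβ0
    refine ⟨α * β⁻¹, mul_ne_zero hα0 (inv_ne_zero hβ0), ?_, ?_⟩
    · have hle : α * β⁻¹ ≤ 1 := by
        calc α * β⁻¹ ≤ β * β⁻¹ := mul_le_mul_left hαβ.le _
          _ = 1 := hβinv
      refine lt_of_le_of_ne hle fun he => ?_
      have : α = β := by
        have h2 := congrArg (· * β) he
        simpa [mul_assoc, inv_mul_cancel₀ hβ0] using h2
      exact absurd hαβ (by simp [this])
    · have h1 : β ≤ α * β⁻¹ := by
        have h2 : β ^ 2 * β⁻¹ ≤ α * β⁻¹ := mul_le_mul_left h.le _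
        calc β = β ^ 2 * β⁻¹ := by rw [sq, mul_assoc, hβinv, mul_one]
          _ ≤ α * β⁻¹ := h2
      calc α = α * β⁻¹ * β := by rw [mul_assoc, inv_mul_cancel₀ hβ0, mul_one]
        _ ≤ α * β⁻¹ * (α * β⁻¹) := mul_le_mul_right h1 _
        _ = (α * β⁻¹) ^ 2 := (sq _).symm

lemma aux_pow2 (H : ∀ α : Γ₀, α ≠ 0 → α < 1 → ∃ β : Γ₀, β ≠ 0 ∧ α < β ∧ β < 1) :
    ∀ (k : ℕ) (α : Γ₀), α ≠ 0 → α < 1 → ∃ γ : Γ₀, γ ≠ 0 ∧ γ < 1 ∧ α ≤ γ ^ (2 ^ k) := by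
  intro k
  induction k with
  | zero => exact fun α hα0 hα1 => ⟨α, hα0, hα1, by simp⟩
  | succ k ih =>
    intro α hα0 hα1
    obtain ⟨δ, hδ0, hδ1, hδ⟩ := aux_sq H α hα0 hα1
    obtain ⟨γ, hγ0, hγ1, hγ⟩ := ih δ hδ0 hδ1
    refine ⟨γ, hγ0, hγ1, ?_⟩
    calc α ≤ δ ^ 2 := hδ
      _ ≤ (γ ^ (2 ^ k)) ^ 2 := pow_le_pow_left' hγ 2
      _ = γ ^ (2 ^ (k + 1)) := by rw [← pow_mul, pow_succ]

lemma aux_pow (H : ∀ α : Γ₀, α ≠ 0 → α < 1 → ∃ β : Γ₀, β ≠ 0 ∧ α < β ∧ β < 1)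
    (n : ℕ) : ∀ α : Γ₀, α ≠ 0 → α < 1 → ∃ γ : Γ₀, γ ≠ 0 ∧ γ < 1 ∧ α ≤ γ ^ n := by
  intro α hα0 hα1
  obtain ⟨γ, hγ0, hγ1, hγ⟩ := aux_pow2 H n α hα0 hα1
  exact ⟨γ, hγ0, hγ1, hγ.trans (pow_le_pow_right_of_le_one' hγ1.le (Nat.lt_two_pow_self (n := n)).le)⟩

end Aux

set_option maxHeartbeats 2000000 in
theorem valueGroup_p_divisible_of_fFinite_of_maximalIdeal_not_fg
    (K : Type u) [Field K] (p : ℕ) [Fact p.Prime] [CharP K p]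
    (Γ₀ : Type u) [LinearOrderedCommGroupWithZero Γ₀]
    (v : Valuation K Γ₀) (hsurj : Function.Surjective v)
    [Module.Finite (frobenius v.integer p).range v.integer]
    (hm : ¬ (IsLocalRing.maximalIdeal v.integer).FG) :
    ∀ γ : Γ₀ˣ, ∃ δ : Γ₀ˣ, δ ^ p = γ := by
  classical
  have hp : p ≠ 0 := (Fact.out : p.Prime).ne_zero
  set R := (frobenius v.integer p).range with hR
  have hvint : Valuation.Integers v v.integer := Valuation.integer.integers v
  haveI : IsLocalRing R :=
    IsLocalRing.of_surjective' (frobenius v.integer p).rangeRestrict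
      (RingHom.rangeRestrict_surjective _)
  have hunit : ∀ y : v.integer, IsUnit y ↔ v (y : K) = 1 := fun y =>
    hvint.isUnit_iff_valuation_eq_one
  -- the maximal ideal is not principal: between any value < 1 and 1 there is another value
  have hbet : ∀ α : Γ₀, α ≠ 0 → α < 1 → ∃ β : Γ₀, β ≠ 0 ∧ α < β ∧ β < 1 := by
    intro α hα0 hα1
    by_contra hcon
    push_neg at hcon
    obtain ⟨x, hx⟩ := hsurj α
    have hxint : x ∈ v.integer := le_of_lt (hx ▸ hα1)
    apply hm
    refine ⟨{⟨x, hxint⟩}, le_antisymm ?_ ?_⟩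
    · rw [Finset.coe_singleton, Ideal.span_singleton_le_iff_mem,
        IsLocalRing.mem_maximalIdeal, mem_nonunits_iff, hunit]
      rw [show ((⟨x, hxint⟩ : v.integer) : K) = x from rfl, hx]
      exact ne_of_lt hα1
    · intro y hy
      have hy1 : v (y : K) < 1 := by
        refine lt_of_le_of_ne y.2 fun h =>
          (mem_nonunits_iff.mp ((IsLocalRing.mem_maximalIdeal y).mp hy)) ((hunit y).mpr h)
      rcases eq_or_ne (v (y : K)) 0 with h0 | h0
      · have : (y : K) = 0 := v.zero_iff.mp h0
        have : y = 0 := Subtype.ext this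
        rw [this]
        exact zero_mem _
      · have hle : v (y : K) ≤ α := by
          by_contra hgt
          push_neg at hgt
          exact absurd hy1 (not_lt.mpr (hcon _ h0 hgt))
        have hdvd : (⟨x, hxint⟩ : v.integer) ∣ y := by
          apply hvint.dvd_of_le
          rw [show algebraMap v.integer K y = (y : K) from rfl]
          rw [show algebraMap v.integer K ⟨x, hxint⟩ = x from rfl, hx]
          exact hle
        rw [Finset.coe_singleton]
        exact Ideal.mem_span_singleton.mpr hdvd
  -- every element of small valuation lies in m₀ • ⊤
  have hmem : ∀ b : v.integer, v (b : K) < 1 →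
      b ∈ (IsLocalRing.maximalIdeal R • ⊤ : Submodule R v.integer) := by
    intro b hb
    rcases eq_or_ne (b : K) 0 with hb0 | hb0
    · rw [show b = 0 from Subtype.ext hb0]
      exact zero_mem _
    · obtain ⟨γ, hγ0, hγ1, hγp⟩ := aux_pow hbet p (v (b : K)) (v.ne_zero_iff.mpr hb0) hb
      obtain ⟨t, ht⟩ := hsurj γ
      have ht0 : t ≠ 0 := fun h => hγ0 (by rw [← ht, h, v.map_zero])
      have htint : t ∈ v.integer := by
        show v t ≤ 1
        rw [ht]; exact hγ1.le
      set c : v.integer := ⟨t, htint⟩ with hc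
      have htp0 : t ^ p ≠ 0 := pow_ne_zero _ ht0
      have hq : v ((b : K) / t ^ p) ≤ 1 := by
        rw [map_div₀, v.map_pow, ht, div_eq_mul_inv]
        calc v (b : K) * (γ ^ p)⁻¹ ≤ γ ^ p * (γ ^ p)⁻¹ := mul_le_mul_left hγp _
          _ = 1 := mul_inv_cancel₀ (pow_ne_zero _ hγ0)
      set q : v.integer := ⟨(b : K) / t ^ p, hq⟩ with hqdef
      have hcmem : (c ^ p : v.integer) ∈ R := RingHom.mem_range.mpr ⟨c, frobenius_def ..⟩
      set r : R := ⟨c ^ p, hcmem⟩ with hrdef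
      have hrm : r ∈ IsLocalRing.maximalIdeal R := by
        rw [IsLocalRing.mem_maximalIdeal r, mem_nonunits_iff]
        intro hu
        have : IsUnit (c ^ p : v.integer) := hu.map R.subtype
        have : IsUnit c := (isUnit_pow_iff hp).mp this
        rw [hunit] at this
        rw [show ((c : v.integer) : K) = t from rfl, ht] at this
        exact absurd this (ne_of_lt hγ1)
      have hbrq : b = r • q := by
        apply Subtype.ext
        show (b : K) = ((c ^ p : v.integer) : K) * ((b : K) / t ^ p)
        push_cast
        field_simp
        rfl
      rw [hbrq]
      exact Submodule.smul_mem_smul hrm Submodule.mem_top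
  -- main induction
  have key : ∀ (n : ℕ) (s : Finset v.integer), s.card = n →
      Submodule.span R (s : Set v.integer) = ⊤ →
      ∀ a : v.integer, (a : K) ≠ 0 →
        ∃ c : v.integer, v (c : K) ≠ 0 ∧ v (a : K) = v (c : K) ^ p := by
    intro n
    induction n using Nat.strong_induction_on with
    | _ n ih =>
      intro s hcard hspan a ha
      have hane : a ≠ 0 := fun h => ha (by rw [h]; rfl)
      have has : a ∈ Submodule.span R (s : Set v.integer) := hspan ▸ Submodule.mem_top
      obtain ⟨f, -, hf⟩ := Submodule.mem_span_finset.mp has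
      have hcs : ∀ x : v.integer, ∃ y : v.integer, y ^ p = ((f x : v.integer)) := by
        intro x
        obtain ⟨y, hy⟩ := RingHom.mem_range.mp (f x).2
        exact ⟨y, by rw [← hy, frobenius_def]⟩
      choose c hc using hcs
      have hsne : s.Nonempty := by
        rcases s.eq_empty_or_nonempty with h | h
        · exfalso
          rw [h, Finset.coe_empty, Submodule.span_empty] at hspan
        -- a ∈ ⊥
          have : a ∈ (⊥ : Submodule R v.integer) := hspan ▸ Submodule.mem_top
          exact hane (Submodule.mem_bot R |>.mp this)
        · exact h
      obtain ⟨x₀, hx₀s, hmax⟩ := s.exists_max_image (fun x => v ((c x : K))) hsne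
      set t₀ : K := (c x₀ : K) with ht₀def
      rcases eq_or_ne t₀ 0 with ht₀ | ht₀
      · exfalso
        apply hane
        rw [← hf]
        apply Finset.sum_eq_zero
        intro x hx
        have hvle : v (c x : K) ≤ v t₀ := hmax x hx
        rw [ht₀, v.map_zero, le_zero_iff] at hvle
        have hcx : c x = 0 := Subtype.ext (v.zero_iff.mp hvle)
        have hfx : f x = 0 := by
          apply Subtype.ext
          rw [← hc x, hcx, zero_pow hp]
          rfl
        rw [hfx, zero_smul]
      · -- t₀ ≠ 0
        have hvt₀ : v t₀ ≠ 0 := v.ne_zero_iff.mpr ht₀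
        have hdiv : ∀ x ∈ s, v ((c x : K) / t₀) ≤ 1 := by
          intro x hx
          rw [map_div₀, div_eq_mul_inv]
          calc v (c x : K) * (v t₀)⁻¹ ≤ v t₀ * (v t₀)⁻¹ := mul_le_mul_left (hmax x hx) _
            _ = 1 := mul_inv_cancel₀ hvt₀
        set d : v.integer → v.integer := fun x =>
          if hx : x ∈ s then ⟨(c x : K) / t₀, hdiv x hx⟩ else 0 with hd
        set w : v.integer := ∑ x ∈ s, (d x) ^ p * x with hw
        have hdcoe : ∀ x ∈ s, ((d x : K)) = (c x : K) / t₀ := by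
          intro x hx
          rw [hd]
          simp only [dif_pos hx]
        have hkey' : a = (c x₀) ^ p * w := by
          rw [← hf, hw, Finset.mul_sum]
          refine Finset.sum_congr rfl fun x hx => Subtype.ext ?_
          have h3 : ((f x • x : v.integer) : K) = ((c x : K)) ^ p * (x : K) := by
            rw [show (f x • x : v.integer) = ((f x : v.integer)) * x from rfl, ← hc x]
            push_cast
            ring
          have h4 : (((c x₀) ^ p * ((d x) ^ p * x) : v.integer) : K)
              = t₀ ^ p * (((d x : K)) ^ p * (x : K)) := by push_cast; ring
          rw [h3, h4, hdcoe x hx, div_pow]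
          field_simp
        have hw1 : v (w : K) ≤ 1 := w.2
        rcases lt_or_eq_of_le hw1 with hlt | heq
        · -- shrink the generating set
          have hwmem := hmem w hlt
          have hdx₀ : d x₀ = 1 := by
            apply Subtype.ext
            rw [hdcoe x₀ hx₀s, ← ht₀def, div_self ht₀]
            rfl
          have hx₀eq : x₀ = w - ∑ x ∈ s.erase x₀, (d x) ^ p * x := by
            rw [hw, ← Finset.add_sum_erase s _ hx₀s, hdx₀, one_pow, one_mul]
            ring
          have hsub : Submodule.span R ((s : Finset v.integer) : Set v.integer) ≤
              Submodule.span R ((s.erase x₀ : Finset v.integer) : Set v.integer) ⊔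
                (IsLocalRing.maximalIdeal R • ⊤) := by
            rw [Submodule.span_le]
            intro x hx
            have hxs : x ∈ s := hx
            by_cases hne : x = x₀
            · rw [SetLike.mem_coe, hne]
              have hmemsup : w - ∑ y ∈ s.erase x₀, (d y) ^ p * y ∈
                  Submodule.span R ((s.erase x₀ : Finset v.integer) : Set v.integer) ⊔
                    (IsLocalRing.maximalIdeal R • ⊤) := by
                apply sub_mem
                · exact Submodule.mem_sup_right hwmem
                · apply Submodule.mem_sup_left
                  apply Submodule.sum_mem
                  intro y hy
                  have hdy : ((d y) ^ p : v.integer) ∈ R :=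
                    RingHom.mem_range.mpr ⟨d y, frobenius_def ..⟩
                  have hsm : (d y) ^ p * y = (⟨(d y) ^ p, hdy⟩ : R) • y := rfl
                  rw [hsm]
                  exact Submodule.smul_mem _ _ (Submodule.subset_span hy)
              rw [← hx₀eq] at hmemsup
              exact hmemsup
            · exact SetLike.mem_coe.mpr (Submodule.mem_sup_left
                (Submodule.subset_span (Finset.mem_erase.mpr ⟨hne, hxs⟩)))
          have hsub' : (⊤ : Submodule R v.integer) ≤
              Submodule.span R ((s.erase x₀ : Finset v.integer) : Set v.integer) ⊔
                (IsLocalRing.maximalIdeal R • ⊤) := hspan ▸ hsub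
          have htop : Submodule.span R ((s.erase x₀ : Finset v.integer) : Set v.integer) = ⊤ :=
            top_le_iff.mp
              (Submodule.le_of_le_smul_of_le_jacobson_bot Module.Finite.fg_top
                (IsLocalRing.maximalIdeal_le_jacobson ⊥) hsub')
          exact ih (s.erase x₀).card (hcard ▸ Finset.card_erase_lt_of_mem hx₀s)
            (s.erase x₀) rfl htop a ha
        · -- v w = 1 : conclude
          refine ⟨c x₀, hvt₀, ?_⟩
          have hva : v (a : K) = v t₀ ^ p * v (w : K) := by
            rw [hkey']
            push_cast
            rw [v.map_mul, v.map_pow]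
          rw [hva, heq, mul_one]
  obtain ⟨s, hs⟩ := (Module.Finite.fg_top : (⊤ : Submodule R v.integer).FG)
  have main : ∀ a : v.integer, (a : K) ≠ 0 →
      ∃ c : v.integer, v (c : K) ≠ 0 ∧ v (a : K) = v (c : K) ^ p :=
    fun a ha => key s.card s rfl hs a ha
  have main2 : ∀ γ : Γ₀ˣ, (γ : Γ₀) ≤ 1 → ∃ δ : Γ₀ˣ, δ ^ p = γ := by
    intro γ hγ
    obtain ⟨x, hx⟩ := hsurj γ
    have hx0 : x ≠ 0 := by
      intro h
      rw [h, v.map_zero] at hx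
      exact γ.ne_zero hx.symm
    have hxint : x ∈ v.integer := by
      show v x ≤ 1
      rw [hx]; exact hγ
    obtain ⟨c, hc0, hcv⟩ := main ⟨x, hxint⟩ hx0
    refine ⟨Units.mk0 (v (c : K)) hc0, ?_⟩
    apply Units.ext
    rw [Units.val_pow_eq_pow_val, Units.val_mk0, ← hcv]
    exact hx
  intro γ
  rcases le_or_gt (γ : Γ₀) 1 with h | h
  · exact main2 γ h
  · have h1 : (1 : Γ₀ˣ) < γ := by
      rw [← Units.val_lt_val]
      simpa using h
    have hinv : ((γ⁻¹ : Γ₀ˣ) : Γ₀) ≤ 1 := by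
      rw [← Units.val_one, Units.val_le_val]
      exact (inv_le_one' ).mpr h1.le
    obtain ⟨δ, hδ⟩ := main2 γ⁻¹ hinv
    refine ⟨δ⁻¹, ?_⟩
    rw [inv_pow, hδ, inv_inv]
end

section
/- Every F-finite valuation ring of characteristic p > 0 is Frobenius split: the Frobenius map F: V → V admits a V-linear left inverse. -/
universe u

/-- In a valuation ring, any finite family of elements has a member dividing all others. -/
theorem exists_dvd_all_of_valuationRing {R : Type*} [CommRing R] [IsDomain R] [ValuationRing R]
    {n : ℕ} (c : Fin (n + 1) → R) : ∃ j, ∀ i, c j ∣ c i := by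
  induction n with
  | zero =>
    exact ⟨0, fun i => by rw [Fin.eq_zero i]⟩
  | succ m ih =>
    obtain ⟨j, hj⟩ := ih (fun i => c i.castSucc)
    rcases ValuationRing.dvd_total (c j.castSucc) (c (Fin.last (m + 1))) with h | h
    · refine ⟨j.castSucc, fun i => ?_⟩
      rcases eq_or_ne i (Fin.last (m + 1)) with rfl | hi
      · exact h
      · obtain ⟨k, rfl⟩ := Fin.exists_castSucc_eq.mpr hi
        exact hj k
    · refine ⟨Fin.last (m + 1), fun i => ?_⟩
      rcases eq_or_ne i (Fin.last (m + 1)) with rfl | hi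
      · exact dvd_rfl
      · obtain ⟨k, rfl⟩ := Fin.exists_castSucc_eq.mpr hi
        exact h.trans (hj k)

/-- A finitely generated torsion-free module over a valuation domain is free. -/
theorem ValuationRing.free_of_fg_torsionFree {R : Type*} [CommRing R] [IsDomain R]
    [ValuationRing R] (M : Type*) [AddCommGroup M] [Module R M] [NoZeroSMulDivisors R M] :
    ∀ (n : ℕ) (x : Fin n → M), Submodule.span R (Set.range x) = ⊤ → Module.Free R M := by
  intro n
  induction n with
  | zero =>
    intro x hx
    have : Subsingleton M := by
      constructor
      intro a b
      have ha : a ∈ Submodule.span R (Set.range x) := hx ▸ Submodule.mem_top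
      have hb : b ∈ Submodule.span R (Set.range x) := hx ▸ Submodule.mem_top
      rw [Set.range_eq_empty, Submodule.span_empty] at ha hb
      rw [Submodule.mem_bot] at ha hb
      rw [ha, hb]
    exact Module.Free.of_subsingleton R M
  | succ m ih =>
    intro x hx
    by_cases hli : LinearIndependent R x
    · exact Module.Free.of_basis (Module.Basis.mk hli (by rw [hx]))
    · rw [Fintype.linearIndependent_iff] at hli
      push_neg at hli
      obtain ⟨c, hc, i0, hi0⟩ := hli
      obtain ⟨j, hj⟩ := exists_dvd_all_of_valuationRing c
      have hcj : c j ≠ 0 := by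
        intro h
        apply hi0
        obtain ⟨b, hb⟩ := hj i0
        rw [hb, h, zero_mul]
      choose b hb using hj
      -- from the relation, x j lies in the span of the other x i
      have hrel : c j • (∑ i, b i • x i) = 0 := by
        rw [Finset.smul_sum]
        rw [← hc]
        congr 1
        ext i
        rw [smul_smul, ← hb i]
      have hsum : (∑ i, b i • x i) = 0 := by
        rcases smul_eq_zero.mp hrel with h | h
        · exact absurd h hcj
        · exact h
      have hbj : b j = 1 := by
        have := hb j
        nth_rewrite 1 [← mul_one (c j)] at this
        exact (mul_left_cancel₀ hcj this).symm
      have hxj : x j = -∑ k : Fin m, b (j.succAbove k) • x (j.succAbove k) := by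
        rw [Fin.sum_univ_succAbove (fun i => b i • x i) j, hbj, one_smul] at hsum
        rw [eq_neg_iff_add_eq_zero]
        exact hsum
      exact ih (x ∘ j.succAbove) (by
        rw [eq_top_iff, ← hx]
        apply Submodule.span_le.mpr
        rintro _ ⟨i, rfl⟩
        rcases eq_or_ne i j with rfl | hij
        · rw [hxj]
          apply neg_mem
          apply Submodule.sum_mem
          intro k _
          exact Submodule.smul_mem _ _ (Submodule.subset_span ⟨k, rfl⟩)
        · obtain ⟨k, rfl⟩ := Fin.exists_succAbove_eq hij
          exact Submodule.subset_span ⟨k, rfl⟩)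

theorem fFinite_valuationRing_frobenius_split
    (V : Type u) [CommRing V] [IsDomain V] [ValuationRing V]
    (p : ℕ) [Fact p.Prime] [CharP V p]
    [Module.Finite (frobenius V p).range V] :
    ∃ φ : V →+ V, (∀ a b : V, φ (a ^ p * b) = a * φ b) ∧ φ 1 = 1 := by
  have hp0 : p ≠ 0 := (Fact.out : p.Prime).ne_zero
  set R := (frobenius V p).range with hR
  have hfrob : ∀ r : R, ∃ a : V, a ^ p = (r : V) := by
    rintro ⟨_, a, rfl⟩
    exact ⟨a, rfl⟩
  have hmemR : ∀ d : V, d ^ p ∈ R := fun d => ⟨d, rfl⟩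
  have hsmul : ∀ (r : R) (x : V), r • x = (r : V) * x := fun r x => rfl
  haveI : PreValuationRing R := by
    refine ⟨fun r s => ?_⟩
    obtain ⟨a, ha⟩ := hfrob r
    obtain ⟨b, hb⟩ := hfrob s
    obtain ⟨c, hc⟩ := ValuationRing.cond a b
    refine ⟨⟨c ^ p, hmemR c⟩, ?_⟩
    rcases hc with h | h
    · left
      apply Subtype.ext
      show (r : V) * c ^ p = (s : V)
      rw [← ha, ← hb, ← mul_pow, h]
    · right
      apply Subtype.ext
      show (s : V) * c ^ p = (r : V)
      rw [← ha, ← hb, ← mul_pow, h]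
  haveI : ValuationRing R := ⟨⟩
  set N : Submodule R V := Submodule.span R {1} with hN
  have hmemN : ∀ x : V, x ∈ N ↔ ∃ d : V, d ^ p = x := by
    intro x
    rw [hN, Submodule.mem_span_singleton]
    constructor
    · rintro ⟨r, rfl⟩
      obtain ⟨a, ha⟩ := hfrob r
      exact ⟨a, by rw [hsmul, mul_one, ha]⟩
    · rintro ⟨d, rfl⟩
      exact ⟨⟨d ^ p, hmemR d⟩, by rw [hsmul, mul_one]⟩
  haveI : NoZeroSMulDivisors R (V ⧸ N) := by
    constructor
    intro r q h
    by_cases hr : r = 0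
    · exact Or.inl hr
    right
    obtain ⟨x, rfl⟩ := Submodule.Quotient.mk_surjective N q
    rw [← Submodule.Quotient.mk_smul, Submodule.Quotient.mk_eq_zero] at h
    rw [Submodule.Quotient.mk_eq_zero]
    obtain ⟨a, ha⟩ := hfrob r
    have ha0 : a ≠ 0 := by
      rintro rfl
      apply hr
      apply Subtype.ext
      rw [← ha, zero_pow hp0, ZeroMemClass.coe_zero]
    rw [hsmul, ← ha] at h
    obtain ⟨c, hc⟩ := (hmemN _).mp h
    rw [hmemN]
    obtain ⟨e, he | he⟩ := ValuationRing.cond a c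
    · refine ⟨e, ?_⟩
      have h2 : a ^ p * e ^ p = a ^ p * x := by rw [← mul_pow, he, hc]
      exact mul_left_cancel₀ (pow_ne_zero p ha0) h2
    · by_cases hc0 : c = 0
      · subst hc0
        have hx0 : x = 0 := by
          have h2 : a ^ p * x = 0 := by rw [← hc, zero_pow hp0]
          rcases mul_eq_zero.mp h2 with h3 | h3
          · exact absurd h3 (pow_ne_zero p ha0)
          · exact h3
        exact ⟨0, by rw [hx0, zero_pow hp0]⟩
      · have h1 : e ^ p * x = 1 := by
          have h2 : c ^ p * (e ^ p * x) = c ^ p * 1 := by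
            rw [mul_one, ← mul_assoc, ← mul_pow, he, ← hc]
          exact mul_left_cancel₀ (pow_ne_zero p hc0) h2
        obtain ⟨q, hq⟩ : ∃ q, p = q + 1 :=
          ⟨p - 1, (Nat.succ_pred_eq_of_pos (Fact.out : p.Prime).pos).symm⟩
        refine ⟨e ^ q * x, ?_⟩
        have h2 : (e ^ p * x) ^ q = 1 := by rw [h1, one_pow]
        calc (e ^ q * x) ^ p = (e ^ p * x) ^ q * x := by rw [hq]; ring
        _ = x := by rw [h2, one_mul]
  haveI : Module.Finite R (V ⧸ N) :=
    Module.Finite.of_surjective N.mkQ (Submodule.Quotient.mk_surjective N)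
  obtain ⟨n, g, hg⟩ := Module.Finite.exists_fin (R := R) (M := V ⧸ N)
  haveI : Module.Free R (V ⧸ N) := ValuationRing.free_of_fg_torsionFree (V ⧸ N) n g hg
  obtain ⟨s, hs⟩ := Module.projective_lifting_property N.mkQ LinearMap.id
    (Submodule.Quotient.mk_surjective N)
  set φ₀ : V →ₗ[R] V := LinearMap.id - s ∘ₗ N.mkQ with hφ₀
  have hφ₀apply : ∀ x : V, φ₀ x = x - s (N.mkQ x) := fun x => rfl
  have hmem : ∀ x : V, φ₀ x ∈ N := by
    intro x
    have h1 : N.mkQ (s (N.mkQ x)) = N.mkQ x := by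
      rw [← LinearMap.comp_apply, hs, LinearMap.id_apply]
    have h2 : N.mkQ (φ₀ x) = 0 := by
      rw [hφ₀apply, map_sub, h1, sub_self]
    rwa [Submodule.mkQ_apply, Submodule.Quotient.mk_eq_zero] at h2
  have hmem' : ∀ x : V, φ₀ x ∈ R := by
    intro x
    obtain ⟨d, hd⟩ := (hmemN _).mp (hmem x)
    rw [← hd]
    exact hmemR d
  have hinj : Function.Injective (frobenius V p).rangeRestrict := by
    intro x y h
    exact frobenius_inj V p (congrArg Subtype.val h)
  set e : V ≃+* R := RingEquiv.ofBijective (frobenius V p).rangeRestrict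
    ⟨hinj, (frobenius V p).rangeRestrict_surjective⟩ with he
  have heapp : ∀ a : V, e a = (frobenius V p).rangeRestrict a := fun a => rfl
  refine ⟨{ toFun := fun x => e.symm ⟨φ₀ x, hmem' x⟩
            map_zero' := ?_
            map_add' := ?_ }, ?_, ?_⟩
  · show e.symm ⟨φ₀ 0, hmem' 0⟩ = 0
    have h0 : (⟨φ₀ 0, hmem' 0⟩ : R) = 0 := Subtype.ext (by simp)
    rw [h0, map_zero]
  · intro x y
    show e.symm ⟨φ₀ (x + y), hmem' (x + y)⟩ =
      e.symm ⟨φ₀ x, hmem' x⟩ + e.symm ⟨φ₀ y, hmem' y⟩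
    have h0 : (⟨φ₀ (x + y), hmem' (x + y)⟩ : R) = ⟨φ₀ x, hmem' x⟩ + ⟨φ₀ y, hmem' y⟩ :=
      Subtype.ext (by simp)
    rw [h0, map_add]
  · intro a b
    show e.symm ⟨φ₀ (a ^ p * b), _⟩ = a * e.symm ⟨φ₀ b, hmem' b⟩
    have h1 : φ₀ (a ^ p * b) = a ^ p * φ₀ b := by
      have h2 : a ^ p * b = (⟨a ^ p, hmemR a⟩ : R) • b := by rw [hsmul]
      rw [h2, map_smul, hsmul]
    have h3 : (⟨φ₀ (a ^ p * b), hmem' _⟩ : R) = e a * ⟨φ₀ b, hmem' b⟩ := by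
      apply Subtype.ext
      show φ₀ (a ^ p * b) = frobenius V p a * φ₀ b
      rw [h1, frobenius_def]
    rw [h3, map_mul, RingEquiv.symm_apply_apply]
  · show e.symm ⟨φ₀ 1, hmem' 1⟩ = 1
    have h1 : φ₀ 1 = 1 := by
      have h2 : N.mkQ (1 : V) = 0 := by
        rw [Submodule.mkQ_apply, Submodule.Quotient.mk_eq_zero]
        exact (hmemN 1).mpr ⟨1, one_pow p⟩
      rw [hφ₀apply, h2, map_zero, sub_zero]
    have h3 : (⟨φ₀ 1, hmem' 1⟩ : R) = 1 := by
      apply Subtype.ext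
      show φ₀ 1 = ((1 : R) : V)
      rw [h1, OneMemClass.coe_one]
    rw [h3, map_one]
end

section
/- Every valuation ring is a splinter: any module-finite ring extension V → S admits a V-linear left inverse (retraction). -/
universe u

lemma my_exists_dvd_all {V : Type*} [CommRing V] [IsDomain V] [ValuationRing V] {ι : Type*}
    (c : ι → V) (s : Finset ι) (hs : s.Nonempty) : ∃ i ∈ s, ∀ j ∈ s, c i ∣ c j := by
  classical
  induction s using Finset.cons_induction with
  | empty => exact absurd hs (by simp)
  | cons a s ha ih =>
    rcases s.eq_empty_or_nonempty with rfl | hs'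
    · exact ⟨a, Finset.mem_cons_self _ _, fun j hj => by
        rcases Finset.mem_cons.1 hj with rfl | hj
        · exact dvd_rfl
        · simp at hj⟩
    · obtain ⟨i, hi, hdvd⟩ := ih hs'
      rcases ValuationRing.dvd_total (c a) (c i) with h | h
      · refine ⟨a, Finset.mem_cons_self _ _, fun j hj => ?_⟩
        rcases Finset.mem_cons.1 hj with rfl | hj
        · exact dvd_rfl
        · exact h.trans (hdvd j hj)
      · refine ⟨i, Finset.mem_cons_of_mem hi, fun j hj => ?_⟩
        rcases Finset.mem_cons.1 hj with rfl | hj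
        · exact h
        · exact hdvd j hj

lemma retraction_of_domain (V T : Type u) [CommRing V] [IsDomain V] [ValuationRing V]
    [CommRing T] [IsDomain T] [Algebra V T] [Module.Finite V T]
    (hinj : Function.Injective (algebraMap V T)) :
    ∃ g : T →ₗ[V] V, ∀ v : V, g (algebraMap V T v) = v := by
  classical
  have hint : Algebra.IsIntegral V T := Algebra.IsIntegral.of_finite V T
  have hITop : ∀ I : Ideal V, Ideal.map (algebraMap V T) I = ⊤ → I = ⊤ := by
    intro I hI
    have hker : RingHom.ker (algebraMap V T) ≤ I := by
      rw [(RingHom.injective_iff_ker_eq_bot _).1 hinj]; exact bot_le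
    exact (Ideal.map_eq_top_iff_of_ker_le (algebraMap V T) hker
      (fun t => Algebra.IsIntegral.isIntegral t)).1 hI
  suffices h : ∀ n : ℕ, ∀ x : Fin n → T, (∃ p, x p = 1) →
      Submodule.span V (Set.range x) = ⊤ →
      ∃ g : T →ₗ[V] V, ∀ v : V, g (algebraMap V T v) = v by
    obtain ⟨n, s, hs⟩ := Module.Finite.exists_fin (R := V) (M := T)
    refine h (n+1) (Fin.cons 1 s) ⟨0, Fin.cons_zero _ _⟩ (top_unique ?_)
    rw [← hs]
    exact Submodule.span_mono (by rw [Fin.range_cons]; exact Set.subset_insert _ _)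
  intro n
  induction n with
  | zero => rintro x ⟨p, -⟩ _; exact p.elim0
  | succ m ih =>
    intro x hex hspan
    obtain ⟨p, hp⟩ := hex
    by_cases hli : LinearIndependent V x
    · let b : Module.Basis (Fin (m+1)) V T := Module.Basis.mk hli (by rw [hspan])
      refine ⟨b.coord p, fun v => ?_⟩
      have h1 : algebraMap V T v = v • b p := by
        rw [Module.Basis.mk_apply, hp, Algebra.algebraMap_eq_smul_one]
      rw [h1, map_smul, Module.Basis.coord_apply, Module.Basis.repr_self, smul_eq_mul]
      simp
    · obtain ⟨c, hc, i, hi⟩ := Fintype.not_linearIndependent_iff.1 hli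
      -- find minimal-divisibility nonzero coefficient
      obtain ⟨i0, hi0mem, hi0dvd⟩ := my_exists_dvd_all c
        (Finset.univ.filter fun j => c j ≠ 0) ⟨i, by simpa using hi⟩
      rw [Finset.mem_filter] at hi0mem
      have hi0 : c i0 ≠ 0 := hi0mem.2
      have hdvd : ∀ j, c i0 ∣ c j := by
        intro j
        by_cases hj : c j = 0
        · simp [hj]
        · exact hi0dvd j (by simp [hj])
      choose d hd using hdvd
      have hdi0 : d i0 = 1 := by
        have h := hd i0
        nth_rewrite 1 [← mul_one (c i0)] at h
        exact (mul_left_cancel₀ hi0 h).symm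
      have halg0 : algebraMap V T (c i0) ≠ 0 := by
        intro h
        exact hi0 (hinj (by rw [h, map_zero]))
      have hrel : ∑ j, d j • x j = 0 := by
        have h1 : (algebraMap V T) (c i0) * ∑ j, d j • x j = 0 := by
          rw [Finset.mul_sum]
          calc ∑ j, algebraMap V T (c i0) * (d j • x j)
              = ∑ j, c j • x j := Finset.sum_congr rfl fun j _ => by
                rw [Algebra.smul_def, Algebra.smul_def, ← mul_assoc, ← map_mul, ← hd j]
            _ = 0 := hc
        rcases mul_eq_zero.1 h1 with h | h
        · exact absurd h halg0
        · exact h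
      -- if some unit coefficient at an index j0, x j0 ∈ span of the rest
      have hmem_of : ∀ j0 : Fin (m+1), IsUnit (d j0) →
          x j0 ∈ Submodule.span V (Set.range (x ∘ j0.succAbove)) := by
        intro j0 hu
        have hsum := Fin.sum_univ_succAbove (fun j => d j • x j) j0
        rw [hrel] at hsum
        have h2 : d j0 • x j0 = -∑ i, d (j0.succAbove i) • x (j0.succAbove i) :=
          eq_neg_of_add_eq_zero_left hsum.symm
        obtain ⟨u, hu'⟩ := hu
        have h3 : x j0 = ((u⁻¹ : Vˣ) : V) • (d j0 • x j0) := by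
          rw [smul_smul, ← hu', Units.inv_mul, one_smul]
        rw [h3, h2]
        exact Submodule.smul_mem _ _ (Submodule.neg_mem _ (Submodule.sum_mem _ fun i _ =>
          Submodule.smul_mem _ _ (Submodule.subset_span ⟨i, rfl⟩)))
      -- removal: if x j0 is in the span of the others (j0 ≠ p), conclude by ih
      have hremove : ∀ j0 : Fin (m+1), j0 ≠ p →
          x j0 ∈ Submodule.span V (Set.range (x ∘ j0.succAbove)) →
          ∃ g : T →ₗ[V] V, ∀ v : V, g (algebraMap V T v) = v := by
        intro j0 hj0 hmem
        refine ih (x ∘ j0.succAbove) ?_ (top_unique ?_)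
        · obtain ⟨l, hl⟩ := Fin.exists_succAbove_eq (Ne.symm hj0)
          exact ⟨l, by simp [Function.comp, hl, hp]⟩
        · rw [← hspan]
          apply Submodule.span_le.2
          rintro - ⟨k, rfl⟩
          by_cases hk : k = j0
          · subst hk; exact hmem
          · obtain ⟨l, hl⟩ := Fin.exists_succAbove_eq hk
            exact Submodule.subset_span ⟨l, by simp [Function.comp, hl]⟩
      by_cases hcase : ∃ j, j ≠ p ∧ IsUnit (d j)
      · obtain ⟨j, hj, hu⟩ := hcase
        exact hremove j hj (hmem_of j hu)
      · push_neg at hcase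
        -- then i0 = p and all other coefficients are nonunits
        have hi0p : i0 = p := by
          by_contra h
          exact (hcase i0 h) (hdi0 ▸ isUnit_one)
        exfalso
        have h1mem : (1 : T) ∈ Ideal.map (algebraMap V T) (IsLocalRing.maximalIdeal V) := by
          have hsum := Fin.sum_univ_succAbove (fun j => d j • x j) i0
          rw [hrel] at hsum
          have h2 : x i0 = -∑ i, d (i0.succAbove i) • x (i0.succAbove i) := by
            have := eq_neg_of_add_eq_zero_left hsum.symm
            rwa [hdi0, one_smul] at this
          have h3 : (1 : T) = -∑ i, d (i0.succAbove i) • x (i0.succAbove i) := by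
            rw [← h2, hi0p, hp]
          rw [h3]
          refine neg_mem (Ideal.sum_mem _ fun i _ => ?_)
          rw [Algebra.smul_def]
          refine Ideal.mul_mem_right _ _ (Ideal.mem_map_of_mem _ ?_)
          rw [IsLocalRing.mem_maximalIdeal, mem_nonunits_iff]
          refine hcase _ ?_
          rw [hi0p]
          exact Fin.succAbove_ne p i
        have := hITop _ ((Ideal.eq_top_iff_one _).2 h1mem)
        exact (IsLocalRing.maximalIdeal.isMaximal V).ne_top this

lemma retraction_of_algebra (V S : Type u) [CommRing V] [IsDomain V] [ValuationRing V]
    [CommRing S] [Algebra V S] [Module.Finite V S]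
    (hinj : Function.Injective (algebraMap V S)) :
    ∃ g : S →ₗ[V] V, ∀ v : V, g (algebraMap V S v) = v := by
  have hint : Algebra.IsIntegral V S := Algebra.IsIntegral.of_finite V S
  have hker : (⊥ : Ideal S).comap (algebraMap V S) ≤ (⊥ : Ideal V) := by
    intro v hv
    simp only [Ideal.mem_comap, Ideal.mem_bot] at hv ⊢
    exact hinj (by rw [hv, map_zero])
  haveI : (⊥ : Ideal V).IsPrime := Ideal.bot_prime
  obtain ⟨q, -, hq, hqcomap⟩ :=
    Ideal.exists_ideal_over_prime_of_isIntegral (⊥ : Ideal V) (⊥ : Ideal S) hker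
  haveI := hq
  haveI : Module.Finite V (S ⧸ q) :=
    Module.Finite.of_surjective (Ideal.Quotient.mkₐ V q).toLinearMap
      (Ideal.Quotient.mkₐ_surjective V q)
  have hinj' : Function.Injective (algebraMap V (S ⧸ q)) := by
    rw [injective_iff_map_eq_zero]
    intro v hv
    have : algebraMap V (S ⧸ q) v = Ideal.Quotient.mk q (algebraMap V S v) :=
      ((Ideal.Quotient.mkₐ V q).commutes v).symm
    rw [this, Ideal.Quotient.eq_zero_iff_mem] at hv
    have : v ∈ (⊥ : Ideal V) := hqcomap ▸ Ideal.mem_comap.2 hv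
    simpa using this
  obtain ⟨g, hg⟩ := retraction_of_domain V (S ⧸ q) hinj'
  refine ⟨g.comp (Ideal.Quotient.mkₐ V q).toLinearMap, fun v => ?_⟩
  have : Ideal.Quotient.mk q (algebraMap V S v) = algebraMap V (S ⧸ q) v :=
    (Ideal.Quotient.mkₐ V q).commutes v
  simp only [LinearMap.comp_apply, AlgHom.toLinearMap_apply, Ideal.Quotient.mkₐ_eq_mk]
  rw [this, hg]

theorem valuationRing_is_splinter
    (V : Type u) [CommRing V] [IsDomain V] [ValuationRing V]
    (S : Type u) [CommRing S] (f : V →+* S) (hf : Function.Injective f) :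
    letI : Module V S := f.toModule
    Module.Finite V S → ∃ g : S →ₗ[V] V, ∀ v : V, g (f v) = v := by
  intro hfin
  letI : Algebra V S := f.toAlgebra
  haveI : Module.Finite V S := hfin
  obtain ⟨g, hg⟩ := retraction_of_algebra V S (show Function.Injective (algebraMap V S) from hf)
  exact ⟨g, hg⟩
end

section
/- Every complete discrete valuation ring of prime characteristic p is Frobenius split. -/
universe u

set_option linter.unusedSectionVars false

namespace CDVRFrob

variable {V : Type u} [CommRing V] [IsDomain V] [IsDiscreteValuationRing V]
  {p : ℕ} [Fact p.Prime] [CharP V p] {π : V}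

lemma frobinj {a b : V} (h : a ^ p = b ^ p) : a = b := by
  have := frobenius_inj V p
  exact this (by simpa [frobenius_def] using h)

lemma zero_pow_p : (0 : V) ^ p = 0 := zero_pow (Fact.out : p.Prime).pos.ne'

lemma addpow (a b : V) : (a + b) ^ p = a ^ p + b ^ p := add_pow_char (p := p) a b

lemma subpow (a b : V) : (a - b) ^ p = a ^ p - b ^ p := sub_pow_char (p := p) a b

lemma negpow (a : V) : (-a) ^ p = -(a ^ p) := by
  have h := subpow (p := p) (0 : V) a
  rw [zero_sub, zero_pow ((Fact.out : p.Prime).pos.ne'), zero_sub] at h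
  exact h

open Classical in
/-- junk-total valuation -/
noncomputable def val (π x : V) : ℕ :=
  if h : ∃ (n : ℕ) (u : Vˣ), x = u * π ^ n then h.choose else 0

variable (hπ : Irreducible π)
include hπ

lemma exists_factor {x : V} (hx : x ≠ 0) : ∃ (u : Vˣ), x = u * π ^ (val π x) := by
  classical
  have h : ∃ (n : ℕ) (u : Vˣ), x = u * π ^ n :=
    IsDiscreteValuationRing.eq_unit_mul_pow_irreducible hx hπ
  rw [val]
  rw [dif_pos h]
  exact h.choose_spec

lemma val_spec {x : V} (hx : x ≠ 0) (n : ℕ) : π ^ n ∣ x ↔ n ≤ val π x := by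
  set v := val π x with hv
  obtain ⟨u, hu⟩ := exists_factor hπ hx
  rw [hu, Units.dvd_mul_left]
  exact pow_dvd_pow_iff hπ.ne_zero hπ.not_isUnit

lemma val_unique {x : V} (hx : x ≠ 0) {v : ℕ} (h : ∀ n, π ^ n ∣ x ↔ n ≤ v) :
    val π x = v :=
  le_antisymm ((h _).mp ((val_spec hπ hx _).mpr le_rfl))
    ((val_spec hπ hx _).mp ((h _).mpr le_rfl))

lemma val_one : val π (1 : V) = 0 := by
  apply val_unique hπ one_ne_zero
  intro n
  constructor
  · intro hd
    by_contra hn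
    have : π ∣ 1 := dvd_trans (dvd_pow_self π (by omega)) hd
    exact hπ.not_isUnit (isUnit_of_dvd_one this)
  · intro hn
    simpa [Nat.le_zero.mp hn] using one_dvd (1 : V)

lemma val_dvd {x : V} (hx : x ≠ 0) : π ^ (val π x) ∣ x := (val_spec hπ hx _).mpr le_rfl

lemma dvd_assoc_val {x c : V} (hx : x ≠ 0) : x ∣ c ↔ π ^ (val π x) ∣ c := by
  set v := val π x with hv
  obtain ⟨u, hu⟩ := exists_factor hπ hx
  rw [hu, Units.mul_left_dvd]

lemma val_pow_p {a : V} (ha : a ≠ 0) : val π (a ^ p) = p * val π a := by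
  set va := val π a with hva
  obtain ⟨u, hu⟩ := exists_factor hπ ha
  apply val_unique hπ (pow_ne_zero _ ha)
  intro n
  rw [hu, mul_pow, ← pow_mul, ← Units.val_pow_eq_pow_val, Units.dvd_mul_left,
    mul_comm va p]
  exact pow_dvd_pow_iff hπ.ne_zero hπ.not_isUnit

lemma val_cancel {a t : V} (ha : a ≠ 0) {j : ℕ}
    (h : π ^ (val π a + j) ∣ a * t) : π ^ j ∣ t := by
  set va := val π a with hva
  obtain ⟨u, hu⟩ := exists_factor hπ ha
  rw [hu, mul_assoc, Units.dvd_mul_left, pow_add] at h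
  exact (mul_dvd_mul_iff_left (pow_ne_zero _ hπ.ne_zero)).mp h

lemma pth_root_dvd {c : V} {k : ℕ} (h : π ^ (p * k) ∣ c ^ p) : π ^ k ∣ c := by
  rcases eq_or_ne c 0 with rfl | hc
  · exact dvd_zero _
  · rw [val_spec hπ hc]
    have h2 := (val_spec hπ (pow_ne_zero _ hc) _).mp h
    rw [val_pow_p hπ hc] at h2
    exact le_of_mul_le_mul_left h2 (Fact.out : p.Prime).pos


omit hπ

section Complete
variable [IsAdicComplete (IsLocalRing.maximalIdeal V) V]

lemma mem_pow_iff (hπ : Irreducible π) (n : ℕ) (w : V) :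
    w ∈ (IsLocalRing.maximalIdeal V ^ n • ⊤ : Ideal V) ↔ π ^ n ∣ w := by
  rw [← Ideal.one_eq_top, Ideal.smul_eq_mul, mul_one, hπ.maximalIdeal_eq,
    Ideal.span_singleton_pow, Ideal.mem_span_singleton]

lemma haus (hπ : Irreducible π) {w : V} (h : ∀ n : ℕ, π ^ n ∣ w) : w = 0 := by
  refine IsHausdorff.haus (IsAdicComplete.toIsHausdorff :
    IsHausdorff (IsLocalRing.maximalIdeal V) V) w fun n => ?_
  rw [SModEq.zero, mem_pow_iff hπ]
  exact h n

lemma limit (hπ : Irreducible π) {g : ℕ → V} (hg : ∀ m n : ℕ, m ≤ n → π ^ m ∣ g n - g m) :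
    ∃ L : V, ∀ n : ℕ, π ^ n ∣ L - g n := by
  obtain ⟨L, hL⟩ := IsPrecomplete.prec (IsAdicComplete.toIsPrecomplete :
    IsPrecomplete (IsLocalRing.maximalIdeal V) V) (f := g) (by
      intro m n hmn
      rw [SModEq.sub_mem, mem_pow_iff hπ, ← dvd_neg, neg_sub]
      exact hg m n hmn)
  exact ⟨L, fun n => by
    have h2 := hL n
    rw [SModEq.sub_mem, mem_pow_iff hπ, ← dvd_neg, neg_sub] at h2
    exact h2⟩

end Complete

/-- A partially-defined candidate Frobenius splitting (pre-composed with Frobenius). -/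
structure Partial (V : Type u) [CommRing V] (p : ℕ) (π : V) : Type u where
  A : Set V
  f : V → V
  zero_mem : (0 : V) ∈ A
  one_mem : (1 : V) ∈ A
  add_mem : ∀ {x y : V}, x ∈ A → y ∈ A → x + y ∈ A
  smul_mem : ∀ (a : V) {x : V}, x ∈ A → a ^ p * x ∈ A
  map_add : ∀ {x y : V}, x ∈ A → y ∈ A → f (x + y) = f x + f y
  map_smul : ∀ (a : V) {x : V}, x ∈ A → f (a ^ p * x) = a ^ p * f x
  map_one : f 1 = 1
  pth : ∀ {x : V}, x ∈ A → ∃ c : V, f x = c ^ p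
  contract : ∀ {x : V}, x ∈ A → ∀ n : ℕ, π ^ n ∣ x → π ^ n ∣ f x

namespace Partial

variable (P : Partial V p π)

lemma neg_mem {x : V} (hx : x ∈ P.A) : -x ∈ P.A := by
  have := P.smul_mem (-1) hx
  rwa [negpow, one_pow, neg_one_mul] at this

lemma sub_mem {x y : V} (hx : x ∈ P.A) (hy : y ∈ P.A) : x - y ∈ P.A := by
  rw [sub_eq_add_neg]; exact P.add_mem hx (P.neg_mem hy)

lemma map_zero : P.f 0 = 0 := by
  have := P.map_add P.zero_mem P.zero_mem
  rw [add_zero] at this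
  have h2 := congrArg (fun t => t - P.f 0) this
  simpa using h2.symm

lemma map_neg {x : V} (hx : x ∈ P.A) : P.f (-x) = -P.f x := by
  have := P.map_smul (-1) hx
  rwa [negpow, one_pow, neg_one_mul, neg_one_mul] at this

lemma map_sub {x y : V} (hx : x ∈ P.A) (hy : y ∈ P.A) :
    P.f (x - y) = P.f x - P.f y := by
  rw [sub_eq_add_neg, P.map_add hx (P.neg_mem hy), P.map_neg hy, sub_eq_add_neg]

/-- extension order -/
def le (P Q : Partial V p π) : Prop := P.A ⊆ Q.A ∧ ∀ x ∈ P.A, P.f x = Q.f x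

lemma le_trans {P Q R : Partial V p π} (h1 : le P Q) (h2 : le Q R) : le P R :=
  ⟨h1.1.trans h2.1, fun x hx => (h1.2 x hx).trans (h2.2 x (h1.1 hx))⟩

end Partial

/-- the bottom element: `f = id` on the set of p-th powers -/
noncomputable def bot : Partial V p π where
  A := {w | ∃ a : V, w = a ^ p}
  f := id
  zero_mem := ⟨0, (zero_pow (Fact.out : p.Prime).pos.ne').symm⟩
  one_mem := ⟨1, (one_pow p).symm⟩
  add_mem := by rintro _ _ ⟨a, rfl⟩ ⟨b, rfl⟩; exact ⟨a + b, (addpow a b).symm⟩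
  smul_mem := by rintro a _ ⟨b, rfl⟩; exact ⟨a * b, (mul_pow a b p).symm⟩
  map_add := fun _ _ => rfl
  map_smul := fun _ _ _ => rfl
  map_one := rfl
  pth := fun h => h
  contract := fun _ _ h => h

section Chain

variable {c : Set (Partial V p π)} (hc : IsChain (Partial.le) c)

open Classical in
/-- glued function on the union of a chain -/
noncomputable def glue (c : Set (Partial V p π)) : V → V := fun w =>
  if h : ∃ P : Partial V p π, P ∈ c ∧ w ∈ P.A then h.choose.f w else 0

include hc

lemma glue_eq {P : Partial V p π} (hP : P ∈ c) {w : V} (hw : w ∈ P.A) :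
    glue c w = P.f w := by
  classical
  have h : ∃ Q : Partial V p π, Q ∈ c ∧ w ∈ Q.A := ⟨P, hP, hw⟩
  rw [glue, dif_pos h]
  obtain ⟨hQc, hwQ⟩ := h.choose_spec
  rcases eq_or_ne h.choose P with he | hne
  · rw [he]
  · rcases hc hQc hP hne with hle | hle
    · exact (hle.2 w hwQ).symm ▸ rfl
    · exact (hle.2 w hw).symm

lemma mem_union_iff {w : V} : (w ∈ ⋃ P ∈ c, Partial.A P) ↔ ∃ P, P ∈ c ∧ w ∈ P.A := by
  simp

lemma chain_bound (hne : c.Nonempty) : ∃ U : Partial V p π, ∀ P ∈ c, Partial.le P U := by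
  obtain ⟨P₀, hP₀⟩ := hne
  have hmax : ∀ {x y : V} {P Q : Partial V p π}, P ∈ c → Q ∈ c → x ∈ P.A → y ∈ Q.A →
      ∃ R, R ∈ c ∧ x ∈ R.A ∧ y ∈ R.A := by
    intro x y P Q hP hQ hx hy
    rcases eq_or_ne P Q with rfl | hne
    · exact ⟨P, hP, hx, hy⟩
    · rcases hc hP hQ hne with h | h
      · exact ⟨Q, hQ, h.1 hx, hy⟩
      · exact ⟨P, hP, hx, h.1 hy⟩
  refine ⟨⟨⋃ P ∈ c, Partial.A P, glue c, ?_, ?_, ?_, ?_, ?_, ?_, ?_, ?_, ?_⟩, ?_⟩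
  · exact (mem_union_iff hc).mpr ⟨P₀, hP₀, P₀.zero_mem⟩
  · exact (mem_union_iff hc).mpr ⟨P₀, hP₀, P₀.one_mem⟩
  · intro x y hx hy
    obtain ⟨P, hP, hx⟩ := (mem_union_iff hc).mp hx
    obtain ⟨Q, hQ, hy⟩ := (mem_union_iff hc).mp hy
    obtain ⟨R, hR, hx, hy⟩ := hmax hP hQ hx hy
    exact (mem_union_iff hc).mpr ⟨R, hR, R.add_mem hx hy⟩
  · intro a x hx
    obtain ⟨P, hP, hx⟩ := (mem_union_iff hc).mp hx
    exact (mem_union_iff hc).mpr ⟨P, hP, P.smul_mem a hx⟩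
  · intro x y hx hy
    obtain ⟨P, hP, hx⟩ := (mem_union_iff hc).mp hx
    obtain ⟨Q, hQ, hy⟩ := (mem_union_iff hc).mp hy
    obtain ⟨R, hR, hx, hy⟩ := hmax hP hQ hx hy
    rw [glue_eq hc hR hx, glue_eq hc hR hy, glue_eq hc hR (R.add_mem hx hy)]
    exact R.map_add hx hy
  · intro a x hx
    obtain ⟨P, hP, hx⟩ := (mem_union_iff hc).mp hx
    rw [glue_eq hc hP hx, glue_eq hc hP (P.smul_mem a hx)]
    exact P.map_smul a hx
  · rw [glue_eq hc hP₀ P₀.one_mem]; exact P₀.map_one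
  · intro x hx
    obtain ⟨P, hP, hx⟩ := (mem_union_iff hc).mp hx
    rw [glue_eq hc hP hx]; exact P.pth hx
  · intro x hx n hd
    obtain ⟨P, hP, hx⟩ := (mem_union_iff hc).mp hx
    rw [glue_eq hc hP hx]; exact P.contract hx n hd
  · intro P hP
    exact ⟨fun x hx => (mem_union_iff hc).mpr ⟨P, hP, hx⟩,
      fun x hx => (glue_eq hc hP hx).symm⟩

end Chain

section Key

variable (hπ : Irreducible π) (P : Partial V p π)
include hπ

lemma pvaldvd {a : V} (ha : a ≠ 0) : π ^ (p * val π a) ∣ a ^ p := by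
  have h := val_dvd hπ ha
  calc π ^ (p * val π a) = (π ^ val π a) ^ p := by rw [← pow_mul, mul_comm]
  _ ∣ a ^ p := pow_dvd_pow_of_dvd h p

/-- single-constraint solvability within p-th powers -/
lemma ball {x a z : V} (ha : a ≠ 0) (hz : z ∈ P.A) (hne : a ^ p * x + z ≠ 0) :
    ∃ d : V, π ^ (val π (a ^ p * x + z)) ∣ a ^ p * d ^ p + P.f z := by
  obtain ⟨c, hc⟩ := P.pth hz
  by_cases hdvd : a ∣ c
  · obtain ⟨e, rfl⟩ := hdvd
    refine ⟨-e, ?_⟩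
    have : a ^ p * (-e) ^ p + P.f z = 0 := by
      rw [hc, mul_pow, negpow]; ring
    rw [this]
    exact dvd_zero _
  · refine ⟨0, ?_⟩
    rw [zero_pow (Fact.out : p.Prime).pos.ne', mul_zero, zero_add, hc]
    set r := val π (a ^ p * x + z) with hrdef
    by_cases hle : r ≤ p * val π a
    · have h1 : π ^ r ∣ a ^ p * x :=
        dvd_mul_of_dvd_left (dvd_trans (pow_dvd_pow _ hle) (pvaldvd hπ ha)) x
      have h2 : π ^ r ∣ a ^ p * x + z := val_dvd hπ hne
      have hz' : π ^ r ∣ z := by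
        have := dvd_sub h2 h1
        simpa using this
      have := P.contract hz r hz'
      rwa [hc] at this
    · exfalso
      push_neg at hle
      have h1 : π ^ (p * val π a) ∣ a ^ p * x :=
        dvd_mul_of_dvd_left (pvaldvd hπ ha) x
      have h2 : π ^ (p * val π a) ∣ a ^ p * x + z :=
        dvd_trans (pow_dvd_pow _ hle.le) (val_dvd hπ hne)
      have hz' : π ^ (p * val π a) ∣ z := by
        have := dvd_sub h2 h1
        simpa using this
      have hcp : π ^ (p * val π a) ∣ c ^ p := by
        have := P.contract hz _ hz'
        rwa [hc] at this
      have : π ^ (val π a) ∣ c := pth_root_dvd hπ hcp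
      exact hdvd ((dvd_assoc_val hπ ha).mpr this)

/-- domination: a solution of a constraint with larger shifted value solves smaller ones -/
lemma dominate {x a z b w y : V} (ha : a ≠ 0) (hb : b ≠ 0) (hz : z ∈ P.A) (hw : w ∈ P.A)
    (h1 : a ^ p * x + z ≠ 0) (h2 : b ^ p * x + w ≠ 0)
    (hle : p * val π a + val π (b ^ p * x + w) ≤ p * val π b + val π (a ^ p * x + z))
    (hy : π ^ (val π (a ^ p * x + z)) ∣ a ^ p * y + P.f z) :
    π ^ (val π (b ^ p * x + w)) ∣ b ^ p * y + P.f w := by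
  set r1 := val π (a ^ p * x + z) with hr1
  set r2 := val π (b ^ p * x + w) with hr2
  set m := p * val π a + r2 with hm
  have hmemw : a ^ p * w ∈ P.A := P.smul_mem a hw
  have hmemz : b ^ p * z ∈ P.A := P.smul_mem b hz
  have hDval : π ^ m ∣ a ^ p * w - b ^ p * z := by
    have e : a ^ p * w - b ^ p * z
        = a ^ p * (b ^ p * x + w) - b ^ p * (a ^ p * x + z) := by ring
    rw [e]
    refine dvd_sub ?_ ?_
    · rw [hm, pow_add]
      exact mul_dvd_mul (pvaldvd hπ ha) (val_dvd hπ h2)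
    · refine dvd_trans (pow_dvd_pow _ hle) ?_
      rw [pow_add]
      exact mul_dvd_mul (pvaldvd hπ hb) (val_dvd hπ h1)
  have hD : π ^ m ∣ a ^ p * P.f w - b ^ p * P.f z := by
    have hcon := P.contract (P.sub_mem hmemw hmemz) m hDval
    rwa [P.map_sub hmemw hmemz, P.map_smul a hw, P.map_smul b hz] at hcon
  have hterm : π ^ m ∣ b ^ p * (a ^ p * y + P.f z) := by
    refine dvd_trans (pow_dvd_pow _ hle) ?_
    rw [pow_add]
    exact mul_dvd_mul (pvaldvd hπ hb) hy
  have hsum : π ^ m ∣ a ^ p * (b ^ p * y + P.f w) := by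
    have e : a ^ p * (b ^ p * y + P.f w)
        = b ^ p * (a ^ p * y + P.f z) + (a ^ p * P.f w - b ^ p * P.f z) := by ring
    rw [e]
    exact dvd_add hterm hD
  have hc : π ^ (val π (a ^ p) + r2) ∣ a ^ p * (b ^ p * y + P.f w) := by
    rwa [val_pow_p hπ ha]
  exact val_cancel hπ (pow_ne_zero _ ha) hc

/-- the target property of `y` -/
def Solves (P : Partial V p π) (x y : V) : Prop :=
  (∃ d : V, y = d ^ p) ∧
    ∀ (a z : V), z ∈ P.A → ∀ n : ℕ, π ^ n ∣ a ^ p * x + z → π ^ n ∣ a ^ p * y + P.f z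

lemma key1 {x : V} (h1 : ∃ a : V, a ≠ 0 ∧ a ^ p * x ∈ P.A) :
    ∃ y : V, Solves P x y := by
  obtain ⟨a₀, ha₀, hmem⟩ := h1
  have hd0 : π ^ (p * val π a₀) ∣ P.f (a₀ ^ p * x) :=
    P.contract hmem _ (dvd_mul_of_dvd_left (pvaldvd hπ ha₀) x)
  have hdvd : a₀ ^ p ∣ P.f (a₀ ^ p * x) := by
    rw [dvd_assoc_val hπ (pow_ne_zero _ ha₀), val_pow_p hπ ha₀]
    exact hd0
  obtain ⟨y, hy⟩ := hdvd
  refine ⟨y, ⟨?_, ?_⟩⟩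
  · obtain ⟨c, hc⟩ := P.pth hmem
    rcases eq_or_ne c 0 with rfl | hcne
    · refine ⟨0, ?_⟩
      have h0 : a₀ ^ p * y = 0 := by
        rw [← hy, hc, zero_pow (Fact.out : p.Prime).pos.ne']
      rcases mul_eq_zero.mp h0 with h | h
      · exact absurd h (pow_ne_zero _ ha₀)
      · rw [h, zero_pow (Fact.out : p.Prime).pos.ne']
    · have hcd : π ^ (p * val π a₀) ∣ c ^ p := by rw [← hc]; exact hd0
      have : a₀ ∣ c := (dvd_assoc_val hπ ha₀).mpr (pth_root_dvd hπ hcd)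
      obtain ⟨d, rfl⟩ := this
      refine ⟨d, ?_⟩
      have he : a₀ ^ p * y = a₀ ^ p * d ^ p := by
        rw [← hy, hc, mul_pow]
      exact mul_left_cancel₀ (pow_ne_zero _ ha₀) he
  · intro b z hz n hdn
    have hmem2 : b ^ p * (a₀ ^ p * x) ∈ P.A := P.smul_mem b hmem
    have hmem3 : a₀ ^ p * z ∈ P.A := P.smul_mem a₀ hz
    have e1 : b ^ p * (a₀ ^ p * x) + a₀ ^ p * z = a₀ ^ p * (b ^ p * x + z) := by ring
    have harg : π ^ (p * val π a₀ + n) ∣ b ^ p * (a₀ ^ p * x) + a₀ ^ p * z := by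
      rw [e1, pow_add]
      exact mul_dvd_mul (pvaldvd hπ ha₀) hdn
    have hcon := P.contract (P.add_mem hmem2 hmem3) _ harg
    rw [P.map_add hmem2 hmem3, P.map_smul b hmem, P.map_smul a₀ hz, hy] at hcon
    have e2 : b ^ p * (a₀ ^ p * y) + a₀ ^ p * P.f z = a₀ ^ p * (b ^ p * y + P.f z) := by
      ring
    rw [e2] at hcon
    have hc : π ^ (val π (a₀ ^ p) + n) ∣ a₀ ^ p * (b ^ p * y + P.f z) := by
      rwa [val_pow_p hπ ha₀]
    exact val_cancel hπ (pow_ne_zero _ ha₀) hc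

end Key

section Key2

variable [IsAdicComplete (IsLocalRing.maximalIdeal V) V]
variable (hπ : Irreducible π) (P : Partial V p π)
include hπ

lemma key2 {x : V} (hx : x ∉ P.A) (hJ : ∀ a : V, a ≠ 0 → a ^ p * x ∉ P.A) :
    ∃ y : V, Solves P x y := by
  classical
  have hne0 : ∀ (a z : V), a ≠ 0 → z ∈ P.A → a ^ p * x + z ≠ 0 := by
    intro a z ha hz h0
    exact hJ a ha (by
      have : a ^ p * x = -z := eq_neg_of_add_eq_zero_left h0
      rw [this]; exact P.neg_mem hz)
  set s : V → V → ℤ := fun a z => (val π (a ^ p * x + z) : ℤ) - (p * val π a : ℕ) with hs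
  have hΦ0 : ∃ a z : V, a ≠ 0 ∧ z ∈ P.A ∧ (0 : ℤ) ≤ s a z := by
    refine ⟨1, 0, one_ne_zero, P.zero_mem, ?_⟩
    simp [hs, val_one hπ]
  by_cases hall : ∀ n : ℕ, ∃ a z : V, a ≠ 0 ∧ z ∈ P.A ∧ (n : ℤ) ≤ s a z
  · -- unbounded case
    choose ca cz hca hcz hcs using hall
    set κ : ℕ → V × V := fun n => Nat.rec ((ca 0, cz 0))
      (fun n prev => if s prev.1 prev.2 ≤ s (ca (n+1)) (cz (n+1))
        then (ca (n+1), cz (n+1)) else prev) n with hκdef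
    have hκsucc : ∀ n : ℕ, κ (n+1) = if s (κ n).1 (κ n).2 ≤ s (ca (n+1)) (cz (n+1))
        then (ca (n+1), cz (n+1)) else κ n := fun n => rfl
    have hκ : ∀ n : ℕ, (κ n).1 ≠ 0 ∧ (κ n).2 ∈ P.A ∧ (n : ℤ) ≤ s (κ n).1 (κ n).2 := by
      intro n
      induction n with
      | zero => exact ⟨hca 0, hcz 0, hcs 0⟩
      | succ n ih =>
        rw [hκsucc n]
        by_cases hif : s (κ n).1 (κ n).2 ≤ s (ca (n+1)) (cz (n+1))
        · rw [if_pos hif]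
          exact ⟨hca (n+1), hcz (n+1), hcs (n+1)⟩
        · rw [if_neg hif]
          push_neg at hif
          exact ⟨ih.1, ih.2.1, le_trans (hcs (n+1)) hif.le⟩
    have hκmono : ∀ m n : ℕ, m ≤ n → s (κ m).1 (κ m).2 ≤ s (κ n).1 (κ n).2 := by
      intro m n hmn
      induction n with
      | zero => rw [Nat.le_zero.mp hmn]
      | succ n ih =>
        rcases Nat.lt_or_ge m (n+1) with h | h
        · have hle : s (κ m).1 (κ m).2 ≤ s (κ n).1 (κ n).2 := ih (by omega)
          rw [hκsucc n]
          by_cases hif : s (κ n).1 (κ n).2 ≤ s (ca (n+1)) (cz (n+1))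
          · rw [if_pos hif]; exact le_trans hle hif
          · rw [if_neg hif]; exact hle
        · have he : m = n + 1 := by omega
          rw [he]
    -- the approximating sequence
    have hball : ∀ n : ℕ, ∃ d : V,
        π ^ (val π ((κ n).1 ^ p * x + (κ n).2)) ∣ (κ n).1 ^ p * d ^ p + P.f (κ n).2 :=
      fun n => ball hπ P (hκ n).1 (hκ n).2.1 (hne0 _ _ (hκ n).1 (hκ n).2.1)
    choose dseq hd using hball
    have hcauchy : ∀ m n : ℕ, m ≤ n → π ^ m ∣ (dseq n) ^ p - (dseq m) ^ p := by
      intro m n hmn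
      have hcross : p * val π (κ n).1 + val π ((κ m).1 ^ p * x + (κ m).2)
          ≤ p * val π (κ m).1 + val π ((κ n).1 ^ p * x + (κ n).2) := by
        have h1 := hκmono m n hmn
        rw [hs] at h1
        simp only at h1
        omega
      have hdom := dominate hπ P (hκ n).1 (hκ m).1 (hκ n).2.1 (hκ m).2.1
        (hne0 _ _ (hκ n).1 (hκ n).2.1) (hne0 _ _ (hκ m).1 (hκ m).2.1) hcross (hd n)
      have hdiff : π ^ (val π ((κ m).1 ^ p * x + (κ m).2)) ∣
          (κ m).1 ^ p * ((dseq n) ^ p - (dseq m) ^ p) := by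
        have hsub := dvd_sub hdom (hd m)
        have e : (κ m).1 ^ p * (dseq n) ^ p + P.f (κ m).2
            - ((κ m).1 ^ p * (dseq m) ^ p + P.f (κ m).2)
            = (κ m).1 ^ p * ((dseq n) ^ p - (dseq m) ^ p) := by ring
        rwa [e] at hsub
      have hge : val π ((κ m).1 ^ p) + m ≤ val π ((κ m).1 ^ p * x + (κ m).2) := by
        have h1 := (hκ m).2.2
        rw [hs] at h1
        simp only at h1
        rw [val_pow_p hπ (hκ m).1]
        omega
      exact val_cancel hπ (pow_ne_zero _ (hκ m).1)
        (dvd_trans (pow_dvd_pow _ hge) hdiff)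
    obtain ⟨L, hL⟩ := limit hπ hcauchy
    -- L is a p-th power
    have hdc : ∀ k k' : ℕ, k ≤ k' → π ^ k ∣ dseq (p * k') - dseq (p * k) := by
      intro k k' hk
      have := hcauchy (p * k) (p * k') (Nat.mul_le_mul_left p hk)
      rw [← subpow] at this
      exact pth_root_dvd hπ this
    obtain ⟨E, hE⟩ := limit hπ hdc
    have hple : ∀ k : ℕ, k ≤ p * k := fun k =>
      Nat.le_mul_of_pos_left k (Fact.out : p.Prime).pos
    have hLE : L = E ^ p := by
      have : ∀ k : ℕ, π ^ k ∣ L - E ^ p := by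
        intro k
        have e : L - E ^ p = (L - (dseq (p * k)) ^ p)
            + ((dseq (p * k)) ^ p - E ^ p) := by ring
        rw [e]
        refine dvd_add (dvd_trans (pow_dvd_pow _ (hple k)) (hL (p * k))) ?_
        have h2 : π ^ (p * k) ∣ ((dseq (p * k)) - E) ^ p := by
          have := pow_dvd_pow_of_dvd (dvd_neg.mpr (hE k)) p
          rw [← pow_mul, mul_comm k p, neg_sub] at this
          exact this
        rw [subpow] at h2
        exact dvd_trans (pow_dvd_pow _ (hple k)) h2
      have h0 := haus hπ this
      exact sub_eq_zero.mp h0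
    refine ⟨L, ⟨E, hLE⟩, ?_⟩
    intro b z hz n hdn
    rcases eq_or_ne b 0 with rfl | hb
    · rw [zero_pow (Fact.out : p.Prime).pos.ne', zero_mul, zero_add] at hdn ⊢
      exact P.contract hz n hdn
    · have hne2 := hne0 b z hb hz
      have hnr' : n ≤ val π (b ^ p * x + z) := (val_spec hπ hne2 n).mp hdn
      set r' := val π (b ^ p * x + z) with hr'
      refine dvd_trans (pow_dvd_pow _ hnr') ?_
      have hcross : p * val π (κ r').1 + r' ≤ p * val π b
          + val π ((κ r').1 ^ p * x + (κ r').2) := by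
        have h1 := (hκ r').2.2
        rw [hs] at h1
        simp only at h1
        omega
      have hsat := dominate hπ P (hκ r').1 hb (hκ r').2.1 hz
        (hne0 _ _ (hκ r').1 (hκ r').2.1) hne2 hcross (hd r')
      have e : b ^ p * L + P.f z
          = b ^ p * (L - (dseq r') ^ p) + (b ^ p * (dseq r') ^ p + P.f z) := by ring
      rw [e]
      exact dvd_add (Dvd.dvd.mul_left (hL r') (b ^ p)) hsat
  · -- bounded case
    push_neg at hall
    have hex : ∃ n : ℕ, ∀ a z : V, a ≠ 0 → z ∈ P.A → s a z < (n : ℤ) := hall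
    classical
    set N₀ := Nat.find hex with hN₀def
    have hN₀ : ∀ a z : V, a ≠ 0 → z ∈ P.A → s a z < (N₀ : ℤ) := Nat.find_spec hex
    have hpos : N₀ ≠ 0 := by
      intro h0
      obtain ⟨a, z, ha, hz, h⟩ := hΦ0
      have := hN₀ a z ha hz
      rw [h0] at this
      omega
    have hΦn₀ : ∃ a z : V, a ≠ 0 ∧ z ∈ P.A ∧ ((N₀ - 1 : ℕ) : ℤ) ≤ s a z := by
      by_contra hcon
      push_neg at hcon
      exact Nat.find_min hex (by omega) hcon
    obtain ⟨a₀, z₀, ha₀, hz₀, hs₀⟩ := hΦn₀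
    have hbound : ∀ b w : V, b ≠ 0 → w ∈ P.A → s b w ≤ s a₀ z₀ := by
      intro b w hb hw
      have h1 := hN₀ b w hb hw
      have h2 : ((N₀ - 1 : ℕ) : ℤ) + 1 = (N₀ : ℤ) := by
        have := Nat.pos_of_ne_zero hpos
        push_cast
        omega
      omega
    obtain ⟨d₀, hd₀⟩ := ball hπ P ha₀ hz₀ (hne0 _ _ ha₀ hz₀)
    refine ⟨d₀ ^ p, ⟨d₀, rfl⟩, ?_⟩
    intro b z hz n hdn
    rcases eq_or_ne b 0 with rfl | hb
    · rw [zero_pow (Fact.out : p.Prime).pos.ne', zero_mul, zero_add] at hdn ⊢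
      exact P.contract hz n hdn
    · have hne2 := hne0 b z hb hz
      have hnr' : n ≤ val π (b ^ p * x + z) := (val_spec hπ hne2 n).mp hdn
      refine dvd_trans (pow_dvd_pow _ hnr') ?_
      have hcross : p * val π a₀ + val π (b ^ p * x + z)
          ≤ p * val π b + val π (a₀ ^ p * x + z₀) := by
        have h1 := hbound b z hb hz
        rw [hs] at h1
        simp only at h1
        omega
      exact dominate hπ P ha₀ hb hz₀ hz (hne0 _ _ ha₀ hz₀) hne2 hcross hd₀

end Key2

section Extend

variable [IsAdicComplete (IsLocalRing.maximalIdeal V) V]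
variable (hπ : Irreducible π) (P : Partial V p π)
include hπ

lemma key {x : V} (hx : x ∉ P.A) : ∃ y : V, Solves P x y := by
  by_cases h : ∃ a : V, a ≠ 0 ∧ a ^ p * x ∈ P.A
  · exact key1 hπ P h
  · push_neg at h
    exact key2 hπ P hx h

/-- exact constraints are satisfied exactly -/
lemma solves_exact {x y : V} (hy : Solves P x y) {c z : V} (hz : z ∈ P.A)
    (he : c ^ p * x + z = 0) : c ^ p * y + P.f z = 0 := by
  apply haus hπ
  intro n
  refine hy.2 c z hz n ?_
  rw [he]
  exact dvd_zero _

lemma extend {x : V} (hx : x ∉ P.A) :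
    ∃ Q : Partial V p π, Partial.le P Q ∧ x ∈ Q.A := by
  classical
  obtain ⟨y, hy⟩ := key hπ P hx
  obtain ⟨d, hd⟩ := hy.1
  have hzp : (0 : V) ^ p = (0 : V) := zero_pow (Fact.out : p.Prime).pos.ne'
  -- well-definedness
  have wd : ∀ (a z a' z' : V), z ∈ P.A → z' ∈ P.A →
      a ^ p * x + z = a' ^ p * x + z' → a ^ p * y + P.f z = a' ^ p * y + P.f z' := by
    intro a z a' z' hz hz' he
    have hzz' : z - z' ∈ P.A := P.sub_mem hz hz'
    have he2 : (a - a') ^ p * x + (z - z') = 0 := by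
      rw [subpow]
      have : a ^ p * x + z - (a' ^ p * x + z') = 0 := by rw [he]; ring
      calc (a ^ p - a' ^ p) * x + (z - z')
          = a ^ p * x + z - (a' ^ p * x + z') := by ring
        _ = 0 := this
    have h3 := solves_exact hπ P hy hzz' he2
    rw [subpow, P.map_sub hz hz'] at h3
    have : (a ^ p - a' ^ p) * y + (P.f z - P.f z') = 0 := h3
    have := congrArg (fun t => t + (a' ^ p * y + P.f z')) this
    simp only [zero_add] at this
    calc a ^ p * y + P.f z
        = (a ^ p - a' ^ p) * y + (P.f z - P.f z') + (a' ^ p * y + P.f z') := by ring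
      _ = a' ^ p * y + P.f z' := this
  set A' : Set V := {w | ∃ a z : V, z ∈ P.A ∧ w = a ^ p * x + z} with hA'
  have hmem' : ∀ {z : V}, z ∈ P.A → z ∈ A' := by
    intro z hz
    exact ⟨0, z, hz, by rw [hzp]; ring⟩
  set f' : V → V := fun w =>
    if h : ∃ a z : V, z ∈ P.A ∧ w = a ^ p * x + z
    then h.choose ^ p * y + P.f h.choose_spec.choose else 0 with hf'
  have hf'eq : ∀ (a z : V), z ∈ P.A → f' (a ^ p * x + z) = a ^ p * y + P.f z := by
    intro a z hz
    have h : ∃ a' z' : V, z' ∈ P.A ∧ a ^ p * x + z = a' ^ p * x + z' := ⟨a, z, hz, rfl⟩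
    rw [hf']
    simp only
    rw [dif_pos h]
    exact wd _ _ _ _ h.choose_spec.choose_spec.1 hz h.choose_spec.choose_spec.2.symm
  refine ⟨⟨A', f', ?_, ?_, ?_, ?_, ?_, ?_, ?_, ?_, ?_⟩, ⟨?_, ?_⟩, ?_⟩
  · exact hmem' P.zero_mem
  · exact hmem' P.one_mem
  · rintro _ _ ⟨a, z, hz, rfl⟩ ⟨b, w, hw, rfl⟩
    exact ⟨a + b, z + w, P.add_mem hz hw, by rw [addpow]; ring⟩
  · rintro b _ ⟨a, z, hz, rfl⟩
    exact ⟨b * a, b ^ p * z, P.smul_mem b hz, by rw [mul_pow]; ring⟩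
  · rintro _ _ ⟨a, z, hz, rfl⟩ ⟨b, w, hw, rfl⟩
    have e : a ^ p * x + z + (b ^ p * x + w) = (a + b) ^ p * x + (z + w) := by
      rw [addpow]; ring
    rw [e, hf'eq a z hz, hf'eq b w hw, hf'eq (a + b) (z + w) (P.add_mem hz hw),
      addpow, P.map_add hz hw]
    ring
  · rintro b _ ⟨a, z, hz, rfl⟩
    have e : b ^ p * (a ^ p * x + z) = (b * a) ^ p * x + b ^ p * z := by
      rw [mul_pow]; ring
    rw [e, hf'eq a z hz, hf'eq (b * a) (b ^ p * z) (P.smul_mem b hz),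
      P.map_smul b hz, mul_pow]
    ring
  · have e : (1 : V) = 0 ^ p * x + 1 := by rw [hzp]; ring
    rw [e, hf'eq 0 1 P.one_mem, hzp, P.map_one]
    ring
  · rintro _ ⟨a, z, hz, rfl⟩
    rw [hf'eq a z hz]
    obtain ⟨c, hc⟩ := P.pth hz
    exact ⟨a * d + c, by rw [hc, hd, addpow, mul_pow]⟩
  · rintro _ ⟨a, z, hz, rfl⟩ n hdn
    rw [hf'eq a z hz]
    exact hy.2 a z hz n hdn
  · intro z hz
    exact hmem' hz
  · intro z hz
    have e : z = 0 ^ p * x + z := by rw [hzp]; ring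
    calc P.f z = 0 ^ p * y + P.f z := by rw [hzp]; ring
      _ = f' z := by conv_rhs => rw [e, hf'eq 0 z hz]
  · exact ⟨1, 0, P.zero_mem, by ring⟩

end Extend

section Total

variable [IsAdicComplete (IsLocalRing.maximalIdeal V) V]

lemma exists_total (hπ : Irreducible π) : ∃ M : Partial V p π, ∀ x : V, x ∈ M.A := by
  obtain ⟨M, hM⟩ := exists_maximal_of_chains_bounded
    (r := Partial.le (V := V) (p := p) (π := π))
    (fun c hc => by
      rcases Set.eq_empty_or_nonempty c with rfl | hne
      · exact ⟨bot, fun a ha => absurd ha (Set.notMem_empty a)⟩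
      · exact chain_bound hc hne)
    (fun {a b c} h1 h2 => Partial.le_trans h1 h2)
  refine ⟨M, fun x => ?_⟩
  by_contra hx
  obtain ⟨Q, hPQ, hxQ⟩ := extend hπ M hx
  exact hx ((hM Q hPQ).1 hxQ)

end Total

end CDVRFrob

open CDVRFrob in
theorem complete_dvr_frobenius_split
    (V : Type u) [CommRing V] [IsDomain V] [IsDiscreteValuationRing V]
    (p : ℕ) [Fact p.Prime] [CharP V p]
    [IsAdicComplete (IsLocalRing.maximalIdeal V) V] :
    ∃ φ : V →+ V, (∀ a b : V, φ (a ^ p * b) = a * φ b) ∧ φ 1 = 1 := by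
  obtain ⟨π, hπ⟩ := IsDiscreteValuationRing.exists_irreducible V
  obtain ⟨M, hM⟩ := exists_total (p := p) hπ
  have hpth : ∀ v : V, ∃ c : V, M.f v = c ^ p := fun v => M.pth (hM v)
  choose φ₀ hφ₀ using hpth
  have hadd : ∀ u v : V, φ₀ (u + v) = φ₀ u + φ₀ v := by
    intro u v
    apply frobinj (p := p)
    rw [addpow, ← hφ₀, ← hφ₀, ← hφ₀, M.map_add (hM u) (hM v)]
  refine ⟨AddMonoidHom.mk' φ₀ hadd, ?_, ?_⟩
  · intro a b
    show φ₀ (a ^ p * b) = a * φ₀ b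
    apply frobinj (p := p)
    rw [mul_pow, ← hφ₀, ← hφ₀, M.map_smul a (hM b)]
  · show φ₀ 1 = 1
    apply frobinj (p := p)
    rw [one_pow, ← hφ₀, M.map_one]
end

section
/- Let V be a valuation ring of characteristic p > 0 with fraction field K not perfect, value group Γ with Γ = pΓ, and perfect residue field κ. Then V is not Frobenius split. -/
universe u

theorem not_frobenius_split_of_totally_unramified
    (K : Type u) [Field K] (p : ℕ) [Fact p.Prime] [CharP K p]
    (Γ₀ : Type u) [LinearOrderedCommGroupWithZero Γ₀]
    (v : Valuation K Γ₀) (hsurj : Function.Surjective v)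
    (hKnotperfect : ¬ Function.Surjective (frobenius K p))
    (hdiv : ∀ γ : Γ₀ˣ, ∃ δ : Γ₀ˣ, δ ^ p = γ)
    (hresperfect :
      ∀ x : IsLocalRing.ResidueField v.integer,
        ∃ y : IsLocalRing.ResidueField v.integer, y ^ p = x) :
    ¬ ∃ φ : v.integer →+ v.integer,
        (∀ a b : v.integer, φ (a ^ p * b) = a * φ b) ∧ φ 1 = 1 := by
  rintro ⟨φ, hφ, hφ1⟩
  have hp : p ≠ 0 := (Fact.out : p.Prime).ne_zero
  -- get a non p-th power u₀
  obtain ⟨u₀, hu₀⟩ := not_forall.mp (fun h => hKnotperfect fun b => h b)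
  have hu₀pow : ∀ y : K, y ^ p ≠ u₀ := fun y hy => hu₀ ⟨y, by simpa [frobenius_def] using hy⟩
  have hu₀0 : u₀ ≠ 0 := fun h => hu₀pow 0 (by simp [h, hp])
  -- extract a p-th root of values: for any nonzero x there is c with (v c)^p = v x
  have root : ∀ x : K, x ≠ 0 → ∃ c : K, c ≠ 0 ∧ (v c) ^ p = v x := by
    intro x hx
    have hvx : v x ≠ 0 := by simpa using hx
    obtain ⟨δ, hδ⟩ := hdiv (Units.mk0 (v x) hvx)
    obtain ⟨c, hc⟩ := hsurj (δ : Γ₀)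
    refine ⟨c, ?_, ?_⟩
    · intro h; rw [h, map_zero] at hc; exact δ.ne_zero hc.symm
    · rw [hc, ← Units.val_pow_eq_pow_val, hδ, Units.val_mk0]
  -- normalize to a unit u of the valuation ring
  obtain ⟨c₀, hc₀0, hc₀⟩ := root u₀ hu₀0
  set u : K := u₀ / c₀ ^ p with hu_def
  have hvu : v u = 1 := by
    rw [hu_def, map_div₀, map_pow, hc₀]
    exact div_self (by simpa [hc₀0] using hu₀0)
  have hupow : ∀ y : K, y ^ p ≠ u := by
    intro y hy
    refine hu₀pow (y * c₀) ?_
    rw [mul_pow, hy, hu_def, div_mul_cancel₀]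
    exact pow_ne_zero _ hc₀0
  have hu0 : u ≠ 0 := by intro h; rw [h, map_zero] at hvu; exact zero_ne_one hvu
  have huI : u ∈ v.integer := le_of_eq hvu
  set ub : v.integer := ⟨u, huI⟩ with hub_def
  -- valuation < 1 for non-units of the integer ring
  have hlt_of_residue : ∀ z : v.integer, IsLocalRing.residue v.integer z = 0 → v (z : K) < 1 := by
    intro z hz
    have hmem : z ∈ IsLocalRing.maximalIdeal v.integer :=
      (Ideal.Quotient.eq_zero_iff_mem).mp hz
    have hnu : ¬ IsUnit z := hmem
    have h1 : v (z : K) ≠ 1 := by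
      intro h
      exact hnu ((Valuation.integer.integers v).isUnit_of_one' (by exact h))
    exact lt_of_le_of_ne z.2 h1
  -- key step: values of u - l^p can always be strictly decreased
  have step : ∀ l : v.integer, ∃ l' : v.integer,
      v (u - (l' : K) ^ p) < v (u - (l : K) ^ p) := by
    intro l
    set t : K := u - (l : K) ^ p with ht_def
    have ht0 : t ≠ 0 := by
      intro h
      exact hupow l (by rw [ht_def] at h; linear_combination -h)
    have htI : v t ≤ 1 := Valuation.map_sub_le v huI (by
      rw [map_pow]; exact pow_le_one_iff hp |>.mpr l.2 |>.trans le_rfl)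
    obtain ⟨c, hc0, hc⟩ := root t ht0
    have hvc : v c ≤ 1 := (pow_le_one_iff hp).mp (hc.le.trans htI)
    have hcpne : (c : K) ^ p ≠ 0 := pow_ne_zero _ hc0
    set s : K := t / c ^ p with hs_def
    have hvs : v s = 1 := by
      rw [hs_def, map_div₀, map_pow, hc]
      exact div_self (by simpa using ht0)
    have hsI : s ∈ v.integer := le_of_eq hvs
    -- use perfectness of the residue field
    obtain ⟨yr, hyr⟩ := hresperfect (IsLocalRing.residue v.integer ⟨s, hsI⟩)
    obtain ⟨y, hy⟩ := IsLocalRing.residue_surjective (R := v.integer) yr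
    have hres : IsLocalRing.residue v.integer (⟨s, hsI⟩ - y ^ p) = 0 := by
      rw [map_sub, map_pow, hy, hyr, sub_self]
    have hlt : v (s - (y : K) ^ p) < 1 := by
      have := hlt_of_residue _ hres
      simpa using this
    refine ⟨l + ⟨c, hvc⟩ * y, ?_⟩
    have key : u - ((l : K) + c * (y : K)) ^ p = c ^ p * (s - (y : K) ^ p) := by
      have hcs : c ^ p * s = t := by rw [hs_def]; exact mul_div_cancel₀ _ hcpne
      rw [add_pow_char, mul_sub, hcs, ht_def]
      ring
    have : v (u - ((l + ⟨c, hvc⟩ * y : v.integer) : K) ^ p)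
        = v c ^ p * v (s - (y : K) ^ p) := by
      push_cast
      rw [key, map_mul, map_pow]
    rw [this]
    calc v c ^ p * v (s - (y : K) ^ p) < v c ^ p * 1 :=
          mul_lt_mul_of_pos_left hlt (zero_lt_iff.mpr (by simpa [hc] using ht0))
      _ = v t := by rw [mul_one, hc]
  -- the splitting gives a lower bound on all such values
  set w : v.integer := φ ub with hw_def
  have lower : ∀ l : v.integer, v (u - (w : K) ^ p) ≤ v (u - (l : K) ^ p) := by
    intro l
    set t : K := u - (l : K) ^ p with ht_def
    have ht0 : t ≠ 0 := by
      intro h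
      exact hupow l (by rw [ht_def] at h; linear_combination -h)
    have htI : v t ≤ 1 := Valuation.map_sub_le v huI (by
      rw [map_pow]; exact pow_le_one_iff hp |>.mpr l.2 |>.trans le_rfl)
    obtain ⟨c, hc0, hc⟩ := root t ht0
    have hvc : v c ≤ 1 := (pow_le_one_iff hp).mp (hc.le.trans htI)
    have hcpne : (c : K) ^ p ≠ 0 := pow_ne_zero _ hc0
    set s : K := t / c ^ p with hs_def
    have hvs : v s = 1 := by
      rw [hs_def, map_div₀, map_pow, hc]
      exact div_self (by simpa using ht0)
    have hsI : s ∈ v.integer := le_of_eq hvs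
    set cc : v.integer := ⟨c, hvc⟩ with hcc_def
    set ss : v.integer := ⟨s, hsI⟩ with hss_def
    have hdecomp : ub = l ^ p * 1 + cc ^ p * ss := by
      apply Subtype.ext
      push_cast
      show u = (l : K) ^ p * 1 + c ^ p * s
      rw [hs_def, mul_div_cancel₀ _ hcpne, ht_def]
      ring
    have hφu : (w : K) = (l : K) + c * (φ ss : K) := by
      rw [hw_def, hdecomp, map_add, hφ, hφ, hφ1, mul_one]
      push_cast
      ring
    have key : u - (w : K) ^ p = c ^ p * (s - ((φ ss : K)) ^ p) := by
      rw [hφu, add_pow_char]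
      have hu_eq : u = (l : K) ^ p + c ^ p * s := by
        rw [hs_def, mul_div_cancel₀ _ hcpne, ht_def]; ring
      rw [hu_eq]; ring
    rw [key, map_mul, map_pow, hc]
    have : v (s - ((φ ss : K)) ^ p) ≤ 1 := Valuation.map_sub_le v hsI (by
      rw [map_pow]; exact pow_le_one_iff hp |>.mpr (φ ss).2 |>.trans le_rfl)
    calc v t * v (s - ((φ ss : K)) ^ p) ≤ v t * 1 := mul_le_mul_right this _
      _ = v t := mul_one _
  obtain ⟨l', hl'⟩ := step w
  exact absurd (lower l') (not_le.mpr hl')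
end

section
/- Let V be a valuation ring of characteristic p > 0 whose value group Γ satisfies Γ = pΓ. Then the maximal ideal m of V satisfies m^{[p]} = m, and consequently any Frobenius splitting of V induces a Frobenius splitting of the residue field κ = V/m. -/
universe u

theorem frobenius_power_maximalIdeal_and_induced_residue_splitting
    (K : Type u) [Field K] (p : ℕ) [Fact p.Prime] [CharP K p]
    (Γ₀ : Type u) [LinearOrderedCommGroupWithZero Γ₀]
    (v : Valuation K Γ₀) (hsurj : Function.Surjective v)
    (hdiv : ∀ γ : Γ₀ˣ, ∃ δ : Γ₀ˣ, δ ^ p = γ) :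
    Ideal.map (frobenius v.integer p) (IsLocalRing.maximalIdeal v.integer) =
        IsLocalRing.maximalIdeal v.integer ∧
      ∀ φ : v.integer →+ v.integer,
        (∀ a b : v.integer, φ (a ^ p * b) = a * φ b) → φ 1 = 1 →
          ∃ ψ : IsLocalRing.ResidueField v.integer →+ IsLocalRing.ResidueField v.integer,
            (∀ a b : IsLocalRing.ResidueField v.integer, ψ (a ^ p * b) = a * ψ b) ∧
              ψ 1 = 1 ∧
              ∀ x : v.integer,
                ψ (IsLocalRing.residue v.integer x) = IsLocalRing.residue v.integer (φ x) := by
  have hp : p.Prime := Fact.out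
  set m := IsLocalRing.maximalIdeal v.integer with hm
  -- membership in the maximal ideal ↔ valuation < 1
  have hmem : ∀ x : v.integer, x ∈ m ↔ v (x : K) < 1 := by
    intro x
    constructor
    · intro hx
      rcases lt_or_eq_of_le (x.2 : v (x : K) ≤ 1) with h | h
      · exact h
      · exfalso
        rw [hm, IsLocalRing.mem_maximalIdeal, mem_nonunits_iff] at hx
        exact hx (((Valuation.integer.integers v).isUnit_iff_valuation_eq_one).2 h)
    · intro h
      rw [hm, IsLocalRing.mem_maximalIdeal, mem_nonunits_iff]
      intro hu
      rw [((Valuation.integer.integers v).isUnit_iff_valuation_eq_one)] at hu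
      exact absurd hu (ne_of_lt h)
  -- Part 1 : m^{[p]} = m
  have h1 : Ideal.map (frobenius v.integer p) m = m := by
    apply le_antisymm
    · rw [Ideal.map_le_iff_le_comap]
      intro y hy
      rw [Ideal.mem_comap]
      show frobenius v.integer p y ∈ m
      rw [frobenius_def]
      exact m.pow_mem_of_mem hy p hp.pos
    · intro x hx
      by_cases hx0 : x = 0
      · simp [hx0]
      have hxK : (x : K) ≠ 0 := fun h => hx0 (Subtype.ext h)
      have hvx : v (x : K) ≠ 0 := by simpa using hxK
      obtain ⟨δ, hδ⟩ := hdiv (Units.mk0 (v (x : K)) hvx)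
      have hδp : (δ : Γ₀) ^ p = v (x : K) := by
        rw [← Units.val_pow_eq_pow_val, hδ]; rfl
      have hδ1 : (δ : Γ₀) < 1 := by
        by_contra h
        push_neg at h
        have : (1 : Γ₀) ≤ (δ : Γ₀) ^ p := one_le_pow_of_one_le' h p
        rw [hδp] at this
        exact absurd this (not_le_of_gt ((hmem x).1 hx))
      obtain ⟨yK, hyK⟩ := hsurj (δ : Γ₀)
      have hyK0 : yK ≠ 0 := by
        intro h
        rw [h, map_zero] at hyK
        exact (Units.ne_zero δ) hyK.symm
      set y : v.integer := ⟨yK, le_of_lt (by rw [hyK]; exact hδ1)⟩ with hy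
      have hym : y ∈ m := (hmem y).2 (by rw [hyK]; exact hδ1)
      have hypK : v (yK ^ p) = v (x : K) := by rw [map_pow, hyK, hδp]
      have hyp0 : yK ^ p ≠ 0 := pow_ne_zero p hyK0
      have hu1 : v ((x : K) / yK ^ p) = 1 := by
        rw [map_div₀, hypK, div_self hvx]
      set u : v.integer := ⟨(x : K) / yK ^ p, le_of_eq hu1⟩ with hu
      have hxu : x = u * frobenius v.integer p y := by
        apply Subtype.ext
        show (x : K) = ((x : K) / yK ^ p) * (y ^ p : v.integer)
        push_cast
        rw [div_mul_cancel₀ _ hyp0]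
      rw [hxu]
      exact Ideal.mul_mem_left _ u (Ideal.mem_map_of_mem _ hym)
  refine ⟨h1, ?_⟩
  intro φ hφ hφ1
  -- φ maps m into m
  have hker : ∀ x ∈ m, φ x ∈ m := by
    intro x hx
    rw [← h1] at hx
    have key : ∀ c : v.integer, φ (c * x) ∈ m := by
      have hx' : x ∈ Submodule.span v.integer (⇑(frobenius v.integer p) '' ↑m) := hx
      induction hx' using Submodule.span_induction with
      | mem z hz =>
        intro c
        obtain ⟨w, hwm, rfl⟩ := hz
        rw [show (frobenius v.integer p) w = w ^ p from frobenius_def .., mul_comm, hφ]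
        exact m.mul_mem_right _ hwm
      | zero => intro c; rw [mul_zero, map_zero]; exact m.zero_mem
      | add a b ha hb iha ihb =>
        intro c
        rw [mul_add, map_add]
        exact m.add_mem (iha ha c) (ihb hb c)
      | smul d z hz ihz =>
        intro c
        rw [smul_eq_mul, ← mul_assoc]
        exact ihz hz (c * d)
    simpa using key 1
  -- induced splitting on the residue field
  let g : v.integer →+ IsLocalRing.ResidueField v.integer :=
    (IsLocalRing.residue v.integer).toAddMonoidHom.comp φ
  have hg : ∀ x ∈ m.toAddSubgroup, g x = 0 := fun x hx =>
    Ideal.Quotient.eq_zero_iff_mem.2 (hker x hx)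
  refine ⟨QuotientAddGroup.lift m.toAddSubgroup g (fun x hx => (AddMonoidHom.mem_ker).2 (hg x hx)), ?_, ?_, ?_⟩
  · intro a b
    obtain ⟨x, rfl⟩ := Ideal.Quotient.mk_surjective a
    obtain ⟨y, rfl⟩ := Ideal.Quotient.mk_surjective b
    have : (Ideal.Quotient.mk m x) ^ p * (Ideal.Quotient.mk m y)
        = Ideal.Quotient.mk m (x ^ p * y) := by rw [map_mul, map_pow]
    erw [this]
    show IsLocalRing.residue v.integer (φ (x ^ p * y))
        = _ * IsLocalRing.residue v.integer (φ y)
    rw [hφ, map_mul]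
    rfl
  · show IsLocalRing.residue v.integer (φ 1) = 1
    rw [hφ1, map_one]
  · intro x; rfl
end

section
/- Let V be a valuation ring of a field K of characteristic p > 0 with principal maximal ideal generated by an element of value γ, residue field κ, and value group Γ. If [Γ:pΓ] = p and [Γ:pΓ]·[κ:κ^p] = [K:K^p] < ∞, then V is F-finite. -/
universe u

open IsLocalRing

theorem val_sum_aux {K : Type*} {Γ₀ : Type*} [Field K] [LinearOrderedCommGroupWithZero Γ₀]
    (v : Valuation K Γ₀) {ι : Type*} (s : Finset ι) (a : ι → K)
    (hdist : ∀ i ∈ s, ∀ j ∈ s, i ≠ j → a i ≠ 0 → a j ≠ 0 → v (a i) ≠ v (a j)) :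
    (∀ i ∈ s, v (a i) ≤ v (∑ j ∈ s, a j)) ∧
      (v (∑ j ∈ s, a j) = 0 ∨ ∃ i ∈ s, v (∑ j ∈ s, a j) = v (a i)) := by
  classical
  revert hdist
  induction s using Finset.induction_on with
  | empty => intro _; exact ⟨fun i hi => absurd hi (Finset.notMem_empty i), Or.inl (by simp)⟩
  | @insert i s his ih =>
    intro hdist
    obtain ⟨h1, h2⟩ := ih (fun i' hi' j hj => hdist i' (Finset.mem_insert_of_mem hi') j
      (Finset.mem_insert_of_mem hj))
    rw [Finset.sum_insert his]
    by_cases h0 : a i = 0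
    · rw [h0, zero_add]
      refine ⟨fun j hj => ?_, ?_⟩
      · rcases Finset.mem_insert.mp hj with rfl | hj
        · simp [h0]
        · exact h1 j hj
      · rcases h2 with h | ⟨j, hj, hje⟩
        · exact Or.inl h
        · exact Or.inr ⟨j, Finset.mem_insert_of_mem hj, hje⟩
    · by_cases hne : v (a i) = v (∑ j ∈ s, a j)
      · exfalso
        rcases h2 with h | ⟨j, hj, hje⟩
        · exact h0 (v.zero_iff.mp (hne.trans h))
        · have haj : a j ≠ 0 := by
            intro hz
            rw [hz, map_zero] at hje
            exact h0 (v.zero_iff.mp (hne.trans hje))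
          have hij : i ≠ j := by rintro rfl; exact his hj
          exact hdist i (Finset.mem_insert_self i s) j (Finset.mem_insert_of_mem hj) hij h0 haj
            (hne.trans hje)
      · rw [v.map_add_of_distinct_val hne]
        refine ⟨fun j hj => ?_, ?_⟩
        · rcases Finset.mem_insert.mp hj with rfl | hj
          · exact le_max_left _ _
          · exact le_trans (h1 j hj) (le_max_right _ _)
        · rcases max_cases (v (a i)) (v (∑ j ∈ s, a j)) with ⟨hm, _⟩ | ⟨hm, _⟩
          · exact Or.inr ⟨i, Finset.mem_insert_self i s, hm⟩
          · rw [hm]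
            rcases h2 with h | ⟨j, hj, hje⟩
            · exact Or.inl h
            · exact Or.inr ⟨j, Finset.mem_insert_of_mem hj, hje⟩

theorem mem_pthPowerSubfield {K : Type u} [Field K] (p : ℕ) [Fact p.Prime] [CharP K p]
    (x : K) : x ^ p ∈ pthPowerSubfield K p :=
  show x ^ p ∈ (frobenius K p).fieldRange from RingHom.mem_fieldRange.mpr ⟨x, frobenius_def p x⟩

theorem exists_pthRoot {K : Type u} [Field K] (p : ℕ) [Fact p.Prime] [CharP K p]
    (y : pthPowerSubfield K p) : ∃ x : K, x ^ p = (y : K) := by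
  obtain ⟨x, hx⟩ := RingHom.mem_fieldRange.mp y.2
  exact ⟨x, by rw [← frobenius_def p x]; exact hx⟩

theorem subfield_smul_def {K : Type u} [Field K] (S : Subfield K) (x : S) (y : K) :
    x • y = (x : K) * y := rfl

theorem residue_charP (V : Type u) [CommRing V] [IsLocalRing V]
    (p : ℕ) [Fact p.Prime] [CharP V p] :
    CharP (ResidueField V) p := by
  refine CharP.quotient' p _ (fun x hx => ?_)
  by_contra hx0
  have hdvd : ¬ (p ∣ x) := fun h => hx0 ((CharP.cast_eq_zero_iff V p x).mpr h)
  have hcop : IsCoprime (p : ℤ) (x : ℤ) := by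
    rw [Int.isCoprime_iff_gcd_eq_one]
    simpa using (Nat.Prime.coprime_iff_not_dvd Fact.out).mpr hdvd
  obtain ⟨a, b, hab⟩ := hcop
  have h1 : ((a * p + b * x : ℤ) : V) = 1 := by exact_mod_cast congrArg (fun n : ℤ => (n : V)) hab
  have hunit : IsUnit ((x : ℤ) : V) := by
    refine IsUnit.of_mul_eq_one ((b : ℤ) : V) ?_
    push_cast at h1 ⊢
    rw [CharP.cast_eq_zero V p] at h1
    ring_nf at h1 ⊢
    linear_combination h1
  rw [Int.cast_natCast] at hunit
  exact (IsLocalRing.mem_maximalIdeal _).mp hx hunit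

set_option maxHeartbeats 1000000 in
theorem fFinite_of_principal_maximalIdeal_of_defectless
    (K : Type u) [Field K] (p : ℕ) [Fact p.Prime] [CharP K p]
    (Γ₀ : Type u) [LinearOrderedCommGroupWithZero Γ₀]
    (v : Valuation K Γ₀) (hsurj : Function.Surjective v)
    (hm : (IsLocalRing.maximalIdeal v.integer).IsPrincipal)
    [FiniteDimensional (pthPowerSubfield K p) K]
    (hindex : ((powMonoidHom p : Γ₀ˣ →* Γ₀ˣ)).range.index = p)
    (hdefectless :
      letI : CharP (ResidueField v.integer) p := residue_charP v.integer p
      ((powMonoidHom p : Γ₀ˣ →* Γ₀ˣ)).range.index *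
          Module.finrank (pthPowerSubfield (ResidueField v.integer) p)
            (ResidueField v.integer) =
        Module.finrank (pthPowerSubfield K p) K) :
    Module.Finite (frobenius v.integer p).range v.integer := by
  classical
  have pprime : p.Prime := Fact.out
  have hp1 : 1 < p := pprime.one_lt
  have hp0 : p ≠ 0 := pprime.ne_zero
  have hv : v.Integers v.integer := Valuation.integer.integers v
  -- membership in the maximal ideal
  have hmem_max : ∀ x : v.integer, x ∈ maximalIdeal v.integer ↔ v (x : K) < 1 := by
    intro x
    rw [IsLocalRing.mem_maximalIdeal, mem_nonunits_iff, hv.isUnit_iff_valuation_eq_one]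
    constructor
    · intro h
      exact lt_of_le_of_ne ((v.mem_integer_iff _).mp x.2) h
    · exact ne_of_lt
  -- a nontrivial element of the value group
  have hHne : ((powMonoidHom p : Γ₀ˣ →* Γ₀ˣ)).range ≠ ⊤ := by
    intro h
    rw [h, Subgroup.index_top] at hindex
    omega
  have hex_lt : ∃ g : Γ₀ˣ, g < 1 := by
    have hex : ∃ g : Γ₀ˣ, g ≠ 1 := by
      by_contra h
      push_neg at h
      apply hHne
      rw [eq_top_iff]
      intro g _
      rw [h g]
      exact one_mem _
    obtain ⟨g, hg⟩ := hex
    rcases lt_or_gt_of_ne hg with h | h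
    · exact ⟨g, h⟩
    · exact ⟨g⁻¹, by rwa [inv_lt_one']⟩
  -- the generator of the maximal ideal
  obtain ⟨t, ht⟩ := hm.principal
  have htmem : t ∈ maximalIdeal v.integer := ht ▸ Submodule.mem_span_singleton_self t
  have hvt_lt : v (t : K) < 1 := (hmem_max t).mp htmem
  have htK_ne : (t : K) ≠ 0 := by
    intro h0
    obtain ⟨g, hg⟩ := hex_lt
    obtain ⟨x, hx⟩ := hsurj g
    have hxR : x ∈ v.integer := by
      rw [v.mem_integer_iff, hx]
      exact le_of_lt (by exact_mod_cast hg)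
    have hxmem : (⟨x, hxR⟩ : v.integer) ∈ maximalIdeal v.integer := by
      rw [hmem_max]
      show v x < 1
      rw [hx]
      exact_mod_cast hg
    rw [ht, Submodule.mem_span_singleton] at hxmem
    obtain ⟨y, hy⟩ := hxmem
    have : x = 0 := by
      have := congrArg (fun z : v.integer => (z : K)) hy
      simpa [h0] using this.symm
    rw [this, map_zero] at hx
    exact g.ne_zero hx.symm
  have hvtne : v (t : K) ≠ 0 := by rwa [v.ne_zero_iff]
  -- maximality of v t among values < 1
  have hmax : ∀ x : v.integer, v (x : K) < 1 → v (x : K) ≤ v (t : K) := by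
    intro x hx
    have hxm : x ∈ maximalIdeal v.integer := (hmem_max x).mpr hx
    rw [ht, Submodule.mem_span_singleton] at hxm
    obtain ⟨y, hy⟩ := hxm
    rw [← hy]
    have : ((y • t : v.integer) : K) = (y : K) * (t : K) := rfl
    rw [this, v.map_mul]
    calc v (y : K) * v (t : K) ≤ 1 * v (t : K) :=
          mul_le_mul_left ((v.mem_integer_iff _).mp y.2) _
    _ = v (t : K) := one_mul _
  -- γ as a unit
  set γ : Γ₀ˣ := Units.mk0 (v (t : K)) hvtne with hγdef
  have hγ_lt : γ < 1 := by
    rw [← Units.val_lt_val]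
    exact hvt_lt
  -- γ is not a p-th power
  have hγH : γ ∉ ((powMonoidHom p : Γ₀ˣ →* Γ₀ˣ)).range := by
    rintro ⟨δ, hδ⟩
    rw [powMonoidHom_apply] at hδ
    have hδlt : δ < 1 := by
      by_contra h
      push_neg at h
      have h2 : (1 : Γ₀ˣ) ≤ δ ^ p := one_le_pow_of_one_le' h p
      rw [hδ] at h2
      exact absurd hγ_lt (not_lt.mpr h2)
    obtain ⟨s, hs⟩ := hsurj (δ : Γ₀)
    have hsR : s ∈ v.integer := by
      rw [v.mem_integer_iff, hs]
      exact le_of_lt (by exact_mod_cast hδlt)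
    have hsle : v s ≤ v (t : K) := hmax ⟨s, hsR⟩ (by rw [hs]; exact_mod_cast hδlt)
    have hδγ : δ ≤ γ := by
      rw [← Units.val_le_val]
      rw [hs] at hsle
      exact hsle
    have : γ < γ := by
      calc γ = δ ^ p := hδ.symm
      _ ≤ γ ^ p := pow_le_pow_left' hδγ p
      _ = γ ^ (p - 1) * γ := by rw [← pow_succ]; congr 1; omega
      _ < 1 * γ := mul_lt_mul_left (pow_lt_one' hγ_lt (by omega)) γ
      _ = γ := one_mul γ
    exact lt_irrefl _ this
  -- the quotient group and the order of γ
  have horder : orderOf (QuotientGroup.mk γ :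
      Γ₀ˣ ⧸ ((powMonoidHom p : Γ₀ˣ →* Γ₀ˣ)).range) = p := by
    have hcard : Nat.card (Γ₀ˣ ⧸ ((powMonoidHom p : Γ₀ˣ →* Γ₀ˣ)).range) = p := hindex
    have hdvd : orderOf (QuotientGroup.mk γ :
        Γ₀ˣ ⧸ ((powMonoidHom p : Γ₀ˣ →* Γ₀ˣ)).range) ∣ p := by
      have h' := orderOf_dvd_natCard (QuotientGroup.mk γ :
        Γ₀ˣ ⧸ ((powMonoidHom p : Γ₀ˣ →* Γ₀ˣ)).range)
      rwa [hcard] at h'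
    rcases (Nat.Prime.eq_one_or_self_of_dvd pprime _ hdvd) with h | h
    · exfalso
      rw [orderOf_eq_one_iff, QuotientGroup.eq_one_iff] at h
      exact hγH h
    · exact h
  -- residue field setup
  letI : CharP (ResidueField v.integer) p := residue_charP v.integer p
  set κ := ResidueField v.integer with hκdef
  set f := Module.finrank (pthPowerSubfield κ p) κ with hfdef
  have hpf : p * f = Module.finrank (pthPowerSubfield K p) K := by
    have h' := hdefectless
    rwa [hindex] at h'
  have hK1 : 0 < Module.finrank (pthPowerSubfield K p) K := Module.finrank_pos
  have hf_pos : 0 < f := by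
    by_contra h
    push_neg at h
    interval_cases f
    · omega
  haveI : FiniteDimensional (pthPowerSubfield κ p) κ := Module.finite_of_finrank_pos hf_pos
  let b : Module.Basis (Fin f) (pthPowerSubfield κ p) κ := Module.finBasis _ _
  -- lifts of the basis
  have hres : Function.Surjective (IsLocalRing.residue v.integer) := Ideal.Quotient.mk_surjective
  choose u hu using fun j : Fin f => hres (b j)
  have hu1 : ∀ j, v ((u j : v.integer) : K) = 1 := by
    intro j
    have hnm : u j ∉ maximalIdeal v.integer := by
      intro hmem
      have h0 : IsLocalRing.residue v.integer (u j) = 0 :=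
        Ideal.Quotient.eq_zero_iff_mem.mpr hmem
      rw [hu j] at h0
      exact b.ne_zero j h0
    rw [hmem_max] at hnm
    exact le_antisymm ((v.mem_integer_iff _).mp (u j).2) (not_lt.mp hnm)
  -- per-row lemma
  have hrowK : ∀ c : Fin f → K, ∀ j0 : Fin f, (∀ j, v (c j) ≤ v (c j0)) →
      v (∑ j, (c j) ^ p * ((u j : v.integer) : K)) = v (c j0) ^ p := by
    intro c j0 hmx
    by_cases h0 : c j0 = 0
    · have hall : ∀ j, c j = 0 := by
        intro j
        have h' := hmx j
        rw [h0, map_zero, le_zero_iff] at h'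
        exact v.zero_iff.mp h'
      simp [hall, h0, zero_pow hp0]
    · have hcj0 : v (c j0) ≠ 0 := fun h => h0 (v.zero_iff.mp h)
      have hd : ∀ j, c j / c j0 ∈ v.integer := by
        intro j
        rw [v.mem_integer_iff, map_div₀]
        exact (div_le_one₀ (zero_lt_iff.mpr hcj0)).mpr (hmx j)
      set d : Fin f → v.integer := fun j => ⟨c j / c j0, hd j⟩ with hddef
      set w : v.integer := ∑ j, (d j) ^ p * u j with hwdef
      have hw1 : v (w : K) = 1 := by
        rcases lt_or_eq_of_le ((v.mem_integer_iff _).mp w.2) with hlt | heq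
        · exfalso
          have hres0 : IsLocalRing.residue v.integer w = 0 :=
            Ideal.Quotient.eq_zero_iff_mem.mpr ((hmem_max w).mpr hlt)
          have hexp : ∑ j, ((IsLocalRing.residue v.integer (d j)) ^ p) * b j = 0 := by
            rw [← hres0, hwdef, map_sum]
            refine Finset.sum_congr rfl fun j _ => ?_
            rw [map_mul, map_pow, hu j]
          have hexp' : ∑ j, ((⟨(IsLocalRing.residue v.integer (d j)) ^ p,
              mem_pthPowerSubfield p _⟩ : pthPowerSubfield κ p) • b j) = 0 := by
            rw [← hexp]
            exact Finset.sum_congr rfl fun j _ => subfield_smul_def _ _ _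
          have hz := Fintype.linearIndependent_iff.mp b.linearIndependent _ hexp' j0
          have hz1 : IsLocalRing.residue v.integer (d j0) = 0 := by
            have h' := Subtype.ext_iff.mp hz
            simp only [ZeroMemClass.coe_zero] at h'
            exact pow_eq_zero_iff hp0 |>.mp h'
          have hd1 : d j0 = 1 := Subtype.ext (div_self h0)
          rw [hd1, map_one] at hz1
          exact one_ne_zero hz1
        · exact heq
      have hwK : (w : K) = ∑ j, (c j / c j0) ^ p * ((u j : v.integer) : K) := by
        rw [hwdef]
        push_cast
        rfl
      have hfactor : (∑ j, (c j) ^ p * ((u j : v.integer) : K)) = (c j0) ^ p * (w : K) := by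
        rw [hwK, Finset.mul_sum]
        refine Finset.sum_congr rfl fun j _ => ?_
        rw [div_pow, ← mul_assoc, mul_div_cancel₀]
        exact pow_ne_zero p h0
      rw [hfactor, v.map_mul, v.map_pow, hw1, mul_one]
  -- the main valuation estimate
  have hMAIN : ∀ c : Fin p × Fin f → K, ∀ ij : Fin p × Fin f,
      v ((c ij) ^ p * (t : K) ^ (ij.1 : ℕ) * ((u ij.2 : v.integer) : K)) ≤
        v (∑ x : Fin p × Fin f, (c x) ^ p * (t : K) ^ (x.1 : ℕ) * ((u x.2 : v.integer) : K)) := by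
    intro c ij
    have hjm : ∀ i : Fin p, ∃ j0 : Fin f, ∀ j, v (c (i, j)) ≤ v (c (i, j0)) := by
      intro i
      obtain ⟨j0, -, hj0⟩ := Finset.exists_max_image (Finset.univ : Finset (Fin f))
        (fun j => v (c (i, j))) ⟨⟨0, hf_pos⟩, Finset.mem_univ _⟩
      exact ⟨j0, fun j => hj0 j (Finset.mem_univ j)⟩
    choose jm hjm' using hjm
    set a : Fin p → K :=
      fun i => (∑ j, (c (i, j)) ^ p * ((u j : v.integer) : K)) * (t : K) ^ (i : ℕ) with hadef
    have hva : ∀ i : Fin p, v (a i) = v (c (i, jm i)) ^ p * v (t : K) ^ (i : ℕ) := by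
      intro i
      rw [hadef]
      rw [v.map_mul, v.map_pow, hrowK _ _ (hjm' i)]
    have hsum2 : (∑ x : Fin p × Fin f, (c x) ^ p * (t : K) ^ (x.1 : ℕ) * ((u x.2 : v.integer) : K))
        = ∑ i : Fin p, a i := by
      rw [Fintype.sum_prod_type]
      refine Finset.sum_congr rfl fun i _ => ?_
      show _ = (∑ j : Fin f, c (i, j) ^ p * ((u j : v.integer) : K)) * (t : K) ^ (i : ℕ)
      rw [Finset.sum_mul]
      refine Finset.sum_congr rfl fun j _ => ?_
      ring
    have hane : ∀ i : Fin p, a i ≠ 0 → v (c (i, jm i)) ≠ 0 := by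
      intro i hai h0
      apply hai
      have h' := hva i
      rw [h0, zero_pow hp0, zero_mul] at h'
      exact v.zero_iff.mp h'
    have hdist : ∀ i ∈ (Finset.univ : Finset (Fin p)), ∀ i' ∈ (Finset.univ : Finset (Fin p)),
        i ≠ i' → a i ≠ 0 → a i' ≠ 0 → v (a i) ≠ v (a i') := by
      intro i _ i' _ hne hai hai' hveq
      rw [hva i, hva i'] at hveq
      set α : Γ₀ˣ := Units.mk0 (v (c (i, jm i))) (hane i hai) with hαdef
      set α' : Γ₀ˣ := Units.mk0 (v (c (i', jm i'))) (hane i' hai') with hα'def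
      have hueq : α ^ p * γ ^ (i : ℕ) = α' ^ p * γ ^ (i' : ℕ) := by
        apply Units.ext
        push_cast
        exact hveq
      have h4 : α' ^ p = α ^ p * γ ^ (i : ℕ) * (γ ^ (i' : ℕ))⁻¹ := by
        rw [hueq, mul_assoc, mul_inv_cancel, mul_one]
      have hcoset : (QuotientGroup.mk (γ ^ (i' : ℕ)) :
          Γ₀ˣ ⧸ ((powMonoidHom p : Γ₀ˣ →* Γ₀ˣ)).range) = QuotientGroup.mk (γ ^ (i : ℕ)) := by
        rw [QuotientGroup.eq]
        refine ⟨α⁻¹ * α', ?_⟩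
        rw [powMonoidHom_apply, mul_pow, inv_pow, h4, ← mul_assoc, ← mul_assoc,
          inv_mul_cancel, one_mul, mul_comm]
      rw [QuotientGroup.mk_pow, QuotientGroup.mk_pow] at hcoset
      have hii : (i' : ℕ) = (i : ℕ) :=
        pow_injOn_Iio_orderOf (by rw [horder]; exact i'.isLt) (by rw [horder]; exact i.isLt) hcoset
      exact hne (Fin.ext hii.symm)
    obtain ⟨hbound, -⟩ := val_sum_aux v Finset.univ a hdist
    rw [hsum2]
    calc v ((c ij) ^ p * (t : K) ^ (ij.1 : ℕ) * ((u ij.2 : v.integer) : K))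
        ≤ v (a ij.1) := by
          rw [v.map_mul, v.map_mul, v.map_pow, v.map_pow, hva ij.1, hu1 ij.2, mul_one]
          exact mul_le_mul_left (pow_le_pow_left' (hjm' ij.1 ij.2) p) _
    _ ≤ v (∑ i : Fin p, a i) := hbound ij.1 (Finset.mem_univ _)
  -- nonvanishing of the lifts
  have huKne : ∀ j : Fin f, ((u j : v.integer) : K) ≠ 0 := fun j =>
    v.ne_zero_iff.mp (by rw [hu1 j]; exact one_ne_zero)
  -- linear independence over the subfield of p-th powers
  have hLI : LinearIndependent (pthPowerSubfield K p)
      (fun ij : Fin p × Fin f => (t : K) ^ (ij.1 : ℕ) * ((u ij.2 : v.integer) : K)) := by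
    rw [Fintype.linearIndependent_iff]
    intro g hg ij
    choose c hc using fun x => exists_pthRoot p (g x)
    have hg' : (∑ x : Fin p × Fin f,
        (c x) ^ p * (t : K) ^ (x.1 : ℕ) * ((u x.2 : v.integer) : K)) = 0 := by
      rw [← hg]
      refine Finset.sum_congr rfl fun x _ => ?_
      rw [subfield_smul_def, ← hc x]
      ring
    have hterm := hMAIN c ij
    rw [hg', map_zero, le_zero_iff, v.zero_iff] at hterm
    have hc0 : c ij = 0 := by
      rcases mul_eq_zero.mp hterm with h | h
      · rcases mul_eq_zero.mp h with h' | h'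
        · exact pow_eq_zero_iff hp0 |>.mp h'
        · exact absurd h' (pow_ne_zero _ htK_ne)
      · exact absurd h (huKne ij.2)
    apply Subtype.ext
    show (g ij : K) = 0
    rw [← hc ij, hc0, zero_pow hp0]
  haveI : Nonempty (Fin p × Fin f) := ⟨(⟨0, by omega⟩, ⟨0, hf_pos⟩)⟩
  have hcard : Fintype.card (Fin p × Fin f) = Module.finrank (pthPowerSubfield K p) K := by
    rw [Fintype.card_prod, Fintype.card_fin, Fintype.card_fin, hpf]
  have hspan := hLI.span_eq_top_of_card_eq_finrank hcard
  -- conclusion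
  refine ⟨⟨Finset.image (fun ij : Fin p × Fin f => t ^ (ij.1 : ℕ) * u ij.2) Finset.univ, ?_⟩⟩
  rw [eq_top_iff]
  intro x _
  have hxK : (x : K) ∈ Submodule.span (pthPowerSubfield K p)
      (Set.range fun ij : Fin p × Fin f => (t : K) ^ (ij.1 : ℕ) * ((u ij.2 : v.integer) : K)) := by
    rw [hspan]; exact Submodule.mem_top
  obtain ⟨g, hg⟩ := (Submodule.mem_span_range_iff_exists_fun _).mp hxK
  choose c hc using fun ij => exists_pthRoot p (g ij)
  have heq : (∑ ij : Fin p × Fin f,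
      (c ij) ^ p * (t : K) ^ (ij.1 : ℕ) * ((u ij.2 : v.integer) : K)) = (x : K) := by
    rw [← hg]
    refine Finset.sum_congr rfl fun ij _ => ?_
    rw [subfield_smul_def, ← hc ij]
    ring
  have hcle : ∀ ij : Fin p × Fin f, v (c ij) ≤ 1 := by
    intro ij
    by_cases hc0 : c ij = 0
    · rw [hc0, map_zero]; exact zero_le'
    · by_contra hgt
      push_neg at hgt
      have h1 : v ((c ij) ^ p * (t : K) ^ (ij.1 : ℕ) * ((u ij.2 : v.integer) : K)) ≤ 1 := by
        refine le_trans (hMAIN c ij) ?_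
        rw [heq]
        exact (v.mem_integer_iff _).mp x.2
      have hvc : v (c ij) ≠ 0 := fun h => hc0 (v.zero_iff.mp h)
      set β : Γ₀ˣ := Units.mk0 (v (c ij)) hvc with hβdef
      have hinvlt : v (c ij)⁻¹ < 1 := by
        rw [map_inv₀]
        exact (inv_lt_one₀ (zero_lt_iff.mpr hvc)).mpr hgt
      have hinvR : (c ij)⁻¹ ∈ v.integer := (v.mem_integer_iff _).mpr (le_of_lt hinvlt)
      have hle2 : v ((c ij)⁻¹) ≤ v (t : K) := hmax ⟨_, hinvR⟩ hinvlt
      have hβγ : β⁻¹ ≤ γ := by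
        rw [← Units.val_le_val]
        show (v (c ij))⁻¹ ≤ v (t : K)
        rw [← map_inv₀]
        exact hle2
      have hunits1 : β ^ p * γ ^ (ij.1 : ℕ) ≤ 1 := by
        rw [← Units.val_le_val]
        push_cast
        rw [v.map_mul, v.map_mul, v.map_pow, v.map_pow, hu1 ij.2, mul_one] at h1
        exact h1
      have hg1 : γ ^ (ij.1 : ℕ) ≤ β⁻¹ ^ p := by
        have h6 := mul_le_mul_right hunits1 (β⁻¹ ^ p)
        rw [mul_one] at h6
        calc γ ^ (ij.1 : ℕ) = β⁻¹ ^ p * (β ^ p * γ ^ (ij.1 : ℕ)) := by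
              rw [← mul_assoc, inv_pow, inv_mul_cancel, one_mul]
        _ ≤ β⁻¹ ^ p := h6
      have hg2 : β⁻¹ ^ p ≤ γ ^ p := pow_le_pow_left' hβγ p
      have hg3 : γ ^ p < γ ^ (ij.1 : ℕ) := by
        have hip : (ij.1 : ℕ) < p := ij.1.isLt
        have h5 : γ ^ p = γ ^ (ij.1 : ℕ) * γ ^ (p - (ij.1 : ℕ)) := by
          rw [← pow_add]
          congr 1
          omega
        rw [h5]
        calc γ ^ (ij.1 : ℕ) * γ ^ (p - (ij.1 : ℕ)) < γ ^ (ij.1 : ℕ) * 1 :=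
              mul_lt_mul_right (pow_lt_one' hγ_lt (by omega)) _
        _ = γ ^ (ij.1 : ℕ) := mul_one _
      exact absurd (le_trans hg1 hg2) (not_le.mpr hg3)
  have hxeq : x = ∑ ij : Fin p × Fin f,
      (⟨c ij, hcle ij⟩ : v.integer) ^ p * (t ^ (ij.1 : ℕ) * u ij.2) := by
    apply Subtype.ext
    push_cast
    rw [← heq]
    refine Finset.sum_congr rfl fun ij _ => ?_
    ring
  rw [hxeq]
  refine Submodule.sum_mem _ fun ij _ => ?_
  have hmem2 : t ^ (ij.1 : ℕ) * u ij.2 ∈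
      ((Finset.image (fun ij : Fin p × Fin f => t ^ (ij.1 : ℕ) * u ij.2) Finset.univ :
        Finset v.integer) : Set v.integer) := by
    simp only [Finset.coe_image, Set.mem_image, Finset.mem_coe]
    exact ⟨ij, by simp, rfl⟩
  have hsm := Submodule.smul_mem (Submodule.span (frobenius v.integer p).range
      ((Finset.image (fun ij : Fin p × Fin f => t ^ (ij.1 : ℕ) * u ij.2) Finset.univ :
        Finset v.integer) : Set v.integer))
      (⟨(⟨c ij, hcle ij⟩ : v.integer) ^ p,
        RingHom.mem_range.mpr ⟨⟨c ij, hcle ij⟩, frobenius_def p _⟩⟩ : (frobenius v.integer p).range)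
      (Submodule.subset_span hmem2)
  exact hsm
end
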